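/- arXiv:math/0703816 — 4 statements merged into one kernel-verified Lean document; each statement's English description precedes it below -/
import Mathlib

section
/- Let c > 0, T > 0, and let α be T-periodic, essentially bounded, with α(t) ≤ π²/T² + c²/4 a.e. (strict on a positive-measure set) and average (1/T)∫₀^T α dt > c²/4. Then the equation x'' + c x' + α(t) x = 0 admits no real Floquet multiplier; equivalently, the period-T monodromy matrix of the associated first-order system has no real eigenvalue. -/
open Real MeasureTheory Set intervalIntegral

private lemma gron_forward {a b K : ℝ} (hK : 0 ≤ K) {u : ℝ → ℝ} (hu : Continuous u)
    (hpos : ∀ t ∈ Icc a b, 0 ≤ u t)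
    (hineq : ∀ t ∈ Icc a b, u t ≤ K * ∫ r in a..t, u r) :
    ∀ t ∈ Icc a b, u t = 0 := by
  rcases le_or_gt a b with hab | hab
  · obtain ⟨B, hB⟩ : ∃ B, ∀ t ∈ Icc a b, u t ≤ B := by
      obtain ⟨C, hC⟩ := (isCompact_Icc (a := a) (b := b)).exists_bound_of_continuousOn
        hu.continuousOn
      exact ⟨C, fun t ht => (le_abs_self _).trans (hC t ht)⟩
    have key : ∀ n : ℕ, ∀ t ∈ Icc a b, u t ≤ B * ((K * (t - a)) ^ n / n.factorial) := by
      intro n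
      induction n with
      | zero => intro t ht; simpa using hB t ht
      | succ n ih =>
        intro t ht
        have h1 : u t ≤ K * ∫ r in a..t, u r := hineq t ht
        have hta : a ≤ t := ht.1
        have h2 : (∫ r in a..t, u r) ≤ ∫ r in a..t, B * ((K * (r - a)) ^ n / n.factorial) := by
          apply intervalIntegral.integral_mono_on hta
          · exact hu.intervalIntegrable _ _
          · exact (by continuity : Continuous fun r : ℝ => B * ((K * (r - a)) ^ n / n.factorial)).intervalIntegrable _ _
          · intro x hx; exact ih x ⟨hx.1, hx.2.trans ht.2⟩
        have h3 : (∫ r in a..t, B * ((K * (r - a)) ^ n / n.factorial))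
            = B * K ^ n / n.factorial * ((t - a) ^ (n + 1) / (n + 1)) := by
          have : ∀ r : ℝ, B * ((K * (r - a)) ^ n / n.factorial)
              = (B * K ^ n / n.factorial) * (r - a) ^ n := by
            intro r; rw [mul_pow]; ring
          simp only [this, intervalIntegral.integral_const_mul]
          have : (∫ r in a..t, (r - a) ^ n) = (t - a) ^ (n + 1) / (n + 1) := by
            rw [show (fun r : ℝ => (r - a) ^ n) = (fun r : ℝ => r ^ n) ∘ (fun r => r - a) from rfl]
            rw [show (∫ r in a..t, ((fun r : ℝ => r ^ n) ∘ (fun r => r - a)) r) = ∫ r in a..t, (r - a) ^ n from rfl]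
            rw [intervalIntegral.integral_comp_sub_right (fun x : ℝ => x ^ n) a, integral_pow]
            simp
          rw [this]
        calc u t ≤ K * ∫ r in a..t, u r := h1
          _ ≤ K * (B * K ^ n / n.factorial * ((t - a) ^ (n + 1) / (n + 1))) := by
              apply mul_le_mul_of_nonneg_left _ hK
              rw [← h3]; exact h2
          _ = B * ((K * (t - a)) ^ (n + 1) / (n + 1).factorial) := by
              have h0 : (n.factorial : ℝ) ≠ 0 := Nat.cast_ne_zero.2 n.factorial_ne_zero
              have h1 : ((n : ℝ) + 1) ≠ 0 := by positivity
              rw [Nat.factorial_succ, mul_pow]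
              push_cast
              field_simp
              ring
    intro t ht
    have hlim : Filter.Tendsto (fun n : ℕ => B * ((K * (t - a)) ^ n / n.factorial))
        Filter.atTop (nhds (B * 0)) := by
      exact (FloorSemiring.tendsto_pow_div_factorial_atTop (K * (t - a))).const_mul B
    rw [mul_zero] at hlim
    exact le_antisymm (ge_of_tendsto' hlim (fun n => key n t ht)) (hpos t ht)
  · intro t ht; exact absurd (ht.1.trans ht.2) (not_le.2 hab)

private lemma gron_backward {a b K : ℝ} (hK : 0 ≤ K) {u : ℝ → ℝ} (hu : Continuous u)
    (hpos : ∀ t ∈ Icc a b, 0 ≤ u t)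
    (hineq : ∀ t ∈ Icc a b, u t ≤ K * ∫ r in t..b, u r) :
    ∀ t ∈ Icc a b, u t = 0 := by
  rcases le_or_gt a b with hab | hab
  · obtain ⟨B, hB⟩ : ∃ B, ∀ t ∈ Icc a b, u t ≤ B := by
      obtain ⟨C, hC⟩ := (isCompact_Icc (a := a) (b := b)).exists_bound_of_continuousOn
        hu.continuousOn
      exact ⟨C, fun t ht => (le_abs_self _).trans (hC t ht)⟩
    have key : ∀ n : ℕ, ∀ t ∈ Icc a b, u t ≤ B * ((K * (b - t)) ^ n / n.factorial) := by
      intro n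
      induction n with
      | zero => intro t ht; simpa using hB t ht
      | succ n ih =>
        intro t ht
        have h1 : u t ≤ K * ∫ r in t..b, u r := hineq t ht
        have htb : t ≤ b := ht.2
        have h2 : (∫ r in t..b, u r) ≤ ∫ r in t..b, B * ((K * (b - r)) ^ n / n.factorial) := by
          apply intervalIntegral.integral_mono_on htb
          · exact hu.intervalIntegrable _ _
          · exact (by continuity : Continuous fun r : ℝ => B * ((K * (b - r)) ^ n / n.factorial)).intervalIntegrable _ _
          · intro x hx; exact ih x ⟨ht.1.trans hx.1, hx.2⟩
        have h3 : (∫ r in t..b, B * ((K * (b - r)) ^ n / n.factorial))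
            = B * K ^ n / n.factorial * ((b - t) ^ (n + 1) / (n + 1)) := by
          have : ∀ r : ℝ, B * ((K * (b - r)) ^ n / n.factorial)
              = (B * K ^ n / n.factorial) * (b - r) ^ n := by
            intro r; rw [mul_pow]; ring
          simp only [this, intervalIntegral.integral_const_mul]
          have : (∫ r in t..b, (b - r) ^ n) = (b - t) ^ (n + 1) / (n + 1) := by
            rw [intervalIntegral.integral_comp_sub_left (fun x : ℝ => x ^ n) b, integral_pow]
            simp
          rw [this]
        calc u t ≤ K * ∫ r in t..b, u r := h1
          _ ≤ K * (B * K ^ n / n.factorial * ((b - t) ^ (n + 1) / (n + 1))) := by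
              apply mul_le_mul_of_nonneg_left _ hK
              rw [← h3]; exact h2
          _ = B * ((K * (b - t)) ^ (n + 1) / (n + 1).factorial) := by
              have h0 : (n.factorial : ℝ) ≠ 0 := Nat.cast_ne_zero.2 n.factorial_ne_zero
              have h1 : ((n : ℝ) + 1) ≠ 0 := by positivity
              rw [Nat.factorial_succ, mul_pow]
              push_cast
              field_simp
              ring
    intro t ht
    have hlim : Filter.Tendsto (fun n : ℕ => B * ((K * (b - t)) ^ n / n.factorial))
        Filter.atTop (nhds (B * 0)) := by
      exact (FloorSemiring.tendsto_pow_div_factorial_atTop (K * (b - t))).const_mul B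
    rw [mul_zero] at hlim
    exact le_antisymm (ge_of_tendsto' hlim (fun n => key n t ht)) (hpos t ht)
  · intro t ht; exact absurd (ht.1.trans ht.2) (not_le.2 hab)

private def IsSol (α : ℝ → ℝ) (c : ℝ) (f g : ℝ → ℝ) : Prop :=
  Continuous f ∧ Continuous g ∧ (∀ s t : ℝ, f t - f s = ∫ r in s..t, g r) ∧
  (∀ s t : ℝ, g t - g s = ∫ r in s..t, (-α r * f r - c * g r))

private lemma alpha_mul_intInt {α : ℝ → ℝ} {C : ℝ} (hmeas : Measurable α)
    (hC : ∀ᵐ t ∂(volume : Measure ℝ), |α t| ≤ C) {u : ℝ → ℝ} (hu : Continuous u)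
    (s t : ℝ) : IntervalIntegrable (fun r => α r * u r) volume s t := by
  rw [intervalIntegrable_iff]
  apply MeasureTheory.Integrable.bdd_mul
      (f := α) (g := u) (c := C)
  · exact (hu.intervalIntegrable s t).def'
  · exact hmeas.aestronglyMeasurable.restrict
  · exact ae_restrict_of_ae (hC.mono fun x hx => by simpa using hx)

private lemma rhs_intInt {α : ℝ → ℝ} {C c : ℝ} (hmeas : Measurable α)
    (hC : ∀ᵐ t ∂(volume : Measure ℝ), |α t| ≤ C) {f g : ℝ → ℝ}
    (hf : Continuous f) (hg : Continuous g) (s t : ℝ) :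
    IntervalIntegrable (fun r => -α r * f r - c * g r) volume s t := by
  have h1 : IntervalIntegrable (fun r => α r * f r) volume s t :=
    alpha_mul_intInt hmeas hC hf s t
  have h2 : IntervalIntegrable (fun r => c * g r) volume s t :=
    (continuous_const.mul hg).intervalIntegrable s t
  have := h1.neg.sub h2
  simpa [neg_mul] using this

private lemma sol_unique {α : ℝ → ℝ} {c : ℝ} (hmeas : Measurable α)
    (hbdd : ∃ C : ℝ, ∀ᵐ t ∂(volume : Measure ℝ), |α t| ≤ C)
    {f g : ℝ → ℝ} (hsol : IsSol α c f g) {t₀ : ℝ} (hf0 : f t₀ = 0) (hg0 : g t₀ = 0) :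
    ∀ t : ℝ, f t = 0 ∧ g t = 0 := by
  obtain ⟨C₀, hC₀⟩ := hbdd
  set C := max C₀ 0 with hCdef
  have hC : ∀ᵐ t ∂(volume : Measure ℝ), |α t| ≤ C :=
    hC₀.mono fun x hx => hx.trans (le_max_left _ _)
  have hCnn : 0 ≤ C := le_max_right _ _
  obtain ⟨hf, hg, heq1, heq2⟩ := hsol
  set K : ℝ := 1 + (C + |c|) with hK
  have hKnn : 0 ≤ K := by positivity
  set u : ℝ → ℝ := fun t => |f t| + |g t| with hu_def
  have hu : Continuous u := hf.abs.add hg.abs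
  have hupos : ∀ t, 0 ≤ u t := fun t => add_nonneg (abs_nonneg _) (abs_nonneg _)
  -- a.e. bound on the rhs integrand
  have hrhs_bd : ∀ᵐ r ∂(volume : Measure ℝ),
      |(-α r * f r - c * g r)| ≤ (C + |c|) * u r := by
    refine hC.mono fun r hr => ?_
    have : |(-α r * f r - c * g r)| ≤ |α r| * |f r| + |c| * |g r| := by
      calc |(-α r * f r - c * g r)| ≤ |(-α r * f r)| + |c * g r| := abs_sub _ _
        _ = |α r| * |f r| + |c| * |g r| := by rw [abs_mul, abs_mul, abs_neg]
    refine this.trans ?_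
    have h1 : |α r| * |f r| ≤ C * |f r| := mul_le_mul_of_nonneg_right hr (abs_nonneg _)
    have h2 : 0 ≤ C * |g r| := mul_nonneg hCnn (abs_nonneg _)
    have h3 : 0 ≤ |c| * |f r| := mul_nonneg (abs_nonneg _) (abs_nonneg _)
    show |α r| * |f r| + |c| * |g r| ≤ (C + |c|) * (|f r| + |g r|)
    nlinarith [h1, h2, h3]
  have key : ∀ t, u t = 0 := by
    intro t
    rcases le_total t₀ t with h | h
    · -- forward on [t₀, t]
      have := gron_forward (a := t₀) (b := t) hKnn hu (fun s _ => hupos s) ?_ t ⟨h, le_refl t⟩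
      · exact this
      intro s hs
      have hs1 : t₀ ≤ s := hs.1
      have e1 : |f s| ≤ ∫ r in t₀..s, u r := by
        have : f s = ∫ r in t₀..s, g r := by have := heq1 t₀ s; rw [hf0] at this; linarith
        rw [this]
        refine (intervalIntegral.abs_integral_le_integral_abs hs1).trans ?_
        apply intervalIntegral.integral_mono_on hs1 (hg.abs.intervalIntegrable _ _)
          (hu.intervalIntegrable _ _)
        intro x _; exact le_add_of_nonneg_left (abs_nonneg _)
      have e2 : |g s| ≤ (C + |c|) * ∫ r in t₀..s, u r := by
        have : g s = ∫ r in t₀..s, (-α r * f r - c * g r) := by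
          have := heq2 t₀ s; rw [hg0] at this; linarith
        rw [this]
        refine (intervalIntegral.abs_integral_le_integral_abs hs1).trans ?_
        rw [show (C + |c|) * ∫ r in t₀..s, u r = ∫ r in t₀..s, (C + |c|) * u r by
          rw [intervalIntegral.integral_const_mul]]
        apply intervalIntegral.integral_mono_ae hs1
          ((rhs_intInt hmeas hC hf hg t₀ s).abs)
          ((continuous_const.mul hu).intervalIntegrable _ _)
        exact hrhs_bd
      calc u s = |f s| + |g s| := rfl
        _ ≤ (∫ r in t₀..s, u r) + (C + |c|) * ∫ r in t₀..s, u r := add_le_add e1 e2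
        _ = K * ∫ r in t₀..s, u r := by rw [hK]; ring
    · -- backward on [t, t₀]
      have := gron_backward (a := t) (b := t₀) hKnn hu (fun s _ => hupos s) ?_ t ⟨le_refl t, h⟩
      · exact this
      intro s hs
      have hs1 : s ≤ t₀ := hs.2
      have e1 : |f s| ≤ ∫ r in s..t₀, u r := by
        have : f s = -∫ r in s..t₀, g r := by have := heq1 s t₀; rw [hf0] at this; linarith
        rw [this, abs_neg]
        refine (intervalIntegral.abs_integral_le_integral_abs hs1).trans ?_
        apply intervalIntegral.integral_mono_on hs1 (hg.abs.intervalIntegrable _ _)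
          (hu.intervalIntegrable _ _)
        intro x _; exact le_add_of_nonneg_left (abs_nonneg _)
      have e2 : |g s| ≤ (C + |c|) * ∫ r in s..t₀, u r := by
        have : g s = -∫ r in s..t₀, (-α r * f r - c * g r) := by
          have := heq2 s t₀; rw [hg0] at this; linarith
        rw [this, abs_neg]
        refine (intervalIntegral.abs_integral_le_integral_abs hs1).trans ?_
        rw [show (C + |c|) * ∫ r in s..t₀, u r = ∫ r in s..t₀, (C + |c|) * u r by
          rw [intervalIntegral.integral_const_mul]]
        apply intervalIntegral.integral_mono_ae hs1
          ((rhs_intInt hmeas hC hf hg s t₀).abs)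
          ((continuous_const.mul hu).intervalIntegrable _ _)
        exact hrhs_bd
      calc u s = |f s| + |g s| := rfl
        _ ≤ (∫ r in s..t₀, u r) + (C + |c|) * ∫ r in s..t₀, u r := add_le_add e1 e2
        _ = K * ∫ r in s..t₀, u r := by rw [hK]; ring
  intro t
  have h := key t
  constructor
  · have : |f t| = 0 := by
      have := hupos t
      have h2 : |f t| ≤ 0 := by
        have := abs_nonneg (g t); simp only [hu_def] at h; linarith
      exact le_antisymm h2 (abs_nonneg _)
    exact abs_eq_zero.1 this
  · have : |g t| = 0 := by
      have h2 : |g t| ≤ 0 := by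
        have := abs_nonneg (f t); simp only [hu_def] at h; linarith
      exact le_antisymm h2 (abs_nonneg _)
    exact abs_eq_zero.1 this

private lemma local_to_global {g : ℝ → ℝ}
    (hloc : ∀ x : ℝ, ∃ s t : ℝ, s < x ∧ x < t ∧ IntervalIntegrable g volume s t) :
    ∀ u v : ℝ, IntervalIntegrable g volume u v := by
  have main : ∀ a : ℝ, {x : ℝ | IntervalIntegrable g volume a x} = univ := by
    intro a
    apply IsClopen.eq_univ
    swap
    · exact ⟨a, by simp [Set.mem_setOf_eq]⟩
    constructor
    · rw [← isOpen_compl_iff, isOpen_iff_mem_nhds]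
      intro x hx
      obtain ⟨s, t, hs, ht, hint⟩ := hloc x
      have hsub : Ioo s t ⊆ {x : ℝ | IntervalIntegrable g volume a x}ᶜ := by
        intro y hy hyS
        apply hx
        have h1 : IntervalIntegrable g volume y x :=
          hint.mono_set (Set.uIcc_subset_uIcc
            (Set.mem_uIcc.2 (Or.inl ⟨hy.1.le, hy.2.le⟩))
            (Set.mem_uIcc.2 (Or.inl ⟨hs.le, ht.le⟩)))
        exact (hyS : IntervalIntegrable g volume a y).trans h1
      exact Filter.mem_of_superset (Ioo_mem_nhds hs ht) hsub
    · rw [isOpen_iff_mem_nhds]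
      intro x hx
      obtain ⟨s, t, hs, ht, hint⟩ := hloc x
      have hsub : Ioo s t ⊆ {x : ℝ | IntervalIntegrable g volume a x} := by
        intro y hy
        have h1 : IntervalIntegrable g volume x y :=
          hint.mono_set (Set.uIcc_subset_uIcc
            (Set.mem_uIcc.2 (Or.inl ⟨hs.le, ht.le⟩))
            (Set.mem_uIcc.2 (Or.inl ⟨hy.1.le, hy.2.le⟩)))
        exact (hx : IntervalIntegrable g volume a x).trans h1
      exact Filter.mem_of_superset (Ioo_mem_nhds hs ht) hsub
  intro u v
  have hv : v ∈ {x : ℝ | IntervalIntegrable g volume u x} := by rw [main u]; trivial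
  exact hv

private lemma bootstrap {α : ℝ → ℝ} {c C : ℝ} (hc : 0 < c) (hmeas : Measurable α)
    (hC : ∀ᵐ t ∂(volume : Measure ℝ), |α t| ≤ C) {f g : ℝ → ℝ}
    (heq1 : ∀ s t : ℝ, f t - f s = ∫ r in s..t, g r)
    (heq2 : ∀ s t : ℝ, g t - g s = ∫ r in s..t, (-α r * f r - c * g r)) :
    IsSol α c f g := by
  -- Step 1: local integrability of g at every point
  have hloc : ∀ x : ℝ, ∃ s t : ℝ, s < x ∧ x < t ∧ IntervalIntegrable g volume s t := by
    intro a
    by_contra hcon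
    push_neg at hcon
    have hnot : ∀ s t : ℝ, s < a → a < t → ¬ IntervalIntegrable g volume s t := by
      intro s t hs ht hint; exact (hcon s t hs ht) hint
    -- f is constant off a
    have hf_eq : ∀ s t : ℝ, s < a → a < t → f t = f s := by
      intro s t hs ht
      have := heq1 s t
      rw [intervalIntegral.integral_undef (hnot s t hs ht)] at this
      linarith
    set m : ℝ := f (a - 1) with hm
    have hfm : ∀ x : ℝ, x ≠ a → f x = m := by
      intro x hx
      rcases lt_or_gt_of_ne hx with h | h
      · exact (hf_eq x (a+1) h (by linarith)).symm.trans
          ((hf_eq (a-1) (a+1) (by linarith) (by linarith)).trans hm.symm.symm)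
      · exact (hf_eq (a-1) x (by linarith) h).trans hm.symm.symm
    have hae_ne : ∀ᵐ x ∂(volume : Measure ℝ), x ≠ a := by
      rw [ae_iff]
      have : {x : ℝ | ¬ x ≠ a} = {a} := by ext x; simp
      rw [this]; exact measure_singleton a
    have hfae : f =ᵐ[volume] fun _ => m := hae_ne.mono fun x hx => hfm x hx
    -- g is constant off a
    have hg_eq : ∀ s t : ℝ, s < a → a < t → g t = g s := by
      intro s t hs ht
      have h2 := heq2 s t
      have hnint : ¬ IntervalIntegrable (fun r => -α r * f r - c * g r) volume s t := by
        intro hint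
        apply hnot s t hs ht
        have haf : IntervalIntegrable (fun r => α r * f r) volume s t := by
          have hconst : IntervalIntegrable (fun r => α r * m) volume s t :=
            alpha_mul_intInt hmeas hC continuous_const s t
          rw [intervalIntegrable_iff] at hconst ⊢
          apply hconst.congr
          exact ae_restrict_of_ae (hfae.mono fun x hx => by
            show α x * m = α x * f x
            rw [show f x = m from hx])
        have : IntervalIntegrable (fun r => c * g r) volume s t := by
          have h0 : IntervalIntegrable (fun r => -(α r * f r) - (-α r * f r - c * g r)) volume s t :=
            haf.neg.sub hint
          have h3 : (fun r => -(α r * f r) - (-α r * f r - c * g r)) = fun r => c * g r := by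
            funext r; ring
          rwa [h3] at h0
        have h4 := this.const_mul c⁻¹
        have h5 : (fun r => c⁻¹ * (c * g r)) = g := by
          funext r; field_simp
        rwa [h5] at h4
      rw [intervalIntegral.integral_undef hnint] at h2
      linarith
    set k : ℝ := g (a - 1) with hk
    have hgk : ∀ x : ℝ, x ≠ a → g x = k := by
      intro x hx
      rcases lt_or_gt_of_ne hx with h | h
      · exact (hg_eq x (a+1) h (by linarith)).symm.trans
          ((hg_eq (a-1) (a+1) (by linarith) (by linarith)).trans hk.symm.symm)
      · exact (hg_eq (a-1) x (by linarith) h).trans hk.symm.symm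
    have hgae : g =ᵐ[volume] fun _ => k := hae_ne.mono fun x hx => hgk x hx
    apply hnot (a-1) (a+1) (by linarith) (by linarith)
    have hconst : IntervalIntegrable (fun _ : ℝ => k) volume (a-1) (a+1) :=
      intervalIntegrable_const
    rw [intervalIntegrable_iff] at hconst ⊢
    exact hconst.congr (ae_restrict_of_ae (hgae.symm.mono fun x hx => hx))
  -- Step 2: global integrability of g
  have hgint : ∀ u v : ℝ, IntervalIntegrable g volume u v := local_to_global hloc
  -- Step 3: f continuous
  have hf : Continuous f := by
    have : f = fun t => f 0 + ∫ r in (0:ℝ)..t, g r := by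
      funext t; have := heq1 0 t; linarith
    rw [this]
    exact continuous_const.add (intervalIntegral.continuous_primitive hgint 0)
  -- Step 4: rhs integrable, g continuous
  have hrhs : ∀ u v : ℝ, IntervalIntegrable (fun r => -α r * f r - c * g r) volume u v := by
    intro u v
    have h1 := (alpha_mul_intInt hmeas hC hf u v).neg
    have h2 := (hgint u v).const_mul c
    have := h1.sub h2
    simpa [neg_mul] using this
  have hg : Continuous g := by
    have : g = fun t => g 0 + ∫ r in (0:ℝ)..t, (-α r * f r - c * g r) := by
      funext t; have := heq2 0 t; linarith
    rw [this]
    exact continuous_const.add (intervalIntegral.continuous_primitive hrhs 0)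
  exact ⟨hf, hg, heq1, heq2⟩

private lemma cont_mul_intInt {g : ℝ → ℝ} {u v : ℝ}
    (hg : IntervalIntegrable g volume u v) {φ : ℝ → ℝ} (hφ : Continuous φ) :
    IntervalIntegrable (fun r => φ r * g r) volume u v := by
  obtain ⟨Cb, hCb⟩ := (isCompact_uIcc (a := u) (b := v)).exists_bound_of_continuousOn
    hφ.continuousOn
  rw [intervalIntegrable_iff] at hg ⊢
  apply hg.bdd_mul (c := Cb) hφ.aestronglyMeasurable.restrict
  refine ae_restrict_of_forall_mem measurableSet_uIoc fun x hx => ?_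
  exact hCb x (uIoc_subset_uIcc hx)

private lemma fubini_step {g φ' : ℝ → ℝ} (hgint : ∀ u v : ℝ, IntervalIntegrable g volume u v)
    (hφ' : Continuous φ') {φ : ℝ → ℝ} (hφ : ∀ x : ℝ, HasDerivAt φ (φ' x) x)
    {a t : ℝ} (hat : a ≤ t) :
    ∫ r in a..t, (∫ q in a..r, g q) * φ' r = ∫ q in a..t, g q * (φ t - φ q) := by
  set I : Set ℝ := Ioc a t with hI
  set μ : Measure ℝ := volume.restrict I with hμ
  set F : ℝ → ℝ → ℝ := fun r q => (Ioc a r).indicator g q * φ' r with hF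
  have hImeas : MeasurableSet I := measurableSet_Ioc
  have hginteg : Integrable g μ := by
    have := hgint a t
    rw [intervalIntegrable_iff, uIoc_of_le hat] at this
    exact this
  have hφ'integ : Integrable φ' μ := by
    have := hφ'.intervalIntegrable (μ := volume) a t
    rw [intervalIntegrable_iff, uIoc_of_le hat] at this
    exact this
  -- integrability of the uncurried function
  have hGmeas : MeasurableSet {p : ℝ × ℝ | p.2 ≤ p.1} :=
    measurableSet_le measurable_snd measurable_fst
  have hprod : Integrable (fun p : ℝ × ℝ => φ' p.1 * g p.2) (μ.prod μ) :=
    hφ'integ.mul_prod hginteg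
  have hG : Integrable ({p : ℝ × ℝ | p.2 ≤ p.1}.indicator (fun p => φ' p.1 * g p.2)) (μ.prod μ) :=
    hprod.indicator hGmeas
  have haeI : ∀ᵐ p : ℝ × ℝ ∂(μ.prod μ), p.1 ∈ I ∧ p.2 ∈ I := by
    rw [hμ, Measure.prod_restrict]
    refine (ae_restrict_of_forall_mem (hImeas.prod hImeas) fun p hp => ?_)
    exact ⟨hp.1, hp.2⟩
  have hFG : (Function.uncurry F) =ᵐ[μ.prod μ]
      ({p : ℝ × ℝ | p.2 ≤ p.1}.indicator (fun p => φ' p.1 * g p.2)) := by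
    refine haeI.mono fun p hp => ?_
    rcases p with ⟨r, q⟩
    simp only [Function.uncurry, hF]
    by_cases h : q ≤ r
    · have hq : q ∈ Ioc a r := ⟨hp.2.1, h⟩
      rw [Set.indicator_of_mem hq, Set.indicator_of_mem (by exact h : (r, q) ∈ {p : ℝ × ℝ | p.2 ≤ p.1})]
      ring
    · have hq : q ∉ Ioc a r := fun hmem => h hmem.2
      rw [Set.indicator_of_notMem hq, Set.indicator_of_notMem (by exact h : (r, q) ∉ {p : ℝ × ℝ | p.2 ≤ p.1})]
      simp
  have hFint : Integrable (Function.uncurry F) (μ.prod μ) := hG.congr hFG.symm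
  have hswap : ∫ r, (∫ q, F r q ∂μ) ∂μ = ∫ q, (∫ r, F r q ∂μ) ∂μ :=
    MeasureTheory.integral_integral_swap hFint
  -- identify LHS
  have hL : ∫ r in a..t, (∫ q in a..r, g q) * φ' r = ∫ r, (∫ q, F r q ∂μ) ∂μ := by
    rw [intervalIntegral.integral_of_le hat]
    apply setIntegral_congr_ae hImeas
    refine Filter.Eventually.of_forall fun r hr => ?_
    have hinner : ∫ q, F r q ∂μ = (∫ q, (Ioc a r).indicator g q ∂μ) * φ' r := by
      rw [hF]; exact integral_mul_const _ _
    rw [hinner]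
    congr 1
    rw [hμ, MeasureTheory.integral_indicator measurableSet_Ioc, Measure.restrict_restrict measurableSet_Ioc]
    have : Ioc a r ∩ I = Ioc a r := by
      apply inter_eq_self_of_subset_left
      exact Ioc_subset_Ioc le_rfl hr.2
    rw [this, ← intervalIntegral.integral_of_le hr.1.le]
  -- identify RHS
  have hR : ∫ q, (∫ r, F r q ∂μ) ∂μ = ∫ q in a..t, g q * (φ t - φ q) := by
    rw [intervalIntegral.integral_of_le hat]
    apply setIntegral_congr_ae hImeas
    refine Filter.Eventually.of_forall fun q hq => ?_
    have h1 : ∀ r : ℝ, F r q = (Ici q).indicator (fun r' => g q * φ' r') r := by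
      intro r
      simp only [hF, Set.indicator_apply, Set.mem_Ioc, Set.mem_Ici]
      by_cases h : q ≤ r
      · simp [h, hq.1]
      · simp [h]
    have h2 : ∫ r, F r q ∂μ = ∫ r in Ici q ∩ I, g q * φ' r ∂volume := by
      simp only [h1]
      rw [hμ, MeasureTheory.integral_indicator measurableSet_Ici, Measure.restrict_restrict measurableSet_Ici]
    have h3 : Ici q ∩ I = Icc q t := by
      ext x
      simp only [hI, mem_inter_iff, mem_Ici, mem_Ioc, mem_Icc]
      constructor
      · rintro ⟨h4, h5, h6⟩; exact ⟨h4, h6⟩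
      · rintro ⟨h4, h5⟩; exact ⟨h4, hq.1.trans_le h4, h5⟩
    have h4 : ∫ r in Ici q ∩ I, g q * φ' r ∂volume = g q * ∫ r in Icc q t, φ' r ∂volume := by
      rw [h3, MeasureTheory.integral_const_mul]
    have h5 : ∫ r in Icc q t, φ' r ∂volume = φ t - φ q := by
      rw [MeasureTheory.integral_Icc_eq_integral_Ioc, ← intervalIntegral.integral_of_le hq.2]
      exact intervalIntegral.integral_eq_sub_of_hasDerivAt
        (fun x _ => hφ x) (hφ'.intervalIntegrable (μ := volume) q t)
    rw [h2, h4, h5]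
  rw [hL, hswap, hR]

private lemma prod_rule {g : ℝ → ℝ} (hgint : ∀ u v : ℝ, IntervalIntegrable g volume u v)
    {f : ℝ → ℝ} (hf : Continuous f) (heq : ∀ s t : ℝ, f t - f s = ∫ r in s..t, g r)
    {φ φ' : ℝ → ℝ} (hφ : ∀ x : ℝ, HasDerivAt φ (φ' x) x) (hφ' : Continuous φ')
    {a t : ℝ} (hat : a ≤ t) :
    f t * φ t - f a * φ a = ∫ r in a..t, (g r * φ r + f r * φ' r) := by
  have hφc : Continuous φ := by
    have : Differentiable ℝ φ := fun x => (hφ x).differentiableAt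
    exact this.continuous
  have hgφ : IntervalIntegrable (fun r => g r * φ r) volume a t := by
    have := cont_mul_intInt (hgint a t) hφc
    have h : (fun r => φ r * g r) = fun r => g r * φ r := by funext r; ring
    rwa [h] at this
  have hfφ' : IntervalIntegrable (fun r => f r * φ' r) volume a t :=
    (hf.mul hφ').intervalIntegrable a t
  rw [intervalIntegral.integral_add hgφ hfφ']
  -- decompose f r = f a + ∫ q in a..r, g q
  have hfr : ∀ r : ℝ, f r = f a + ∫ q in a..r, g q := by
    intro r; have := heq a r; linarith
  have hsplit : ∫ r in a..t, f r * φ' r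
      = (∫ r in a..t, f a * φ' r) + ∫ r in a..t, (∫ q in a..r, g q) * φ' r := by
    rw [← intervalIntegral.integral_add (f := fun r => f a * φ' r)
      (g := fun r => (∫ q in a..r, g q) * φ' r)
      ((continuous_const.mul hφ').intervalIntegrable a t)
      (((intervalIntegral.continuous_primitive hgint a).mul hφ').intervalIntegrable a t)]
    apply intervalIntegral.integral_congr
    intro r _
    show f r * φ' r = f a * φ' r + (∫ q in a..r, g q) * φ' r
    rw [hfr r]; ring
  have hconst : ∫ r in a..t, f a * φ' r = f a * (φ t - φ a) := by
    rw [intervalIntegral.integral_const_mul]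
    congr 1
    exact intervalIntegral.integral_eq_sub_of_hasDerivAt (fun x _ => hφ x)
      (hφ'.intervalIntegrable (μ := volume) a t)
  have hfub := fubini_step hgint hφ' hφ hat
  have hrest : ∫ q in a..t, g q * (φ t - φ q)
      = φ t * (f t - f a) - ∫ r in a..t, g r * φ r := by
    have h1 : ∀ q : ℝ, g q * (φ t - φ q) = φ t * g q - g q * φ q := by intro q; ring
    rw [intervalIntegral.integral_congr (fun q _ => h1 q),
      intervalIntegral.integral_sub ((hgint a t).const_mul (φ t)) hgφ,
      intervalIntegral.integral_const_mul]
    congr 2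
    exact (heq a t).symm
  rw [hsplit, hconst, hfub, hrest]
  ring

private lemma alpha_intInt {α : ℝ → ℝ} {C : ℝ} (hmeas : Measurable α)
    (hC : ∀ᵐ t ∂(volume : Measure ℝ), |α t| ≤ C) (s t : ℝ) :
    IntervalIntegrable α volume s t := by
  have := alpha_mul_intInt hmeas hC continuous_const (u := fun _ => (1:ℝ)) s t
  simpa using this

private lemma sol_hasDerivAt {α : ℝ → ℝ} {c : ℝ} {f g : ℝ → ℝ} (hsol : IsSol α c f g) :
    ∀ x : ℝ, HasDerivAt f (g x) x := by
  obtain ⟨hf, hg, heq1, heq2⟩ := hsol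
  intro x
  have hrepr : f = fun t => f 0 + ∫ r in (0:ℝ)..t, g r := by
    funext t; have := heq1 0 t; linarith
  have hd : HasDerivAt (fun t => ∫ r in (0:ℝ)..t, g r) (g x) x := by
    apply intervalIntegral.integral_hasDerivAt_right (hg.intervalIntegrable 0 x)
    · exact hg.stronglyMeasurableAtFilter volume (nhds x)
    · exact hg.continuousAt
  rw [hrepr]
  simpa using hd.const_add (f 0)

private lemma caseA {α : ℝ → ℝ} {c T ρ : ℝ} {C : ℝ} (hc : 0 < c) (hT : 0 < T)
    (hmeas : Measurable α) (hC : ∀ᵐ t ∂(volume : Measure ℝ), |α t| ≤ C)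
    (havg : c ^ 2 / 4 < (1 / T) * ∫ t in (0 : ℝ)..T, α t)
    {f g : ℝ → ℝ} (hsol : IsSol α c f g) (hρ : ρ ≠ 0)
    (hfT : f T = ρ * f 0) (hgT : g T = ρ * g 0) (hnz : ∀ t, f t ≠ 0) : False := by
  obtain ⟨hf, hg, heq1, heq2⟩ := hsol
  have hfd : ∀ x : ℝ, HasDerivAt f (g x) x := sol_hasDerivAt ⟨hf, hg, heq1, heq2⟩
  set φ : ℝ → ℝ := fun t => (f t)⁻¹ with hφdef
  set φ' : ℝ → ℝ := fun t => -g t / f t ^ 2 with hφ'def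
  have hd : ∀ x : ℝ, HasDerivAt φ (φ' x) x := fun x => (hfd x).inv (hnz x)
  have hφ'c : Continuous φ' :=
    (hg.neg).div (hf.pow 2) fun t => pow_ne_zero _ (hnz t)
  have hint : ∀ u v : ℝ, IntervalIntegrable (fun r => -α r * f r - c * g r) volume u v :=
    fun u v => rhs_intInt hmeas hC hf hg u v
  have key := prod_rule hint hg heq2 hd hφ'c (le_of_lt hT)
  have hL0 : g T * φ T - g 0 * φ 0 = 0 := by
    simp only [hφdef]
    rw [hfT, hgT, mul_inv]
    rw [show ρ * g 0 * (ρ⁻¹ * (f 0)⁻¹) = (ρ * ρ⁻¹) * (g 0 * (f 0)⁻¹) by ring,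
      mul_inv_cancel₀ hρ]
    ring
  set u : ℝ → ℝ := fun r => g r / f r with hu
  have hpt : ∀ r ∈ uIcc (0:ℝ) T, ((fun r => -α r * f r - c * g r) r * φ r + g r * φ' r)
      = -α r - (c * u r + u r ^ 2) := by
    intro r _
    simp only [hφdef, hφ'def, hu]
    field_simp [hnz r]
    ring
  have hαint := alpha_intInt hmeas hC 0 T
  have huc : Continuous fun r => c * u r + u r ^ 2 := by
    have : Continuous u := hg.div hf hnz
    continuity
  have h0 : (0:ℝ) = ∫ r in (0:ℝ)..T, (-α r - (c * u r + u r ^ 2)) := by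
    rw [← intervalIntegral.integral_congr hpt, ← key, hL0]
  have hneg : IntervalIntegrable (fun r => -α r) volume 0 T := hαint.neg
  rw [intervalIntegral.integral_sub hneg (huc.intervalIntegrable 0 T),
    intervalIntegral.integral_neg] at h0
  have hsum : ∫ r in (0:ℝ)..T, α r = ∫ r in (0:ℝ)..T, -(c * u r + u r ^ 2) := by
    rw [intervalIntegral.integral_neg]; linarith
  have hbound : ∫ r in (0:ℝ)..T, -(c * u r + u r ^ 2) ≤ ∫ r in (0:ℝ)..T, (c^2/4 : ℝ) := by
    apply intervalIntegral.integral_mono_on (le_of_lt hT)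
      (huc.neg.intervalIntegrable 0 T) (intervalIntegrable_const)
    intro x _
    show -(c * u x + u x ^ 2) ≤ c ^ 2 / 4
    nlinarith [sq_nonneg (u x + c / 2)]
  rw [intervalIntegral.integral_const, smul_eq_mul, sub_zero] at hbound
  have hfin : (1/T) * ∫ r in (0:ℝ)..T, α r ≤ c^2/4 := by
    rw [hsum]
    calc (1/T) * ∫ r in (0:ℝ)..T, -(c * u r + u r ^ 2)
        ≤ (1/T) * (T * (c^2/4)) := by
          apply mul_le_mul_of_nonneg_left hbound
          positivity
      _ = c^2/4 := by field_simp
  linarith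

private lemma periodic_set_pos {α : ℝ → ℝ} {T K₀ : ℝ} (hT : 0 < T)
    (hmeas : Measurable α) (hper : Function.Periodic α T)
    (hpos : 0 < volume {t ∈ Icc (0 : ℝ) T | α t < K₀}) (a : ℝ) :
    0 < volume ({t | α t < K₀} ∩ Ioo a (a + T)) := by
  set S : Set ℝ := {t | α t < K₀} with hS
  have hSmeas : MeasurableSet S := measurableSet_lt hmeas measurable_const
  set χ : ℝ → ℝ := S.indicator 1 with hχ
  have hχper : Function.Periodic χ T := by
    intro x
    by_cases h : x ∈ S
    · have h2 : x + T ∈ S := by simp only [hS, mem_setOf_eq] at h ⊢; rw [hper x]; exact h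
      rw [hχ, Set.indicator_of_mem h, Set.indicator_of_mem h2]
      rfl
    · have h2 : x + T ∉ S := by
        simp only [hS, mem_setOf_eq] at h ⊢; rw [hper x]; exact h
      rw [hχ, Set.indicator_of_notMem h, Set.indicator_of_notMem h2]
  have hint : ∀ u v : ℝ, ∫ x in u..v, χ x = (volume (S ∩ Ioc u v)).toReal ∨ True := fun _ _ => Or.inr trivial
  have key : ∀ u : ℝ, ∫ x in u..(u+T), χ x = (volume (S ∩ Ioc u (u+T))).toReal := by
    intro u
    rw [intervalIntegral.integral_of_le (by linarith : u ≤ u + T)]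
    rw [hχ, MeasureTheory.integral_indicator_one hSmeas, measureReal_def, Measure.restrict_apply hSmeas]
  have hper_int : ∫ x in a..(a+T), χ x = ∫ x in (0:ℝ)..(0+T), χ x :=
    hχper.intervalIntegral_add_eq a 0
  -- positive measure on the fundamental interval
  have h1 : 0 < volume (S ∩ Ioc 0 T) := by
    have hsub : Icc (0:ℝ) T ∩ S ⊆ (S ∩ Ioc 0 T) ∪ {0} := by
      intro x hx
      rcases eq_or_ne x 0 with h | h
      · right; simp [h]
      · left
        refine ⟨hx.2, ?_, hx.1.2⟩
        cases' (lt_or_eq_of_le hx.1.1) with h2 h2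
        · exact h2
        · exact absurd h2.symm h
    have h2 : volume ({t ∈ Icc (0:ℝ) T | α t < K₀}) = volume (Icc (0:ℝ) T ∩ S) := rfl
    rw [h2] at hpos
    have h3 := (measure_mono hsub).trans (measure_union_le (μ := volume) (S ∩ Ioc 0 T) {0})
    simp only [measure_singleton, add_zero] at h3
    exact lt_of_lt_of_le hpos h3
  have hfin : volume (S ∩ Ioc 0 T) ≠ ⊤ :=
    ne_top_of_le_ne_top (by simp) (measure_mono inter_subset_right)
  have h1' : 0 < (volume (S ∩ Ioc 0 T)).toReal := ENNReal.toReal_pos h1.ne' hfin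
  have h2 : 0 < (volume (S ∩ Ioc a (a+T))).toReal := by
    rw [← key a, hper_int, key 0, zero_add]
    exact h1'
  have h3 : 0 < volume (S ∩ Ioc a (a+T)) := by
    by_contra h
    push_neg at h
    have : volume (S ∩ Ioc a (a+T)) = 0 := le_antisymm h (by simp)
    rw [this] at h2; simp at h2
  -- pass from Ioc to Ioo
  have hsub2 : S ∩ Ioc a (a+T) ⊆ (S ∩ Ioo a (a+T)) ∪ {a+T} := by
    intro x hx
    rcases eq_or_ne x (a+T) with h | h
    · right; simp [h]
    · left; exact ⟨hx.1, hx.2.1, lt_of_le_of_ne hx.2.2 h⟩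
  have h4 := (measure_mono hsub2).trans (measure_union_le (μ := volume) (S ∩ Ioo a (a+T)) {a+T})
  simp only [measure_singleton, add_zero] at h4
  exact lt_of_lt_of_le h3 h4

private lemma intInt_mul_cont {g : ℝ → ℝ} {u v : ℝ}
    (hg : IntervalIntegrable g volume u v) {φ : ℝ → ℝ} (hφ : Continuous φ) :
    IntervalIntegrable (fun r => g r * φ r) volume u v := by
  have := cont_mul_intInt hg hφ
  have h : (fun r => φ r * g r) = fun r => g r * φ r := by funext r; ring
  rwa [h] at this

private lemma caseB {α : ℝ → ℝ} {c T C : ℝ} (hc : 0 < c) (hT : 0 < T)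
    (hmeas : Measurable α) (hC : ∀ᵐ t ∂(volume : Measure ℝ), |α t| ≤ C)
    (hper : Function.Periodic α T)
    (hub : ∀ᵐ t ∂(volume : Measure ℝ), α t ≤ π ^ 2 / T ^ 2 + c ^ 2 / 4)
    (hstrict : 0 < volume {t ∈ Icc (0 : ℝ) T | α t < π ^ 2 / T ^ 2 + c ^ 2 / 4})
    {f g : ℝ → ℝ} (hsol : IsSol α c f g) {t₀ : ℝ}
    (hf0 : f t₀ = 0) (hg0 : g t₀ ≠ 0) (hfT : f (t₀ + T) = 0) : False := by
  obtain ⟨hf, hg, heq1, heq2⟩ := hsol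
  have hfd : ∀ x : ℝ, HasDerivAt f (g x) x := sol_hasDerivAt ⟨hf, hg, heq1, heq2⟩
  set E : ℝ → ℝ := fun t => exp (c / 2 * (t - t₀)) with hE
  have hEc : Continuous E := by
    apply Real.continuous_exp.comp
    continuity
  have hEd : ∀ x : ℝ, HasDerivAt E (c / 2 * E x) x := by
    intro x
    have h1 : HasDerivAt (fun t : ℝ => c / 2 * (t - t₀)) (c / 2) x := by
      simpa using ((hasDerivAt_id x).sub_const t₀).const_mul (c / 2)
    have h2 := h1.exp
    simpa [hE, mul_comm] using h2
  set z : ℝ → ℝ := fun t => E t * f t with hz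
  set w : ℝ → ℝ := fun t => E t * g t + c / 2 * z t with hw
  have hzc : Continuous z := hEc.mul hf
  have hwc : Continuous w := (hEc.mul hg).add (continuous_const.mul hzc)
  have hzd : ∀ x : ℝ, HasDerivAt z (w x) x := by
    intro x
    have h1 := (hEd x).mul (hfd x)
    have h2 : c / 2 * E x * f x + E x * g x = w x := by simp only [hw, hz]; ring
    rw [← h2]; exact h1
  set q : ℝ → ℝ := fun r => -(α r - c ^ 2 / 4) * z r with hq
  have hqint : ∀ u v : ℝ, IntervalIntegrable q volume u v := by
    intro u v
    have h1 : IntervalIntegrable (fun r => α r * z r) volume u v :=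
      alpha_mul_intInt hmeas hC hzc u v
    have h2 : IntervalIntegrable (fun r => (c ^ 2 / 4) * z r) volume u v :=
      (continuous_const.mul hzc).intervalIntegrable u v
    have h3 := h2.sub h1
    have h4 : (fun r => (c ^ 2 / 4) * z r - α r * z r) = q := by
      funext r; simp only [hq]; ring
    rwa [h4] at h3
  have hweq : ∀ s t : ℝ, w t - w s = ∫ r in s..t, q r := by
    have main : ∀ s t : ℝ, s ≤ t → w t - w s = ∫ r in s..t, q r := by
      intro s t hst
      have hP := prod_rule (g := fun r => -α r * f r - c * g r)
        (fun u v => rhs_intInt hmeas hC hf hg u v) hg heq2 hEd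
        (continuous_const.mul hEc) hst
      have hz2 : (c / 2) * z t - (c / 2) * z s = ∫ r in s..t, c / 2 * w r := by
        rw [intervalIntegral.integral_const_mul]
        have h5 := intervalIntegral.integral_eq_sub_of_hasDerivAt (f := z)
          (fun x _ => hzd x) (hwc.intervalIntegrable (μ := volume) s t)
        rw [h5]; ring
      have hcomb : w t - w s
          = (g t * E t - g s * E s) + ((c / 2) * z t - (c / 2) * z s) := by
        simp only [hw, hz]; ring
      have hA : IntervalIntegrable
          (fun r => (-α r * f r - c * g r) * E r + g r * (c / 2 * E r)) volume s t :=
        (intInt_mul_cont (rhs_intInt hmeas hC hf hg s t) hEc).add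
          ((hg.mul (continuous_const.mul hEc)).intervalIntegrable s t)
      rw [hcomb, hP, hz2,
        ← intervalIntegral.integral_add (g := fun r => c / 2 * w r) hA ((continuous_const.mul hwc).intervalIntegrable s t)]
      apply intervalIntegral.integral_congr
      intro r _
      show (-α r * f r - c * g r) * E r + g r * (c / 2 * E r) + c / 2 * w r = q r
      simp only [hq, hw, hz]; ring
    intro s t
    rcases le_total s t with h | h
    · exact main s t h
    · rw [intervalIntegral.integral_symm t s]
      have := main t s h
      linarith
  have hE0 : E t₀ = 1 := by simp [hE]
  have hz0 : z t₀ = 0 := by simp only [hz]; rw [hf0]; ring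
  have hzT : z (t₀ + T) = 0 := by simp only [hz]; rw [hfT]; ring
  have hw0 : w t₀ = g t₀ := by simp only [hw, hz]; rw [hE0, hf0]; ring
  -- local nonvanishing to the right of t₀
  have hslope := hasDerivAt_iff_tendsto_slope.1 (hzd t₀)
  have hne : ∀ᶠ s in nhdsWithin t₀ {t₀}ᶜ, slope z t₀ s ≠ 0 := by
    apply hslope.eventually_ne
    rw [hw0]; exact hg0
  rw [eventually_nhdsWithin_iff, Metric.eventually_nhds_iff] at hne
  obtain ⟨δ, hδ, hball⟩ := hne
  set ε : ℝ := min (δ / 2) T with hε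
  have hε0 : 0 < ε := lt_min (by linarith) hT
  have hεT : ε ≤ T := min_le_right _ _
  have hlocal : ∀ s : ℝ, t₀ < s → s ≤ t₀ + ε → z s ≠ 0 := by
    intro s h1 h2 hzs
    have hd : dist s t₀ < δ := by
      rw [Real.dist_eq, abs_of_pos (by linarith : (0:ℝ) < s - t₀)]
      have h3 : ε ≤ δ / 2 := min_le_left _ _
      linarith
    have h4 := hball hd (by simpa using ne_of_gt h1)
    apply h4
    rw [slope_def_field, hzs, hz0]
    simp
  set Z : Set ℝ := {s ∈ Icc (t₀ + ε) (t₀ + T) | z s = 0} with hZ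
  have hZc : IsClosed Z := by
    have h1 : Z = Icc (t₀ + ε) (t₀ + T) ∩ z ⁻¹' {0} := by
      ext x; simp [hZ, Set.mem_sep_iff, Set.mem_preimage]
    rw [h1]
    exact isClosed_Icc.inter (isClosed_singleton.preimage hzc)
  have hZne : (t₀ + T) ∈ Z := ⟨⟨by linarith, le_refl _⟩, hzT⟩
  have hZbdd : BddBelow Z := ⟨t₀ + ε, fun x hx => hx.1.1⟩
  set b : ℝ := sInf Z with hb
  have hbZ : b ∈ Z := hZc.csInf_mem ⟨_, hZne⟩ hZbdd
  have hzb : z b = 0 := hbZ.2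
  have hab : t₀ < b := lt_of_lt_of_le (by linarith : t₀ < t₀ + ε) hbZ.1.1
  have hbT : b ≤ t₀ + T := hbZ.1.2
  have hnz : ∀ s : ℝ, t₀ < s → s < b → z s ≠ 0 := by
    intro s h1 h2 hzs
    rcases le_or_gt s (t₀ + ε) with h3 | h3
    · exact hlocal s h1 h3 hzs
    · have h4 : s ∈ Z := ⟨⟨h3.le, by linarith⟩, hzs⟩
      exact absurd (csInf_le hZbdd h4) (not_le.2 h2)
  -- sine comparison function
  set L : ℝ := b - t₀ with hL
  have hL0 : 0 < L := by simp only [hL]; linarith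
  have hLT : L ≤ T := by simp only [hL]; linarith
  set lam : ℝ := (π / L) ^ 2 with hlam
  set sf : ℝ → ℝ := fun t => sin (π / L * (t - t₀)) with hsf
  set sf' : ℝ → ℝ := fun t => π / L * cos (π / L * (t - t₀)) with hsf'
  have hsfc : Continuous sf :=
    Real.continuous_sin.comp (continuous_const.mul (continuous_id.sub continuous_const))
  have hsf'c : Continuous sf' :=
    continuous_const.mul
      (Real.continuous_cos.comp (continuous_const.mul (continuous_id.sub continuous_const)))
  have hlin : ∀ x : ℝ, HasDerivAt (fun t : ℝ => π / L * (t - t₀)) (π / L) x := by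
    intro x
    simpa using ((hasDerivAt_id x).sub_const t₀).const_mul (π / L)
  have hsfd : ∀ x : ℝ, HasDerivAt sf (sf' x) x := by
    intro x
    have h2 := (hlin x).sin
    simpa [hsf, hsf', mul_comm] using h2
  have hsfd' : ∀ x : ℝ, HasDerivAt sf' (-lam * sf x) x := by
    intro x
    have h2 := ((hlin x).cos).const_mul (π / L)
    have h3 : π / L * (-Real.sin (π / L * (x - t₀)) * (π / L)) = -lam * sf x := by
      simp only [hlam, hsf]; ring
    rw [← h3]; exact h2
  have hsf0 : sf t₀ = 0 := by simp [hsf]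
  have hsfb : sf b = 0 := by
    have h1 : π / L * (b - t₀) = π := by
      rw [← hL]; field_simp
    simp only [hsf]; rw [h1, Real.sin_pi]
  have hsfpos : ∀ t ∈ Ioo t₀ b, 0 < sf t := by
    intro t ht
    apply Real.sin_pos_of_pos_of_lt_pi
    · apply mul_pos (div_pos pi_pos hL0); linarith [ht.1]
    · have h1 : π / L * (t - t₀) < π / L * L := by
        apply mul_lt_mul_of_pos_left _ (div_pos pi_pos hL0)
        simp only [hL]; linarith [ht.2]
      have h2 : π / L * L = π := by field_simp
      linarith
  -- the two integral identities
  have hI1 : ∫ r in t₀..b, (w r * sf' r + z r * (-lam * sf r)) = 0 := by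
    have hpd : ∀ x : ℝ, HasDerivAt (fun t => z t * sf' t)
        (w x * sf' x + z x * (-lam * sf x)) x := fun x => (hzd x).mul (hsfd' x)
    have h5 := intervalIntegral.integral_eq_sub_of_hasDerivAt (fun x _ => hpd x)
      (((hwc.mul hsf'c).add (hzc.mul (continuous_const.mul hsfc))).intervalIntegrable
        (μ := volume) t₀ b)
    rw [h5, hzb, hz0]; ring
  have hA2 := prod_rule hqint hwc hweq hsfd hsf'c hab.le
  have hI2 : ∫ r in t₀..b, (q r * sf r + w r * sf' r) = 0 := by
    rw [← hA2, hsfb, hsf0]; ring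
  have hII1 : IntervalIntegrable (fun r => w r * sf' r + z r * (-lam * sf r)) volume t₀ b :=
    ((hwc.mul hsf'c).add (hzc.mul (continuous_const.mul hsfc))).intervalIntegrable t₀ b
  have hII2 : IntervalIntegrable (fun r => q r * sf r + w r * sf' r) volume t₀ b :=
    (intInt_mul_cont (hqint t₀ b) hsfc).add ((hwc.mul hsf'c).intervalIntegrable t₀ b)
  have hfinal : ∫ r in t₀..b, ((α r - c ^ 2 / 4 - lam) * (z r * sf r)) = 0 := by
    have hdiff : ∫ r in t₀..b,
        ((w r * sf' r + z r * (-lam * sf r)) - (q r * sf r + w r * sf' r)) = 0 := by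
      rw [intervalIntegral.integral_sub hII1 hII2, hI1, hI2]; ring
    rw [← hdiff]
    apply intervalIntegral.integral_congr
    intro r _
    show (α r - c ^ 2 / 4 - lam) * (z r * sf r)
      = (w r * sf' r + z r * (-lam * sf r)) - (q r * sf r + w r * sf' r)
    simp only [hq]; ring
  -- sign dichotomy
  have hsign : (∀ t ∈ Ioo t₀ b, 0 < z t) ∨ (∀ t ∈ Ioo t₀ b, z t < 0) := by
    by_cases hpos : ∀ t ∈ Ioo t₀ b, 0 < z t
    · exact Or.inl hpos
    · right
      push_neg at hpos
      obtain ⟨p₀, hp₀, hp₀le⟩ := hpos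
      have hp₀lt : z p₀ < 0 := lt_of_le_of_ne hp₀le (hnz p₀ hp₀.1 hp₀.2)
      intro t ht
      by_contra hge
      push_neg at hge
      have hgt : 0 < z t := lt_of_le_of_ne hge (Ne.symm (hnz t ht.1 ht.2))
      have h0mem : (0:ℝ) ∈ uIcc (z p₀) (z t) :=
        Set.mem_uIcc.2 (Or.inl ⟨hp₀lt.le, hgt.le⟩)
      obtain ⟨x, hx, hzx⟩ := intermediate_value_uIcc (a := p₀) (b := t) hzc.continuousOn h0mem
      have hxI : x ∈ Ioo t₀ b := Set.ordConnected_Ioo.uIcc_subset hp₀ ht hx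
      exact hnz x hxI.1 hxI.2 hzx
  obtain ⟨h, hh_cont, hh_pos, hh_int0⟩ :
      ∃ h : ℝ → ℝ, Continuous h ∧ (∀ t ∈ Ioo t₀ b, 0 < h t) ∧
        (∫ r in t₀..b, ((α r - c ^ 2 / 4 - lam) * (h r * sf r))) = 0 := by
    rcases hsign with hs | hs
    · exact ⟨z, hzc, hs, hfinal⟩
    · refine ⟨fun t => -z t, hzc.neg, fun t ht => neg_pos.2 (hs t ht), ?_⟩
      have heqfun : (fun r => (α r - c ^ 2 / 4 - lam) * ((fun t => -z t) r * sf r))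
          = fun r => -((α r - c ^ 2 / 4 - lam) * (z r * sf r)) := by
        funext r; ring
      show ∫ r in t₀..b, (α r - c ^ 2 / 4 - lam) * ((fun t => -z t) r * sf r) = 0
      rw [heqfun, intervalIntegral.integral_neg, hfinal, neg_zero]
  -- measure-theoretic contradiction
  set K₀ : ℝ := π ^ 2 / T ^ 2 + c ^ 2 / 4 with hK₀
  set F : ℝ → ℝ := fun t => (lam - (α t - c ^ 2 / 4)) * (h t * sf t) with hF
  have hlam_ge : π ^ 2 / T ^ 2 ≤ lam := by
    rw [hlam, div_pow]
    apply div_le_div_of_nonneg_left (sq_nonneg π) (pow_pos hL0 2)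
    exact pow_le_pow_left₀ hL0.le hLT 2
  have hFint : IntegrableOn F (Ioc t₀ b) volume := by
    have h1 : IntervalIntegrable (fun r => α r * (h r * sf r)) volume t₀ b :=
      alpha_mul_intInt hmeas hC (hh_cont.mul hsfc) t₀ b
    have h2 : IntervalIntegrable (fun r => (lam + c ^ 2 / 4) * (h r * sf r)) volume t₀ b :=
      (continuous_const.mul (hh_cont.mul hsfc)).intervalIntegrable t₀ b
    have h3 := h2.sub h1
    have h4 : (fun r => (lam + c ^ 2 / 4) * (h r * sf r) - α r * (h r * sf r)) = F := by
      funext r; simp only [hF]; ring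
    rw [h4] at h3
    rwa [intervalIntegrable_iff, uIoc_of_le hab.le] at h3
  have hFzero : ∫ t in Ioc t₀ b, F t = 0 := by
    have h5 : ∫ r in t₀..b, F r = 0 := by
      have heqfun : F = fun r => -((α r - c ^ 2 / 4 - lam) * (h r * sf r)) := by
        funext r; simp only [hF]; ring
      rw [heqfun, intervalIntegral.integral_neg, hh_int0, neg_zero]
    rwa [intervalIntegral.integral_of_le hab.le] at h5
  have hFnonneg : 0 ≤ᵐ[volume.restrict (Ioc t₀ b)] F := by
    have hae : ∀ᵐ t ∂(volume.restrict (Ioc t₀ b)), α t ≤ K₀ := ae_restrict_of_ae hub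
    have hmem : ∀ᵐ t ∂(volume.restrict (Ioc t₀ b)), t ∈ Ioc t₀ b :=
      ae_restrict_mem measurableSet_Ioc
    filter_upwards [hae, hmem] with t h1 h2
    have hhsf : 0 ≤ h t * sf t := by
      rcases lt_or_eq_of_le h2.2 with h3 | h3
      · exact mul_nonneg (hh_pos t ⟨h2.1, h3⟩).le (hsfpos t ⟨h2.1, h3⟩).le
      · rw [h3, hsfb, mul_zero]
    have h6 : 0 ≤ lam - (α t - c ^ 2 / 4) := by
      simp only [hK₀] at h1; linarith
    exact mul_nonneg h6 hhsf
  have hFae0 : F =ᵐ[volume.restrict (Ioc t₀ b)] 0 :=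
    (MeasureTheory.integral_eq_zero_iff_of_nonneg_ae hFnonneg hFint).1 hFzero
  have hFmeas : Measurable F :=
    ((measurable_const.sub (hmeas.sub measurable_const)).mul
      (hh_cont.mul hsfc).measurable)
  have hmeasset : MeasurableSet {x : ℝ | F x ≠ 0} := by
    have h11 : {x : ℝ | F x ≠ 0} = F ⁻¹' ({0}ᶜ) := rfl
    rw [h11]; exact hFmeas (measurableSet_singleton 0).compl
  have hzero : volume ({t : ℝ | F t ≠ 0} ∩ Ioc t₀ b) = 0 := by
    have h8 : ∀ᵐ x ∂(volume.restrict (Ioc t₀ b)), F x = 0 :=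
      hFae0.mono fun x hx => by simpa using hx
    have h9 := ae_iff.1 h8
    rwa [Measure.restrict_apply hmeasset] at h9
  -- the positive-measure set
  have hP : 0 < volume {t ∈ Ioo t₀ b | α t - c ^ 2 / 4 < lam} := by
    rcases lt_or_eq_of_le hLT with hlt | heqL
    · have hbad : volume {t : ℝ | lam ≤ α t - c ^ 2 / 4} = 0 := by
        have hKlt : K₀ < lam + c ^ 2 / 4 := by
          have h8 : π ^ 2 / T ^ 2 < (π / L) ^ 2 := by
            rw [div_pow]
            apply div_lt_div_of_pos_left (pow_pos pi_pos 2) (pow_pos hL0 2)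
            exact pow_lt_pow_left₀ hlt hL0.le (by norm_num)
          simp only [hK₀, hlam]; linarith
        have hsub : {t : ℝ | lam ≤ α t - c ^ 2 / 4} ⊆ {t : ℝ | ¬ (α t ≤ K₀)} := by
          intro x hx
          simp only [mem_setOf_eq, not_le] at hx ⊢
          simp only [hK₀]
          have := hx
          simp only [hK₀] at hKlt
          linarith
        have h0 : volume {t : ℝ | ¬ (α t ≤ π ^ 2 / T ^ 2 + c ^ 2 / 4)} = 0 := ae_iff.1 hub
        exact measure_mono_null hsub h0
      have hPeq : {t ∈ Ioo t₀ b | α t - c ^ 2 / 4 < lam}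
          = Ioo t₀ b \ {t : ℝ | lam ≤ α t - c ^ 2 / 4} := by
        ext x
        simp only [Set.mem_sep_iff, mem_diff, mem_setOf_eq, not_le]
      rw [hPeq, measure_diff_null hbad, Real.volume_Ioo]
      exact ENNReal.ofReal_pos.2 (by linarith)
    · have hb_eq : b = t₀ + T := by simp only [hL] at heqL; linarith
      have hpp := periodic_set_pos (K₀ := π ^ 2 / T ^ 2 + c ^ 2 / 4) hT hmeas hper hstrict t₀
      apply lt_of_lt_of_le hpp
      apply measure_mono
      intro x hx
      have hlameq : lam = π ^ 2 / T ^ 2 := by rw [hlam, ← heqL, div_pow]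
      refine ⟨⟨hx.2.1, ?_⟩, ?_⟩
      · rw [hb_eq]; exact hx.2.2
      · rw [hlameq]
        have h9 : α x < π ^ 2 / T ^ 2 + c ^ 2 / 4 := hx.1
        linarith
  -- contradiction
  have hsubP : {t ∈ Ioo t₀ b | α t - c ^ 2 / 4 < lam} ⊆ {t : ℝ | F t ≠ 0} ∩ Ioc t₀ b := by
    intro x hx
    refine ⟨?_, hx.1.1, hx.1.2.le⟩
    have h10 : 0 < (lam - (α x - c ^ 2 / 4)) * (h x * sf x) :=
      mul_pos (by linarith [hx.2]) (mul_pos (hh_pos x hx.1) (hsfpos x hx.1))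
    simp only [mem_setOf_eq, hF]
    exact ne_of_gt h10
  have hle := measure_mono (μ := (volume : Measure ℝ)) hsubP
  rw [hzero] at hle
  exact hP.ne' (le_antisymm hle (by simp))

private lemma sol_comb {α : ℝ → ℝ} {c C : ℝ} (hmeas : Measurable α)
    (hC : ∀ᵐ t ∂(volume : Measure ℝ), |α t| ≤ C)
    {f₁ g₁ f₂ g₂ : ℝ → ℝ} (h₁ : IsSol α c f₁ g₁) (h₂ : IsSol α c f₂ g₂) (a b : ℝ) :
    IsSol α c (fun t => a * f₁ t + b * f₂ t) (fun t => a * g₁ t + b * g₂ t) := by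
  obtain ⟨hf₁, hg₁, he₁, he₁'⟩ := h₁
  obtain ⟨hf₂, hg₂, he₂, he₂'⟩ := h₂
  refine ⟨(continuous_const.mul hf₁).add (continuous_const.mul hf₂),
    (continuous_const.mul hg₁).add (continuous_const.mul hg₂), ?_, ?_⟩
  · intro s t
    rw [intervalIntegral.integral_add ((hg₁.intervalIntegrable s t).const_mul a)
      ((hg₂.intervalIntegrable s t).const_mul b),
      intervalIntegral.integral_const_mul, intervalIntegral.integral_const_mul,
      ← he₁ s t, ← he₂ s t]
    ring
  · intro s t
    have k₁ : IntervalIntegrable (fun r => a * (-α r * f₁ r - c * g₁ r)) volume s t :=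
      (rhs_intInt hmeas hC hf₁ hg₁ s t).const_mul a
    have k₂ : IntervalIntegrable (fun r => b * (-α r * f₂ r - c * g₂ r)) volume s t :=
      (rhs_intInt hmeas hC hf₂ hg₂ s t).const_mul b
    have hcong : ∀ r : ℝ,
        -α r * (a * f₁ r + b * f₂ r) - c * (a * g₁ r + b * g₂ r)
          = a * (-α r * f₁ r - c * g₁ r) + b * (-α r * f₂ r - c * g₂ r) := by
      intro r; ring
    calc (a * g₁ t + b * g₂ t) - (a * g₁ s + b * g₂ s)
        = a * (g₁ t - g₁ s) + b * (g₂ t - g₂ s) := by ring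
      _ = a * (∫ r in s..t, (-α r * f₁ r - c * g₁ r))
          + b * (∫ r in s..t, (-α r * f₂ r - c * g₂ r)) := by rw [← he₁' s t, ← he₂' s t]
      _ = ∫ r in s..t, (a * (-α r * f₁ r - c * g₁ r) + b * (-α r * f₂ r - c * g₂ r)) := by
          rw [intervalIntegral.integral_add k₁ k₂,
            intervalIntegral.integral_const_mul, intervalIntegral.integral_const_mul]
      _ = ∫ r in s..t, (-α r * (a * f₁ r + b * f₂ r) - c * (a * g₁ r + b * g₂ r)) := by
          apply intervalIntegral.integral_congr
          intro r _
          exact (hcong r).symm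

private lemma sol_shift {α : ℝ → ℝ} {c T : ℝ} (hper : Function.Periodic α T)
    {f g : ℝ → ℝ} (hsol : IsSol α c f g) :
    IsSol α c (fun t => f (t + T)) (fun t => g (t + T)) := by
  obtain ⟨hf, hg, he, he'⟩ := hsol
  refine ⟨hf.comp (continuous_id.add continuous_const),
    hg.comp (continuous_id.add continuous_const), ?_, ?_⟩
  · intro s t
    rw [intervalIntegral.integral_comp_add_right (fun r => g r) T]
    exact he (s + T) (t + T)
  · intro s t
    have h1 : (fun r : ℝ => -α r * f (r + T) - c * g (r + T))
        = fun r : ℝ => -α (r + T) * f (r + T) - c * g (r + T) := by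
      funext r; rw [hper r]
    rw [h1, intervalIntegral.integral_comp_add_right
      (fun r => -α r * f r - c * g r) T]
    exact he' (s + T) (t + T)
/-- Under `α ≪ π²/T² + c²/4` and average of `α` greater than `c²/4`, the monodromy matrix of
`x'' + c x' + α x = 0` has no real eigenvalue (no real Floquet multiplier). -/
theorem stmt6 (c T : ℝ) (hc : 0 < c) (hT : 0 < T) (α : ℝ → ℝ) (hmeas : Measurable α)
    (hper : Function.Periodic α T)
    (hbdd : ∃ C : ℝ, ∀ᵐ t ∂(volume : Measure ℝ), |α t| ≤ C)
    (hub : ∀ᵐ t ∂(volume : Measure ℝ), α t ≤ π ^ 2 / T ^ 2 + c ^ 2 / 4)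
    (hstrict : 0 < volume {t ∈ Icc (0 : ℝ) T | α t < π ^ 2 / T ^ 2 + c ^ 2 / 4})
    (havg : c ^ 2 / 4 < (1 / T) * ∫ t in (0 : ℝ)..T, α t)
    (M : ℝ → Matrix (Fin 2) (Fin 2) ℝ) (hM0 : M 0 = 1)
    (hMint : ∀ i j : Fin 2, ∀ s t : ℝ,
      M t i j - M s i j = ∫ r in s..t, (!![0, 1; -α r, -c] * M r) i j) :
    ¬ ∃ ρ : ℝ, (M T - ρ • (1 : Matrix (Fin 2) (Fin 2) ℝ)).det = 0 := by
  rintro ⟨ρ, hdet⟩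
  obtain ⟨C, hC⟩ := hbdd
  -- the columns of M are solutions
  have hcol : ∀ j : Fin 2, IsSol α c (fun t => M t 0 j) (fun t => M t 1 j) := by
    intro j
    apply bootstrap hc hmeas hC
    · intro s t
      have := hMint 0 j s t
      rw [this]
      apply intervalIntegral.integral_congr
      intro r _
      simp [Matrix.mul_apply, Fin.sum_univ_two]
    · intro s t
      have := hMint 1 j s t
      rw [this]
      apply intervalIntegral.integral_congr
      intro r _
      simp [Matrix.mul_apply, Fin.sum_univ_two]
      ring
  -- eigenvector
  obtain ⟨v, hv, hMv⟩ := (Matrix.exists_mulVec_eq_zero_iff).2 hdet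
  have hMv' : (M T).mulVec v = ρ • v := by
    have h1 : (M T).mulVec v - (ρ • (1 : Matrix (Fin 2) (Fin 2) ℝ)).mulVec v = 0 := by
      rw [← Matrix.sub_mulVec]; exact hMv
    have h2 : (ρ • (1 : Matrix (Fin 2) (Fin 2) ℝ)).mulVec v = ρ • v := by
      rw [Matrix.smul_mulVec, Matrix.one_mulVec]
    rw [h2] at h1
    linear_combination (norm := module) h1
  set x0 : ℝ → ℝ := fun t => v 0 * M t 0 0 + v 1 * M t 0 1 with hx0
  set x1 : ℝ → ℝ := fun t => v 0 * M t 1 0 + v 1 * M t 1 1 with hx1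
  have hsolx : IsSol α c x0 x1 := sol_comb hmeas hC (hcol 0) (hcol 1) (v 0) (v 1)
  have hx00 : x0 0 = v 0 := by simp [hx0, hM0, Matrix.one_apply]
  have hx10 : x1 0 = v 1 := by simp [hx1, hM0, Matrix.one_apply]
  have hx0T : x0 T = ρ * x0 0 := by
    have h1 := congr_fun hMv' 0
    simp only [Matrix.mulVec, dotProduct, Fin.sum_univ_two, Pi.smul_apply,
      smul_eq_mul] at h1
    rw [hx00]
    simp only [hx0]
    rw [← h1]; ring
  have hx1T : x1 T = ρ * x1 0 := by
    have h1 := congr_fun hMv' 1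
    simp only [Matrix.mulVec, dotProduct, Fin.sum_univ_two, Pi.smul_apply,
      smul_eq_mul] at h1
    rw [hx10]
    simp only [hx1]
    rw [← h1]; ring
  have hvnz : v 0 ≠ 0 ∨ v 1 ≠ 0 := by
    by_contra hcon
    push_neg at hcon
    exact hv (funext fun i => by fin_cases i <;> simp [hcon.1, hcon.2])
  -- a solution vanishing at a point along with its derivative is trivial
  have hnontriv : ∀ t : ℝ, x0 t = 0 → x1 t = 0 → False := by
    intro t h0 h1
    have := sol_unique hmeas ⟨C, hC⟩ hsolx h0 h1 0
    rw [hx00, hx10] at this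
    rcases hvnz with h | h
    · exact h this.1
    · exact h this.2
  have hρ : ρ ≠ 0 := by
    intro hρ0
    rw [hρ0, zero_mul] at hx0T hx1T
    exact hnontriv T hx0T hx1T
  -- Floquet property
  have hFloq : ∀ t : ℝ, x0 (t + T) = ρ * x0 t ∧ x1 (t + T) = ρ * x1 t := by
    have hshift : IsSol α c (fun t => x0 (t + T)) (fun t => x1 (t + T)) :=
      sol_shift hper hsolx
    have hdiff : IsSol α c (fun t => 1 * x0 (t + T) + (-ρ) * x0 t)
        (fun t => 1 * x1 (t + T) + (-ρ) * x1 t) :=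
      sol_comb hmeas hC hshift hsolx 1 (-ρ)
    have h00 : 1 * x0 (0 + T) + (-ρ) * x0 0 = 0 := by rw [zero_add, hx0T]; ring
    have h10 : 1 * x1 (0 + T) + (-ρ) * x1 0 = 0 := by rw [zero_add, hx1T]; ring
    intro t
    have := sol_unique hmeas ⟨C, hC⟩ hdiff h00 h10 t
    constructor
    · linarith [this.1]
    · linarith [this.2]
  by_cases hcase : ∀ t : ℝ, x0 t ≠ 0
  · exact caseA hc hT hmeas hC havg hsolx hρ hx0T hx1T hcase
  · push_neg at hcase
    obtain ⟨t₀, ht₀⟩ := hcase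
    have hg0 : x1 t₀ ≠ 0 := fun h => hnontriv t₀ ht₀ h
    have hfT : x0 (t₀ + T) = 0 := by rw [(hFloq t₀).1, ht₀, mul_zero]
    exact caseB hc hT hmeas hC hper hub hstrict hsolx ht₀ hg0 hfT
end

section
/- Let c > 0, T > 0, and suppose α is T-periodic, essentially bounded, with α ≪ π²/T² + c²/4 and average of α greater than c²/4. Then every nontrivial solution x of x'' + c x' + α(t)x = 0 satisfies: there exist constants 0 < C₁ ≤ C₂ with C₁ e^{-(c/2)t} ≤ sup_{s∈[t,t+T]}(|x(s)| + |x'(s)|) ≤ C₂ e^{-(c/2)t} for all t ≥ 0; that is, every nonzero solution decays at the exact exponential rate c/2. -/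
open Real MeasureTheory Set Topology Filter

lemma ae_le_all {f : ℝ → ℝ} (hf : Continuous f) (h : ∀ᵐ t ∂(volume : Measure ℝ), f t ≤ 0) :
    ∀ t, f t ≤ 0 := by
  by_contra hcon
  push_neg at hcon
  obtain ⟨t₀, ht₀⟩ := hcon
  have hU : IsOpen {t | 0 < f t} := isOpen_lt continuous_const hf
  have hpos : 0 < volume {t | 0 < f t} := hU.measure_pos volume ⟨t₀, ht₀⟩
  rw [ae_iff] at h
  have : {t | 0 < f t} ⊆ {t | ¬ f t ≤ 0} := fun t ht => not_le.2 ht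
  have := measure_mono_null this h
  simp [this] at hpos

lemma ae_eq_all {f g : ℝ → ℝ} (hf : Continuous f) (hg : Continuous g)
    (h : ∀ᵐ t ∂(volume : Measure ℝ), f t = g t) : ∀ t, f t = g t := by
  intro t
  have h1 := ae_le_all (hf.sub hg) (h.mono fun t ht => by simp [ht]) t
  have h2 := ae_le_all (hg.sub hf) (h.mono fun t ht => by simp [ht]) t
  simp at h1 h2; linarith

lemma deriv2_continuous {w : ℝ → ℝ} (hw : ContDiff ℝ 2 w) :
    Differentiable ℝ w ∧ Differentiable ℝ (deriv w) ∧ Continuous (deriv (deriv w)) := by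
  have h2 : ContDiff ℝ ((1:ℕ∞) + 1) w := by exact_mod_cast hw
  rw [contDiff_succ_iff_deriv] at h2
  obtain ⟨hd, h1⟩ := h2
  have h1' : ContDiff ℝ 1 (deriv w) := by
    first
    | exact h1
    | exact h1.2
    | exact_mod_cast h1
  exact ⟨hd, h1'.differentiable one_ne_zero, h1'.continuous_deriv le_rfl⟩

lemma ode_uniq {q w : ℝ → ℝ} {K : ℝ} (hK : 0 ≤ K)
    (hqK : ∀ᵐ t ∂(volume : Measure ℝ), |q t| ≤ K)
    (hw : ContDiff ℝ 2 w)
    (heq : ∀ᵐ t ∂(volume : Measure ℝ), deriv (deriv w) t = -(q t * w t))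
    {a : ℝ} (h0 : w a = 0) (h0' : deriv w a = 0) : ∀ t, w t = 0 := by
  obtain ⟨hw1, hw2, hw3⟩ := deriv2_continuous hw
  have hbb : ∀ t, |deriv (deriv w) t| ≤ K * |w t| := by
    have h := ae_le_all (f := fun t => |deriv (deriv w) t| - K * |w t|)
      (hw3.abs.sub (continuous_const.mul hw1.continuous.abs))
      ((heq.and hqK).mono (fun t ⟨h1, h2⟩ => by
        simp only [h1, abs_neg, abs_mul, sub_nonpos]
        exact mul_le_mul_of_nonneg_right h2 (abs_nonneg _)))
    intro t; have := h t; linarith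
  set E : ℝ → ℝ := fun t => w t * w t + deriv w t * deriv w t with hE
  have hEd : ∀ t, HasDerivAt E
      (deriv w t * w t + w t * deriv w t +
        (deriv (deriv w) t * deriv w t + deriv w t * deriv (deriv w) t)) t := by
    intro t
    exact ((hw1 t).hasDerivAt.mul (hw1 t).hasDerivAt).add
      ((hw2 t).hasDerivAt.mul (hw2 t).hasDerivAt)
  have hEnonneg : ∀ t, 0 ≤ E t := fun t =>
    add_nonneg (mul_self_nonneg _) (mul_self_nonneg _)
  have hEbound : ∀ t, |deriv E t| ≤ (1 + K) * E t := by
    intro t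
    rw [(hEd t).deriv]
    set A := w t with hA; set B := deriv w t with hB; set Cc := deriv (deriv w) t with hC
    have hEt : E t = A * A + B * B := rfl
    have h1 : |Cc| ≤ K * |A| := hbb t
    have h2 : B * Cc ≤ |B| * (K * |A|) := le_trans (le_trans (le_abs_self _) (le_of_eq (abs_mul _ _)))
      (mul_le_mul_of_nonneg_left h1 (abs_nonneg _))
    have h3 : -(|B| * (K * |A|)) ≤ B * Cc := by
      have h4 := neg_abs_le (B * Cc)
      rw [abs_mul] at h4
      nlinarith [mul_le_mul_of_nonneg_left h1 (abs_nonneg B)]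
    have h4 : 2 * (|B| * (K * |A|)) ≤ K * (A ^ 2 + B ^ 2) := by
      nlinarith [mul_nonneg hK (sq_nonneg (|A| - |B|)), sq_abs A, sq_abs B]
    rw [abs_le, hEt]
    constructor <;> nlinarith [sq_nonneg (A - B), sq_nonneg (A + B)]
  have hEdiff : Differentiable ℝ E := fun t => (hEd t).differentiableAt
  have hEa : E a = 0 := by simp [hE, h0, h0']
  have key : ∀ t, E t = 0 := by
    intro t
    have hle : E t ≤ 0 := by
      rcases le_total a t with h | h
      · set g : ℝ → ℝ := fun t => E t * Real.exp (-(1 + K) * t) with hg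
        have hgd : ∀ s, HasDerivAt g ((deriv E s - (1 + K) * E s) * Real.exp (-(1 + K) * s)) s := by
          intro s
          have h1 : HasDerivAt (fun u => Real.exp (-(1 + K) * u))
              (-(1+K) * Real.exp (-(1+K)*s)) s := by
            simpa [mul_comm, Function.comp_def] using
              (Real.hasDerivAt_exp _).comp s ((hasDerivAt_id s).const_mul (-(1+K)))
          have := (hEdiff s).hasDerivAt.mul h1
          exact this.congr_deriv (by ring)
        have hganti : Antitone g := by
          apply antitone_of_deriv_nonpos (fun s => (hgd s).differentiableAt)
          intro s
          rw [(hgd s).deriv]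
          have := (abs_le.1 (hEbound s)).2
          have he : (0:ℝ) < Real.exp (-(1 + K) * s) := Real.exp_pos _
          nlinarith
        have hgle : g t ≤ 0 := by
          have := hganti h
          simpa [hg, hEa] using this
        have he : (0:ℝ) < Real.exp (-(1 + K) * t) := Real.exp_pos _
        by_contra hcon; push_neg at hcon
        have : 0 < E t * Real.exp (-(1 + K) * t) := mul_pos hcon he
        have hgt : g t = E t * Real.exp (-(1 + K) * t) := rfl
        linarith [hgle, hgt ▸ this]
      · set g : ℝ → ℝ := fun t => E t * Real.exp ((1 + K) * t) with hg
        have hgd : ∀ s, HasDerivAt g ((deriv E s + (1 + K) * E s) * Real.exp ((1 + K) * s)) s := by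
          intro s
          have h1 : HasDerivAt (fun u => Real.exp ((1 + K) * u))
              ((1+K) * Real.exp ((1+K)*s)) s := by
            simpa [mul_comm, Function.comp_def] using
              (Real.hasDerivAt_exp _).comp s ((hasDerivAt_id s).const_mul (1+K))
          have := (hEdiff s).hasDerivAt.mul h1
          exact this.congr_deriv (by ring)
        have hgmono : Monotone g := by
          apply monotone_of_deriv_nonneg (fun s => (hgd s).differentiableAt)
          intro s
          rw [(hgd s).deriv]
          have := (abs_le.1 (hEbound s)).1
          have he : (0:ℝ) < Real.exp ((1 + K) * s) := Real.exp_pos _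
          nlinarith
        have hgle : g t ≤ 0 := by
          have := hgmono h
          simpa [hg, hEa] using this
        have he : (0:ℝ) < Real.exp ((1 + K) * t) := Real.exp_pos _
        by_contra hcon; push_neg at hcon
        have : 0 < E t * Real.exp ((1 + K) * t) := mul_pos hcon he
        have hgt : g t = E t * Real.exp ((1 + K) * t) := rfl
        linarith [hgle, hgt ▸ this]
    exact le_antisymm hle (hEnonneg t)
  intro t
  have h5 : w t * w t + deriv w t * deriv w t = 0 := key t
  exact mul_self_eq_zero.mp (le_antisymm
    (by nlinarith [mul_self_nonneg (deriv w t)]) (mul_self_nonneg _))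


lemma ae_translate {P : ℝ → Prop} (h : ∀ᵐ t ∂(volume : Measure ℝ), P t) (T : ℝ) :
    ∀ᵐ t ∂(volume : Measure ℝ), P (t + T) := by
  rw [ae_iff] at h ⊢
  have he : {t | ¬ P (t + T)} = (fun t => t + T) ⁻¹' {t | ¬ P t} := rfl
  rw [he, measure_preimage_add_right]
  exact h

lemma periodic_set_measure {q : ℝ → ℝ} (hm : Measurable q) {T : ℝ} (hT : 0 < T)
    (hper : Function.Periodic q T) (κ : ℝ) (a : ℝ) :
    volume {t ∈ Icc a (a+T) | q t < κ} = volume {t ∈ Icc 0 T | q t < κ} := by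
  set S := {t | q t < κ} with hS
  have hSm : MeasurableSet S := measurableSet_lt hm measurable_const
  have hSk : ∀ (k : ℤ) (t : ℝ), (t + (k:ℝ) * T ∈ S ↔ t ∈ S) := by
    intro k t
    simp only [hS, mem_setOf_eq, (hper.int_mul k) t]
  have hrw : ∀ b d : ℝ, {t ∈ Icc b d | q t < κ} = S ∩ Icc b d := by
    intro b d; ext t; simp only [hS, mem_setOf_eq, mem_inter_iff, mem_Icc]; tauto
  rw [hrw, hrw]
  set k := ⌊a / T⌋ with hk
  set b := a - (k:ℝ) * T with hb
  have hb0 : 0 ≤ b := Int.sub_floor_div_mul_nonneg a hT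
  have hbT : b < T := Int.sub_floor_div_mul_lt a hT
  have e1 : (fun t => t + (k:ℝ) * T) ⁻¹' (S ∩ Icc a (a+T)) = S ∩ Icc b (b+T) := by
    ext t
    simp only [mem_preimage, mem_inter_iff, mem_Icc, hSk k t]
    constructor
    · rintro ⟨h1, h2, h3⟩; exact ⟨h1, by simp [hb] at *; linarith, by simp [hb] at *; linarith⟩
    · rintro ⟨h1, h2, h3⟩; exact ⟨h1, by simp [hb] at *; linarith, by simp [hb] at *; linarith⟩
  have step1 : volume (S ∩ Icc a (a+T)) = volume (S ∩ Icc b (b+T)) := by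
    rw [← e1, measure_preimage_add_right]
  have hIccIoc : ∀ c d : ℝ, volume (S ∩ Icc c d) = volume (S ∩ Ioc c d) := by
    intro c d
    apply le_antisymm
    · calc volume (S ∩ Icc c d) ≤ volume ((S ∩ Ioc c d) ∪ {c}) := measure_mono (by
            rintro t ⟨h1, h2, h3⟩
            rcases eq_or_lt_of_le h2 with h | h
            · exact Or.inr (by simp [← h])
            · exact Or.inl ⟨h1, h, h3⟩)
        _ ≤ volume (S ∩ Ioc c d) + volume ({c} : Set ℝ) := measure_union_le _ _
        _ = volume (S ∩ Ioc c d) := by simp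
    · exact measure_mono (inter_subset_inter_right _ Ioc_subset_Icc_self)
  have hsplit1 : S ∩ Ioc b (b+T) = (S ∩ Ioc b T) ∪ (S ∩ Ioc T (b+T)) := by
    rw [← inter_union_distrib_left, Ioc_union_Ioc_eq_Ioc (by linarith) (by linarith)]
  have hsplit2 : S ∩ Ioc 0 T = (S ∩ Ioc 0 b) ∪ (S ∩ Ioc b T) := by
    rw [← inter_union_distrib_left, Ioc_union_Ioc_eq_Ioc (by linarith) (by linarith)]
  have hdisj1 : Disjoint (S ∩ Ioc b T) (S ∩ Ioc T (b+T)) := by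
    rw [disjoint_left]; rintro t ⟨_, _, h2⟩ ⟨_, h3, _⟩; linarith
  have hdisj2 : Disjoint (S ∩ Ioc 0 b) (S ∩ Ioc b T) := by
    rw [disjoint_left]; rintro t ⟨_, _, h2⟩ ⟨_, h3, _⟩; linarith
  have e2 : (fun t => t + T) ⁻¹' (S ∩ Ioc T (b+T)) = S ∩ Ioc 0 b := by
    ext t
    have h1t := hSk 1 t
    simp only [Int.cast_one, one_mul] at h1t
    simp only [mem_preimage, mem_inter_iff, mem_Ioc, h1t]
    constructor
    · rintro ⟨h1, h2, h3⟩; exact ⟨h1, by linarith, by linarith⟩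
    · rintro ⟨h1, h2, h3⟩; exact ⟨h1, by linarith, by linarith⟩
  have e2' : volume (S ∩ Ioc T (b+T)) = volume (S ∩ Ioc 0 b) := by
    rw [← e2, measure_preimage_add_right]
  rw [step1, hIccIoc, hIccIoc, hsplit1, hsplit2,
    measure_union hdisj1 (hSm.inter measurableSet_Ioc),
    measure_union hdisj2 (hSm.inter measurableSet_Ioc), e2']
  ring


lemma ae_le_on {f : ℝ → ℝ} (hf : Continuous f) {a b : ℝ} (hab : a < b)
    (h : ∀ᵐ t ∂(volume : Measure ℝ), t ∈ Ioo a b → f t ≤ 0) : ∀ t ∈ Icc a b, f t ≤ 0 := by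
  have hIoo : ∀ t ∈ Ioo a b, f t ≤ 0 := by
    by_contra hcon
    push_neg at hcon
    obtain ⟨t₂, ht₂, ht₂0⟩ := hcon
    have hU : IsOpen ({t | 0 < f t} ∩ Ioo a b) :=
      (isOpen_lt continuous_const hf).inter isOpen_Ioo
    have hpos : 0 < volume ({t | 0 < f t} ∩ Ioo a b) :=
      hU.measure_pos volume ⟨t₂, ht₂0, ht₂⟩
    rw [ae_iff] at h
    have hsub : {t | 0 < f t} ∩ Ioo a b ⊆ {t | ¬ (t ∈ Ioo a b → f t ≤ 0)} := by
      rintro t ⟨h1, h2⟩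
      simp only [mem_setOf_eq, Classical.not_imp, not_le]
      exact ⟨h2, h1⟩
    have := measure_mono_null hsub h
    simp [this] at hpos
  intro t ht
  have hcl : Icc a b ⊆ closure (Ioo a b) := by rw [closure_Ioo hab.ne]
  have hsub : closure (Ioo a b) ⊆ {t | f t ≤ 0} :=
    closure_minimal hIoo (isClosed_le hf continuous_const)
  exact hsub (hcl ht)

lemma wronskian_const {q w1 w2 : ℝ → ℝ}
    (hw1 : ContDiff ℝ 2 w1) (hw2 : ContDiff ℝ 2 w2)
    (he1 : ∀ᵐ t ∂(volume : Measure ℝ), deriv (deriv w1) t = -(q t * w1 t))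
    (he2 : ∀ᵐ t ∂(volume : Measure ℝ), deriv (deriv w2) t = -(q t * w2 t)) (s t : ℝ) :
    w1 s * deriv w2 s - deriv w1 s * w2 s = w1 t * deriv w2 t - deriv w1 t * w2 t := by
  obtain ⟨h1d, h1d', h1c⟩ := deriv2_continuous hw1
  obtain ⟨h2d, h2d', h2c⟩ := deriv2_continuous hw2
  set W := fun t => w1 t * deriv w2 t - deriv w1 t * w2 t with hW
  have hWd : ∀ t, HasDerivAt W (w1 t * deriv (deriv w2) t - deriv (deriv w1) t * w2 t) t := by
    intro t
    have := ((h1d t).hasDerivAt.mul (h2d' t).hasDerivAt).sub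
      ((h1d' t).hasDerivAt.mul (h2d t).hasDerivAt)
    exact this.congr_deriv (by ring)
  have hWc : Continuous (fun t => deriv W t) := by
    have he : (fun t => deriv W t)
        = fun t => w1 t * deriv (deriv w2) t - deriv (deriv w1) t * w2 t :=
      funext fun t => (hWd t).deriv
    rw [he]
    exact (h1d.continuous.mul h2c).sub (h1c.mul h2d.continuous)
  have hae : ∀ᵐ t ∂(volume : Measure ℝ), deriv W t = 0 :=
    (he1.and he2).mono fun t ⟨a1, a2⟩ => by rw [(hWd t).deriv, a1, a2]; ring
  have hz : ∀ t, deriv W t = 0 := ae_eq_all hWc continuous_const hae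
  exact is_const_of_deriv_eq_zero (fun t => (hWd t).differentiableAt) hz s t


lemma sturm_core {q w : ℝ → ℝ} {T K : ℝ} (hT : 0 < T) (hK : 0 ≤ K)
    (hqK : ∀ᵐ t ∂(volume : Measure ℝ), |q t| ≤ K)
    (hub : ∀ᵐ t ∂(volume : Measure ℝ), q t ≤ π ^ 2 / T ^ 2)
    {t₀ t₁ : ℝ}
    (hstrict : 0 < volume {t ∈ Icc t₀ (t₀ + T) | q t < π ^ 2 / T ^ 2})
    (hw : ContDiff ℝ 2 w)
    (heq : ∀ᵐ t ∂(volume : Measure ℝ), deriv (deriv w) t = -(q t * w t))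
    (hnz : ∃ s, w s ≠ 0)
    (htlt : t₀ < t₁) (htle : t₁ ≤ t₀ + T)
    (hz0 : w t₀ = 0) (hz1 : w t₁ = 0)
    (hpos : ∀ s ∈ Ioo t₀ t₁, 0 < w s) : False := by
  obtain ⟨hw1, hw2, hw3⟩ := deriv2_continuous hw
  have hπT : (π / T) ^ 2 = π ^ 2 / T ^ 2 := div_pow π T 2
  set u : ℝ → ℝ := fun s => π * (s - t₀) / T with hu
  have hud : ∀ s, HasDerivAt u (π / T) s := by
    intro s
    have h : HasDerivAt (fun s => π * (s - t₀) / T) (π * 1 / T) s :=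
      (((hasDerivAt_id s).sub_const t₀).const_mul π).div_const T
    simpa using h
  have huc : Continuous u := by
    apply Continuous.div_const
    exact continuous_const.mul (continuous_id.sub continuous_const)
  set φ : ℝ → ℝ := fun s => Real.sin (u s) with hφ
  set ψ : ℝ → ℝ := fun s => (π / T) * Real.cos (u s) with hψ
  have hφc : Continuous φ := Real.continuous_sin.comp huc
  have hψc : Continuous ψ := continuous_const.mul (Real.continuous_cos.comp huc)
  have hφd : ∀ s, HasDerivAt φ (ψ s) s := by
    intro s
    have h := (Real.hasDerivAt_sin (u s)).comp s (hud s)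
    exact h.congr_deriv (by simp [hψ, mul_comm])
  have hψd : ∀ s, HasDerivAt ψ (-(π / T) ^ 2 * φ s) s := by
    intro s
    have h := ((Real.hasDerivAt_cos (u s)).comp s (hud s)).const_mul (π / T)
    exact h.congr_deriv (by simp [hφ]; ring)
  -- nonnegativity of φ on the interval
  have hφnn : ∀ s ∈ Icc t₀ t₁, 0 ≤ φ s := by
    intro s hs
    apply Real.sin_nonneg_of_nonneg_of_le_pi
    · have : 0 ≤ s - t₀ := by linarith [hs.1]
      positivity
    · show u s ≤ π
      rw [hu]
      simp only
      rw [div_le_iff₀ hT]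
      nlinarith [Real.pi_pos, hs.2]
  have hφpos : ∀ s, t₀ < s → s < t₀ + T → 0 < φ s := by
    intro s h1 h2
    apply Real.sin_pos_of_pos_of_lt_pi
    · have : 0 < s - t₀ := by linarith
      have := Real.pi_pos
      positivity
    · show u s < π
      rw [hu]
      simp only
      rw [div_lt_iff₀ hT]
      nlinarith [Real.pi_pos]
  set V : ℝ → ℝ := fun s => w s * ψ s - deriv w s * φ s with hV
  have hVd : ∀ s, HasDerivAt V
      (-(π / T) ^ 2 * w s * φ s - deriv (deriv w) s * φ s) s := by
    intro s
    have h := ((hw1 s).hasDerivAt.mul (hψd s)).sub ((hw2 s).hasDerivAt.mul (hφd s))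
    exact h.congr_deriv (by ring)
  have hVdc : Continuous (fun s => deriv V s) := by
    have he : (fun s => deriv V s)
        = fun s => -(π / T) ^ 2 * w s * φ s - deriv (deriv w) s * φ s :=
      funext fun s => (hVd s).deriv
    rw [he]
    exact ((continuous_const.mul hw1.continuous).mul hφc).sub (hw3.mul hφc)
  have hae1 : ∀ᵐ s ∂(volume : Measure ℝ), s ∈ Ioo t₀ t₁ → deriv V s ≤ 0 := by
    filter_upwards [heq, hub] with s he hb hs
    rw [(hVd s).deriv, he]
    have h1 : 0 ≤ w s * φ s :=
      mul_nonneg (le_of_lt (hpos s hs)) (hφnn s (Ioo_subset_Icc_self hs))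
    have h2 : q s - (π / T) ^ 2 ≤ 0 := by rw [hπT]; linarith
    calc -(π / T) ^ 2 * w s * φ s - -(q s * w s) * φ s
        = (q s - (π / T) ^ 2) * (w s * φ s) := by ring
      _ ≤ 0 := mul_nonpos_of_nonpos_of_nonneg h2 h1
  have hVle : ∀ s ∈ Icc t₀ t₁, deriv V s ≤ 0 := ae_le_on hVdc htlt hae1
  have hVcont : Continuous V := (hw1.continuous.mul hψc).sub (hw2.continuous.mul hφc)
  have hVanti : AntitoneOn V (Icc t₀ t₁) := by
    apply antitoneOn_of_deriv_nonpos (convex_Icc _ _) hVcont.continuousOn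
    · intro s hs
      exact ((hVd s).differentiableAt).differentiableWithinAt
    · intro s hs
      rw [interior_Icc] at hs
      exact hVle s (Ioo_subset_Icc_self hs)
  have hφt₀ : φ t₀ = 0 := by simp [hφ, hu]
  have hVt₀ : V t₀ = 0 := by simp [hV, hz0, hφt₀]
  have hVt₁le : V t₁ ≤ 0 := by
    have := hVanti (left_mem_Icc.2 (le_of_lt htlt)) (right_mem_Icc.2 (le_of_lt htlt))
      (le_of_lt htlt)
    rwa [hVt₀] at this
  -- derivative at t₁ is negative
  have hd1ne : deriv w t₁ ≠ 0 := by
    intro h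
    obtain ⟨s, hs⟩ := hnz
    exact hs (ode_uniq hK hqK hw heq hz1 h s)
  have hd1le : deriv w t₁ ≤ 0 := by
    have hslope := hasDerivAt_iff_tendsto_slope.1 (hw1 t₁).hasDerivAt
    have hmono : 𝓝[<] t₁ ≤ 𝓝[≠] t₁ := nhdsWithin_mono _ (fun x hx => ne_of_lt hx)
    have h2 := hslope.mono_left hmono
    apply le_of_tendsto h2
    filter_upwards [Ioo_mem_nhdsLT_of_mem (Set.mem_Ioc.2 ⟨htlt, le_rfl⟩)] with s hs
    have hws : 0 < w s := hpos s hs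
    have hst : s - t₁ < 0 := by linarith [hs.2]
    rw [slope_def_field]
    show (w s - w t₁) / (s - t₁) ≤ 0
    rw [hz1, sub_zero]
    exact div_nonpos_of_nonneg_of_nonpos (le_of_lt hws) (le_of_lt hst)
  have hd1 : deriv w t₁ < 0 := lt_of_le_of_ne hd1le hd1ne
  rcases lt_or_eq_of_le htle with hcase | hcase
  · -- t₁ < t₀ + T : strict positivity of φ t₁ gives contradiction
    have hφ1 : 0 < φ t₁ := hφpos t₁ htlt hcase
    have : V t₁ = -(deriv w t₁) * φ t₁ := by simp [hV, hz1]
    nlinarith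
  · -- t₁ = t₀ + T
    have hφ1 : φ t₁ = 0 := by
      have hu1 : u t₁ = π := by
        rw [hu]; simp only; rw [hcase]; field_simp; ring
      rw [hφ]; simp only [hu1, Real.sin_pi]
    have hVt₁ : V t₁ = 0 := by simp [hV, hz1, hφ1]
    have hV0 : ∀ s ∈ Icc t₀ t₁, V s = 0 := by
      intro s hs
      have hle := hVanti (left_mem_Icc.2 (le_of_lt htlt)) hs hs.1
      have hge := hVanti hs (right_mem_Icc.2 (le_of_lt htlt)) hs.2
      rw [hVt₀] at hle; rw [hVt₁] at hge
      linarith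
    have hdV0 : ∀ s ∈ Ioo t₀ t₁, deriv V s = 0 := by
      intro s hs
      have hev : V =ᶠ[nhds s] (fun _ => (0:ℝ)) := by
        filter_upwards [Icc_mem_nhds hs.1 hs.2] with r hr
        exact hV0 r hr
      rw [hev.deriv_eq, deriv_const]
    have hqκ : ∀ᵐ s ∂(volume : Measure ℝ), s ∈ Ioo t₀ t₁ → q s = π ^ 2 / T ^ 2 := by
      filter_upwards [heq] with s he hs
      have h0 : deriv V s = 0 := hdV0 s hs
      rw [(hVd s).deriv, he] at h0
      have hwφ : 0 < w s * φ s := by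
        apply mul_pos (hpos s hs)
        exact hφpos s hs.1 (by rw [← hcase]; exact hs.2)
      have hfac : (q s - (π / T) ^ 2) * (w s * φ s) = 0 := by linear_combination h0
      rcases mul_eq_zero.1 hfac with h | h
      · rw [← hπT]; linarith
      · linarith
    have hbad : volume {s | ¬ (s ∈ Ioo t₀ t₁ → q s = π ^ 2 / T ^ 2)} = 0 := ae_iff.1 hqκ
    have hsub : {t ∈ Icc t₀ (t₀ + T) | q t < π ^ 2 / T ^ 2}
        ⊆ ({t₀, t₀ + T} : Set ℝ) ∪ {s | ¬ (s ∈ Ioo t₀ t₁ → q s = π ^ 2 / T ^ 2)} := by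
      rintro t ⟨ht, hq⟩
      rcases eq_or_lt_of_le ht.1 with h | h
      · exact Or.inl (Or.inl h.symm)
      rcases eq_or_lt_of_le ht.2 with h' | h'
      · exact Or.inl (Or.inr h')
      refine Or.inr ?_
      simp only [mem_setOf_eq, Classical.not_imp]
      exact ⟨⟨h, by rw [hcase]; exact h'⟩, ne_of_lt hq⟩
    have hz : volume ({t₀, t₀ + T} : Set ℝ) = 0 := by
      exact Set.Finite.measure_zero (Set.toFinite _) volume
    have : volume {t ∈ Icc t₀ (t₀ + T) | q t < π ^ 2 / T ^ 2} = 0 := by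
      apply measure_mono_null hsub
      exact measure_union_null hz hbad
    rw [this] at hstrict
    exact lt_irrefl 0 hstrict

lemma sturm {q w : ℝ → ℝ} {T K : ℝ} (hT : 0 < T) (hK : 0 ≤ K)
    (hqK : ∀ᵐ t ∂(volume : Measure ℝ), |q t| ≤ K)
    (hub : ∀ᵐ t ∂(volume : Measure ℝ), q t ≤ π ^ 2 / T ^ 2)
    {t₀ : ℝ}
    (hstrict : 0 < volume {t ∈ Icc t₀ (t₀ + T) | q t < π ^ 2 / T ^ 2})
    (hw : ContDiff ℝ 2 w)
    (heq : ∀ᵐ t ∂(volume : Measure ℝ), deriv (deriv w) t = -(q t * w t))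
    (hnz : ∃ s, w s ≠ 0)
    (hz0 : w t₀ = 0) (hzT : w (t₀ + T) = 0) : False := by
  obtain ⟨hw1, hw2, hw3⟩ := deriv2_continuous hw
  have hd0 : deriv w t₀ ≠ 0 := by
    intro h
    obtain ⟨s, hs⟩ := hnz
    exact hs (ode_uniq hK hqK hw heq hz0 h s)
  have hslope := hasDerivAt_iff_tendsto_slope.1 (hw1 t₀).hasDerivAt
  have hev : ∀ᶠ s in 𝓝[≠] t₀, slope w t₀ s ≠ 0 := hslope.eventually_ne hd0
  have hev2 : ∀ᶠ s in 𝓝[≠] t₀, w s ≠ 0 := by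
    filter_upwards [hev, self_mem_nhdsWithin] with s hs hmem
    intro hws
    apply hs
    rw [slope_def_field, hws, hz0]
    simp
  rw [eventually_nhdsWithin_iff] at hev2
  obtain ⟨ε, hε0, hε⟩ := Metric.eventually_nhds_iff.1 hev2
  have hεw : ∀ s : ℝ, |s - t₀| < ε → s ≠ t₀ → w s ≠ 0 := by
    intro s h1 h2
    exact hε (by rwa [Real.dist_eq]) h2
  have hεT : ε ≤ T := by
    by_contra h
    push_neg at h
    exact hεw (t₀ + T) (by rw [abs_of_pos] <;> linarith) (by intro hh; nlinarith [hT]) hzT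
  set Z := Icc (t₀ + ε / 2) (t₀ + T) ∩ w ⁻¹' {0} with hZ
  have hZc : IsClosed Z := isClosed_Icc.inter (isClosed_singleton.preimage hw1.continuous)
  have hZne : Z.Nonempty := ⟨t₀ + T, ⟨by constructor <;> linarith, by simpa using hzT⟩⟩
  have hZbdd : BddBelow Z := (bddBelow_Icc).mono (inter_subset_left)
  set t₁ := sInf Z with ht₁
  have ht₁mem : t₁ ∈ Z := hZc.csInf_mem hZne hZbdd
  have hz1 : w t₁ = 0 := by simpa using ht₁mem.2
  have htlt : t₀ < t₁ := by have := ht₁mem.1.1; linarith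
  have htle : t₁ ≤ t₀ + T := ht₁mem.1.2
  have hnozero : ∀ s ∈ Ioo t₀ t₁, w s ≠ 0 := by
    intro s hs hws
    rcases lt_or_ge (|s - t₀|) ε with h | h
    · exact hεw s h (by intro hh; rw [hh] at hs; exact lt_irrefl t₀ hs.1) hws
    · have hs2 : s ∈ Z := by
        refine ⟨⟨?_, ?_⟩, by simpa using hws⟩
        · rw [abs_of_pos (by linarith [hs.1])] at h; linarith
        · linarith [hs.2, htle]
      have := csInf_le hZbdd hs2
      rw [← ht₁] at this
      linarith [hs.2]
  -- sign dichotomy on Ioo t₀ t₁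
  have hsign : (∀ s ∈ Ioo t₀ t₁, 0 < w s) ∨ (∀ s ∈ Ioo t₀ t₁, w s < 0) := by
    by_contra hcon
    push_neg at hcon
    obtain ⟨⟨a, ha, ha0⟩, ⟨b, hb, hb0⟩⟩ := hcon
    have ha0' : w a < 0 := lt_of_le_of_ne ha0 (hnozero a ha)
    have hb0' : 0 < w b := lt_of_le_of_ne (by linarith) (Ne.symm (hnozero b hb))
    rcases le_total a b with hab | hab
    · obtain ⟨s, hs, hws⟩ := intermediate_value_Icc hab hw1.continuous.continuousOn
        (show (0:ℝ) ∈ Icc (w a) (w b) by constructor <;> linarith)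
      exact hnozero s ⟨lt_of_lt_of_le ha.1 hs.1, lt_of_le_of_lt hs.2 hb.2⟩ hws
    · obtain ⟨s, hs, hws⟩ := intermediate_value_Icc' hab hw1.continuous.continuousOn
        (show (0:ℝ) ∈ Icc (w a) (w b) by constructor <;> linarith)
      exact hnozero s ⟨lt_of_lt_of_le hb.1 hs.1, lt_of_le_of_lt hs.2 ha.2⟩ hws
  rcases hsign with hpos | hneg
  · exact sturm_core hT hK hqK hub hstrict hw heq hnz htlt htle hz0 hz1 hpos
  · -- apply core to -w
    have hw' : ContDiff ℝ 2 (fun t => -w t) := hw.neg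
    have hder : deriv (fun t => -w t) = fun t => -deriv w t := by
      funext t; exact deriv.neg
    have heq' : ∀ᵐ t ∂(volume : Measure ℝ),
        deriv (deriv (fun t => -w t)) t = -(q t * (-w t)) := by
      filter_upwards [heq] with t he
      rw [hder, deriv.fun_neg, he]; ring
    apply sturm_core hT hK hqK hub hstrict hw' heq'
      (hnz.imp fun s hs => by simpa using hs)
      htlt htle (by simpa using hz0) (by simpa using hz1)
    intro s hs
    simpa using hneg s hs


lemma intervalIntegrable_of_aebdd {q : ℝ → ℝ} (hm : Measurable q) {C : ℝ}
    (h : ∀ᵐ t ∂(volume : Measure ℝ), |q t| ≤ C) (a b : ℝ) :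
    IntervalIntegrable q volume a b := by
  have hfin : IsFiniteMeasure (volume.restrict (Set.uIoc a b)) :=
    ⟨by rw [Measure.restrict_apply_univ]; exact measure_Ioc_lt_top⟩
  have : IntegrableOn q (Set.uIoc a b) volume := by
    apply Integrable.mono' (integrable_const C) (hm.aestronglyMeasurable.restrict)
    exact ae_restrict_of_ae (h.mono fun t ht => by simpa using ht)
  exact (intervalIntegrable_iff).2 this

lemma no_real_multiplier {q z : ℝ → ℝ} {T K ρ : ℝ} (hT : 0 < T) (hK : 0 ≤ K)
    (hqm : Measurable q)
    (hqK : ∀ᵐ t ∂(volume : Measure ℝ), |q t| ≤ K)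
    (hub : ∀ᵐ t ∂(volume : Measure ℝ), q t ≤ π ^ 2 / T ^ 2)
    (hstrict0 : ∀ t₀ : ℝ, 0 < volume {t ∈ Icc t₀ (t₀ + T) | q t < π ^ 2 / T ^ 2})
    (hint : 0 < ∫ t in (0:ℝ)..T, q t)
    (hz : ContDiff ℝ 2 z)
    (heq : ∀ᵐ t ∂(volume : Measure ℝ), deriv (deriv z) t = -(q t * z t))
    (hnz : ∃ s, z s ≠ 0) (hρ : ρ ≠ 0)
    (hmul : ∀ t, z (t + T) = ρ * z t) : False := by
  by_cases hzero : ∃ t₀, z t₀ = 0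
  · obtain ⟨t₀, h0⟩ := hzero
    have hT0 : z (t₀ + T) = 0 := by rw [hmul, h0, mul_zero]
    exact sturm hT hK hqK hub (hstrict0 t₀) hz heq hnz h0 hT0
  · push_neg at hzero
    obtain ⟨hz1, hz2, hz3⟩ := deriv2_continuous hz
    set u : ℝ → ℝ := fun t => deriv z t / z t with hu
    have hud : ∀ t, HasDerivAt u
        ((deriv (deriv z) t * z t - deriv z t * deriv z t) / (z t) ^ 2) t := by
      intro t
      exact (hz2 t).hasDerivAt.div (hz1 t).hasDerivAt (hzero t)
    have huc : Continuous u := hz2.continuous.div hz1.continuous hzero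
    have hudc : Continuous (fun t => deriv u t) := by
      have he : (fun t => deriv u t)
          = fun t => (deriv (deriv z) t * z t - deriv z t * deriv z t) / (z t) ^ 2 :=
        funext fun t => (hud t).deriv
      rw [he]
      exact ((hz3.mul hz1.continuous).sub (hz2.continuous.mul hz2.continuous)).div
        (hz1.continuous.pow 2) (fun t => pow_ne_zero 2 (hzero t))
    have hmul' : ∀ t, deriv z (t + T) = ρ * deriv z t := by
      intro t
      have h1 : deriv (fun s => z (s + T)) t = deriv z (t + T) := by
        simp [deriv_comp_add_const]
      have h2 : (fun s => z (s + T)) = fun s => ρ * z s := funext hmul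
      rw [h2, deriv_const_mul _ (hz1 t)] at h1
      exact h1.symm
    have huT : u T = u 0 := by
      have hm1 := hmul' 0
      have hm2 := hmul 0
      rw [zero_add] at hm1 hm2
      rw [hu]; simp only
      rw [hm1, hm2, mul_div_mul_left _ _ hρ]
    have hFTC : ∫ t in (0:ℝ)..T, deriv u t = u T - u 0 :=
      intervalIntegral.integral_deriv_eq_sub (fun t _ => (hud t).differentiableAt)
        (hudc.intervalIntegrable 0 T)
    have haeu : ∀ᵐ t ∂(volume : Measure ℝ), deriv u t = -q t - (u t) ^ 2 := by
      filter_upwards [heq] with t he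
      rw [(hud t).deriv, he, hu]
      simp only
      field_simp [hzero t]
    have hcongr : ∫ t in (0:ℝ)..T, deriv u t = ∫ t in (0:ℝ)..T, (-q t - (u t) ^ 2) := by
      apply intervalIntegral.integral_congr_ae
      exact haeu.mono fun t ht _ => ht
    have hqint : IntervalIntegrable q volume 0 T := intervalIntegrable_of_aebdd hqm hqK 0 T
    have huint : IntervalIntegrable (fun t => (u t) ^ 2) volume 0 T :=
      (huc.pow 2).intervalIntegrable 0 T
    have hsplit := intervalIntegral.integral_sub hqint.neg huint
    simp only [Pi.neg_apply] at hsplit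
    rw [intervalIntegral.integral_neg] at hsplit
    have hu2nonneg : 0 ≤ ∫ t in (0:ℝ)..T, (u t) ^ 2 :=
      intervalIntegral.integral_nonneg (le_of_lt hT) (fun t _ => sq_nonneg _)
    rw [huT, sub_self, hcongr, hsplit] at hFTC
    linarith


lemma translate_hasDeriv {y : ℝ → ℝ} (hy1 : Differentiable ℝ y) (a t : ℝ) :
    HasDerivAt (fun s => y (s + a)) (deriv y (t + a)) t := by
  simpa [Function.comp_def] using ((hy1 (t + a)).hasDerivAt).comp t ((hasDerivAt_id t).add_const a)

lemma combo_sol {q y : ℝ → ℝ} {T : ℝ} (hqper : Function.Periodic q T)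
    (hy : ContDiff ℝ 2 y)
    (heqy : ∀ᵐ t ∂(volume : Measure ℝ), deriv (deriv y) t = -(q t * y t)) (A B C : ℝ) :
    ContDiff ℝ 2 (fun t => A * y (t + (T + T)) + B * y (t + T) + C * y t)
    ∧ (∀ t, deriv (fun t => A * y (t + (T + T)) + B * y (t + T) + C * y t) t
        = A * deriv y (t + (T + T)) + B * deriv y (t + T) + C * deriv y t)
    ∧ ∀ᵐ t ∂(volume : Measure ℝ),
        deriv (deriv (fun t => A * y (t + (T + T)) + B * y (t + T) + C * y t)) t
          = -(q t * (A * y (t + (T + T)) + B * y (t + T) + C * y t)) := by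
  obtain ⟨hy1, hy2, hy3⟩ := deriv2_continuous hy
  set w : ℝ → ℝ := fun t => A * y (t + (T + T)) + B * y (t + T) + C * y t with hw
  have hwd : ∀ t, HasDerivAt w
      (A * deriv y (t + (T + T)) + B * deriv y (t + T) + C * deriv y t) t := by
    intro t
    exact (((translate_hasDeriv hy1 (T + T) t).const_mul A).add
      ((translate_hasDeriv hy1 T t).const_mul B)).add ((hy1 t).hasDerivAt.const_mul C)
  have hwderiv : deriv w = fun t =>
      A * deriv y (t + (T + T)) + B * deriv y (t + T) + C * deriv y t :=
    funext fun t => (hwd t).deriv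
  have hC2 : ContDiff ℝ 2 w := by
    have htr : ∀ a : ℝ, ContDiff ℝ 2 (fun t : ℝ => y (t + a)) := fun a =>
      hy.comp (contDiff_id.add contDiff_const)
    exact ((contDiff_const.mul (htr (T + T))).add (contDiff_const.mul (htr T))).add
      (contDiff_const.mul hy)
  have hw2d : ∀ t, HasDerivAt (deriv w)
      (A * deriv (deriv y) (t + (T + T)) + B * deriv (deriv y) (t + T)
        + C * deriv (deriv y) t) t := by
    intro t
    rw [hwderiv]
    exact (((translate_hasDeriv hy2 (T + T) t).const_mul A).add
      ((translate_hasDeriv hy2 T t).const_mul B)).add ((hy2 t).hasDerivAt.const_mul C)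
  refine ⟨hC2, fun t => (hwd t).deriv, ?_⟩
  filter_upwards [heqy, ae_translate heqy T, ae_translate heqy (T + T)] with t h0 h1 h2
  rw [(hw2d t).deriv, h0, h1, h2]
  have hq1 : q (t + T) = q t := hqper t
  have hq2 : q (t + (T + T)) = q t := by
    have e : t + (T + T) = (t + T) + T := by ring
    rw [e, hqper (t + T), hqper t]
  rw [hq1, hq2]
  ring

lemma quad_low (D a b : ℝ) : (1 - |D| / 2) * (a ^ 2 + b ^ 2) ≤ a ^ 2 + b ^ 2 - D * a * b := by
  have h1 : D * a * b ≤ |D| * |a * b| := by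
    calc D * a * b = D * (a * b) := by ring
      _ ≤ |D * (a * b)| := le_abs_self _
      _ = |D| * |a * b| := abs_mul _ _
  have h2 : |a * b| ≤ (a ^ 2 + b ^ 2) / 2 := by
    rw [abs_mul]
    nlinarith [sq_nonneg (|a| - |b|), sq_abs a, sq_abs b]
  nlinarith [abs_nonneg D]

lemma quad_high {D : ℝ} (a b : ℝ) (h : |D| ≤ 2) :
    a ^ 2 + b ^ 2 - D * a * b ≤ 2 * (a ^ 2 + b ^ 2) := by
  have h1 : -(D * a * b) ≤ |D| * |a * b| := by
    calc -(D * a * b) = -(D * (a * b)) := by ring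
      _ ≤ |D * (a * b)| := neg_le_abs _
      _ = |D| * |a * b| := abs_mul _ _
  have h2 : |a * b| ≤ (a ^ 2 + b ^ 2) / 2 := by
    rw [abs_mul]
    nlinarith [sq_nonneg (|a| - |b|), sq_abs a, sq_abs b]
  nlinarith [abs_nonneg (a * b), abs_nonneg D]

lemma quad_pos {D a b : ℝ} (h : |D| < 2) (hab : 0 < a ^ 2 + b ^ 2) :
    0 < a ^ 2 + b ^ 2 - D * a * b := by
  have := quad_low D a b
  nlinarith [abs_nonneg D]

/-- Under `α ≪ π²/T² + c²/4` and average of `α` greater than `c²/4`, every nontrivial solution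
of `x'' + c x' + α x = 0` decays at the exact exponential rate `c/2`. -/
theorem stmt7 (c T : ℝ) (hc : 0 < c) (hT : 0 < T) (α : ℝ → ℝ) (hmeas : Measurable α)
    (hper : Function.Periodic α T)
    (hbdd : ∃ C : ℝ, ∀ᵐ t ∂(volume : Measure ℝ), |α t| ≤ C)
    (hub : ∀ᵐ t ∂(volume : Measure ℝ), α t ≤ π ^ 2 / T ^ 2 + c ^ 2 / 4)
    (hstrict : 0 < volume {t ∈ Icc (0 : ℝ) T | α t < π ^ 2 / T ^ 2 + c ^ 2 / 4})
    (havg : c ^ 2 / 4 < (1 / T) * ∫ t in (0 : ℝ)..T, α t)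
    (x : ℝ → ℝ) (hx : ContDiff ℝ 2 x) (hnontriv : ∃ t, x t ≠ 0)
    (hode : ∀ᵐ t ∂(volume : Measure ℝ),
      deriv (deriv x) t + c * deriv x t + α t * x t = 0) :
    ∃ C₁ C₂ : ℝ, 0 < C₁ ∧ C₁ ≤ C₂ ∧ ∀ t ≥ (0 : ℝ),
      C₁ * Real.exp (-(c / 2) * t) ≤
          sSup ((fun s => |x s| + |deriv x s|) '' Icc t (t + T)) ∧
        sSup ((fun s => |x s| + |deriv x s|) '' Icc t (t + T)) ≤
          C₂ * Real.exp (-(c / 2) * t) := by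
  classical
  obtain ⟨Cb, hCb⟩ := hbdd
  set q : ℝ → ℝ := fun t => α t - c ^ 2 / 4 with hq
  have hqm : Measurable q := hmeas.sub measurable_const
  set Kq : ℝ := |Cb| + c ^ 2 / 4 with hKq
  have hKq0 : 0 ≤ Kq := by positivity
  have hqK : ∀ᵐ t ∂(volume : Measure ℝ), |q t| ≤ Kq := by
    filter_upwards [hCb] with t ht
    have h1 : |q t| ≤ |α t| + |c ^ 2 / 4| := abs_sub _ _
    have h2 : |c ^ 2 / 4| = c ^ 2 / 4 := abs_of_nonneg (by positivity)
    have h3 : Cb ≤ |Cb| := le_abs_self Cb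
    rw [hKq]; rw [h2] at h1; linarith
  have hqper : Function.Periodic q T := by
    intro t; simp only [hq]; rw [hper t]
  have hub' : ∀ᵐ t ∂(volume : Measure ℝ), q t ≤ π ^ 2 / T ^ 2 := by
    filter_upwards [hub] with t ht
    simp only [hq]; linarith
  have hstrict0 : ∀ t₀ : ℝ, 0 < volume {t ∈ Icc t₀ (t₀ + T) | q t < π ^ 2 / T ^ 2} := by
    intro t₀
    rw [periodic_set_measure hqm hT hqper (π ^ 2 / T ^ 2) t₀]
    have hbase : {t ∈ Icc (0:ℝ) T | q t < π ^ 2 / T ^ 2}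
        = {t ∈ Icc (0:ℝ) T | α t < π ^ 2 / T ^ 2 + c ^ 2 / 4} := by
      ext t
      simp only [mem_setOf_eq, hq]
      constructor
      · rintro ⟨h1, h2⟩; exact ⟨h1, by linarith⟩
      · rintro ⟨h1, h2⟩; exact ⟨h1, by linarith⟩
    rw [hbase]; exact hstrict
  have hαint : IntervalIntegrable α volume 0 T := intervalIntegrable_of_aebdd hmeas hCb 0 T
  have hint : 0 < ∫ t in (0:ℝ)..T, q t := by
    have h1 : ∫ t in (0:ℝ)..T, q t
        = (∫ t in (0:ℝ)..T, α t) - ∫ t in (0:ℝ)..T, (c ^ 2 / 4) := by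
      rw [← intervalIntegral.integral_sub hαint (intervalIntegrable_const)]
    have h2 : ∫ t in (0:ℝ)..T, (c ^ 2 / 4 : ℝ) = (T - 0) * (c ^ 2 / 4) := by
      rw [intervalIntegral.integral_const]; simp [smul_eq_mul]
    rw [h1, h2]
    have h3 : T * (c ^ 2 / 4) < ∫ t in (0:ℝ)..T, α t := by
      have := mul_lt_mul_of_pos_left havg hT
      rw [show T * (1 / T * ∫ t in (0:ℝ)..T, α t) = ∫ t in (0:ℝ)..T, α t by
        field_simp] at this
      linarith
    linarith
  clear_value q Kq
  -- the substituted solution y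
  obtain ⟨hx1, hx2, hx3⟩ := deriv2_continuous hx
  set y : ℝ → ℝ := fun t => Real.exp (c / 2 * t) * x t with hy
  have hexp : ∀ t, HasDerivAt (fun t => Real.exp (c / 2 * t))
      ((c / 2) * Real.exp (c / 2 * t)) t := by
    intro t
    have h : HasDerivAt (fun t : ℝ => c / 2 * t) (c / 2) t := by
      simpa using (hasDerivAt_id t).const_mul (c / 2)
    have h2 := h.exp
    simpa [mul_comm] using h2
  have hyC2 : ContDiff ℝ 2 y :=
    (Real.contDiff_exp.comp (contDiff_const.mul contDiff_id)).mul hx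
  obtain ⟨hy1, hy2, hy3⟩ := deriv2_continuous hyC2
  have hyd : ∀ t, HasDerivAt y (Real.exp (c / 2 * t) * ((c / 2) * x t + deriv x t)) t := by
    intro t
    have h := (hexp t).mul (hx1 t).hasDerivAt
    exact h.congr_deriv (by ring)
  have hyderiv : deriv y = fun t => Real.exp (c / 2 * t) * ((c / 2) * x t + deriv x t) :=
    funext fun t => (hyd t).deriv
  have hydd : ∀ t, HasDerivAt (deriv y)
      (Real.exp (c / 2 * t) * (c ^ 2 / 4 * x t + c * deriv x t + deriv (deriv x) t)) t := by
    intro t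
    rw [hyderiv]
    have hg : HasDerivAt (fun t => (c / 2) * x t + deriv x t)
        ((c / 2) * deriv x t + deriv (deriv x) t) t :=
      ((hx1 t).hasDerivAt.const_mul (c / 2)).add (hx2 t).hasDerivAt
    have h := (hexp t).mul hg
    exact h.congr_deriv (by ring)
  have heqy : ∀ᵐ t ∂(volume : Measure ℝ), deriv (deriv y) t = -(q t * y t) := by
    filter_upwards [hode] with t ht
    rw [(hydd t).deriv]
    simp only [hy, hq]
    linear_combination Real.exp (c / 2 * t) * ht
  have hynz : ∃ s, y s ≠ 0 := by
    obtain ⟨s, hs⟩ := hnontriv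
    exact ⟨s, mul_ne_zero (Real.exp_ne_zero _) hs⟩
  have hyns : ∀ s, ¬(y s = 0 ∧ deriv y s = 0) := by
    rintro s ⟨h1, h2⟩
    obtain ⟨r, hr⟩ := hynz
    exact hr (ode_uniq hKq0 hqK hyC2 heqy h1 h2 r)
  clear_value y
  -- cross-Wronskian identity and the constant D
  have hyTC2 : ContDiff ℝ 2 (fun t => y (t + T)) := hyC2.comp (contDiff_id.add contDiff_const)
  have hyTd : deriv (fun t => y (t + T)) = fun t => deriv y (t + T) :=
    funext fun t => (translate_hasDeriv hy1 T t).deriv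
  have heqyT : ∀ᵐ t ∂(volume : Measure ℝ),
      deriv (deriv (fun t => y (t + T))) t = -(q t * (fun t => y (t + T)) t) := by
    filter_upwards [ae_translate heqy T] with t ht
    have h1 : deriv (deriv (fun t => y (t + T))) t = deriv (deriv y) (t + T) := by
      rw [hyTd]; exact (translate_hasDeriv hy2 T t).deriv
    rw [h1, ht, hqper t]
  have hWc := wronskian_const hyC2 hyTC2 heqy heqyT T 0
  simp only [hyTd, zero_add] at hWc
  set v1 := y (T + T) + y 0 with hv1
  set v2 := deriv y (T + T) + deriv y 0 with hv2
  have hcross : y T * v2 - deriv y T * v1 = 0 := by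
    rw [hv1, hv2]; linear_combination hWc
  set D := if y T = 0 then v2 / deriv y T else v1 / y T with hD
  have hDfacts : v1 = D * y T ∧ v2 = D * deriv y T := by
    by_cases hyT : y T = 0
    · have hdyT : deriv y T ≠ 0 := fun h => hyns T ⟨hyT, h⟩
      rw [hD, if_pos hyT]
      constructor
      · rw [hyT, mul_zero]
        have h := hcross
        rw [hyT] at h
        have h2 : deriv y T * v1 = 0 := by linarith
        rcases mul_eq_zero.1 h2 with h3 | h3
        · exact absurd h3 hdyT
        · exact h3
      · rw [div_mul_cancel₀ _ hdyT]
    · rw [hD, if_neg hyT]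
      refine ⟨(div_mul_cancel₀ _ hyT).symm, ?_⟩
      rw [div_mul_eq_mul_div, eq_div_iff hyT]
      linear_combination hcross
  obtain ⟨hD1, hD2⟩ := hDfacts
  clear_value D
  -- the recurrence y(t+2T) = D y(t+T) - y(t)
  obtain ⟨hwC2, hwd, hweq⟩ := combo_sol hqper hyC2 heqy 1 (-D) 1
  have hw0 : (fun t => 1 * y (t + (T + T)) + (-D) * y (t + T) + 1 * y t) 0 = 0 := by
    simp only [zero_add, one_mul, neg_mul]
    rw [hv1] at hD1; linarith
  have hw0' : deriv (fun t => 1 * y (t + (T + T)) + (-D) * y (t + T) + 1 * y t) 0 = 0 := by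
    rw [hwd 0]
    simp only [zero_add, one_mul, neg_mul]
    rw [hv2] at hD2; linarith
  have hwzero := ode_uniq hKq0 hqK hwC2 hweq hw0 hw0'
  have hrec : ∀ t, y (t + (T + T)) = D * y (t + T) - y t := by
    intro t
    have h := hwzero t
    simp only [one_mul, neg_mul] at h
    linarith
  -- |D| < 2
  have hDlt : |D| < 2 := by
    by_contra hcon
    push_neg at hcon
    have hD4 : 4 ≤ D ^ 2 := by nlinarith [sq_abs D]
    set ρ := (D + Real.sqrt (D ^ 2 - 4)) / 2 with hρ
    have hsq : Real.sqrt (D ^ 2 - 4) ^ 2 = D ^ 2 - 4 := Real.sq_sqrt (by linarith)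
    have hquad : ρ ^ 2 - D * ρ + 1 = 0 := by
      rw [hρ]; linear_combination (1/4 : ℝ) * hsq
    clear_value ρ
    have hρne : ρ ≠ 0 := by
      intro h; rw [h] at hquad; norm_num at hquad
    have hmul1 : ρ * (D - ρ) = 1 := by linear_combination -hquad
    have hρinv : ρ⁻¹ = D - ρ := inv_eq_of_mul_eq_one_right hmul1
    obtain ⟨hzC2, hzd, hzeq⟩ := combo_sol hqper hyC2 heqy 0 1 (-ρ⁻¹)
    set z : ℝ → ℝ := fun t => 0 * y (t + (T + T)) + 1 * y (t + T) + (-ρ⁻¹) * y t with hz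
    have hzval : ∀ t, z t = y (t + T) - ρ⁻¹ * y t := by
      intro t; simp only [hz, zero_mul, one_mul, neg_mul, zero_add]; ring
    have hzmul : ∀ t, z (t + T) = ρ * z t := by
      intro t
      rw [hzval, hzval]
      have e : t + T + T = t + (T + T) := by ring
      rw [e, hrec t]
      have hinv : ρ * ρ⁻¹ = 1 := mul_inv_cancel₀ hρne
      linear_combination (-(y (t + T))) * hρinv + (y t) * hinv
    by_cases hznz : ∃ s, z s ≠ 0
    · exact no_real_multiplier hT hKq0 hqm hqK hub' hstrict0 hint hzC2 hzeq hznz hρne hzmul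
    · push_neg at hznz
      have hymul : ∀ t, y (t + T) = ρ⁻¹ * y t := by
        intro t
        have h := hznz t
        rw [hzval] at h
        linarith [sub_eq_zero.1 h]
      exact no_real_multiplier hT hKq0 hqm hqK hub' hstrict0 hint hyC2 heqy hynz
        (inv_ne_zero hρne) hymul
  -- the periodic invariant Q
  set Q : ℝ → ℝ := fun t => y t ^ 2 + y (t + T) ^ 2 - D * y t * y (t + T) with hQ
  have hQper : Function.Periodic Q T := by
    intro t
    simp only [hQ]
    have e : t + T + T = t + (T + T) := by ring
    rw [e, hrec t]
    ring
  have hQcont : Continuous Q := by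
    have hyc : Continuous y := hy1.continuous
    have hyTc : Continuous (fun t => y (t + T)) := hyc.comp (continuous_id.add continuous_const)
    exact ((hyc.pow 2).add (hyTc.pow 2)).sub ((continuous_const.mul hyc).mul hyTc)
  have hQgeq : ∀ t, (1 - |D| / 2) * (y t ^ 2 + y (t + T) ^ 2) ≤ Q t := by
    intro t
    simp only [hQ]
    exact quad_low D (y t) (y (t + T))
  have hQle : ∀ t, Q t ≤ 2 * (y t ^ 2 + y (t + T) ^ 2) := by
    intro t
    simp only [hQ]
    exact quad_high (y t) (y (t + T)) (le_of_lt hDlt)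
  have hQpos : ∀ t, 0 < Q t := by
    intro t
    have hnot : ¬(y t = 0 ∧ y (t + T) = 0) := by
      rintro ⟨h1, h2⟩
      exact sturm hT hKq0 hqK hub' (hstrict0 t) hyC2 heqy hynz h1 h2
    have h4 : 0 < y t ^ 2 + y (t + T) ^ 2 := by
      rcases not_and_or.1 hnot with h | h
      · have : 0 < y t ^ 2 := by positivity
        nlinarith [sq_nonneg (y (t + T))]
      · have : 0 < y (t + T) ^ 2 := by positivity
        nlinarith [sq_nonneg (y t)]
    exact quad_pos hDlt h4
  clear_value Q
  obtain ⟨tm, htm, hminOn⟩ := isCompact_Icc.exists_isMinOn (nonempty_Icc.2 (le_of_lt hT))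
    hQcont.continuousOn
  obtain ⟨tM, htM, hmaxOn⟩ := isCompact_Icc.exists_isMaxOn (nonempty_Icc.2 (le_of_lt hT))
    hQcont.continuousOn
  have hQbounds : ∀ t, Q tm ≤ Q t ∧ Q t ≤ Q tM := by
    intro t
    obtain ⟨s, hs, hQs⟩ := hQper.exists_mem_Ico₀ hT t
    rw [hQs]
    exact ⟨hminOn (Ico_subset_Icc_self hs), hmaxOn (Ico_subset_Icc_self hs)⟩
  have hm0 : 0 < Q tm := hQpos tm
  have h1D : 0 < 1 - |D| / 2 := by linarith
  -- bound |y| everywhere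
  set B := Real.sqrt (Q tM / (1 - |D| / 2)) with hB
  have hB0 : 0 ≤ B := hB ▸ Real.sqrt_nonneg _
  clear_value B
  have hyB : ∀ t, |y t| ≤ B := by
    intro t
    rw [hB, show |y t| = Real.sqrt ((y t) ^ 2) from (Real.sqrt_sq_eq_abs _).symm]
    apply Real.sqrt_le_sqrt
    rw [le_div_iff₀ h1D]
    have h1 := hQgeq t
    have h2 := (hQbounds t).2
    have h3 : 0 ≤ (1 - |D| / 2) * (y (t + T) ^ 2) :=
      mul_nonneg (le_of_lt h1D) (sq_nonneg _)
    linarith only [h1, h2, h3]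
  -- bound |y''| everywhere
  have hyddB : ∀ t, |deriv (deriv y) t| ≤ Kq * B := by
    have hcont : Continuous (fun t => |deriv (deriv y) t| - Kq * B) :=
      hy3.abs.sub continuous_const
    have hae : ∀ᵐ t ∂(volume : Measure ℝ), |deriv (deriv y) t| - Kq * B ≤ 0 := by
      filter_upwards [heqy, hqK] with t h1 h2
      rw [h1, abs_neg, abs_mul]
      have h3 : |q t| * |y t| ≤ Kq * B :=
        mul_le_mul h2 (hyB t) (abs_nonneg _) hKq0
      linarith only [h3]
    intro t
    have h6 := ae_le_all hcont hae t
    have h7 : |deriv (deriv y) t| - Kq * B ≤ 0 := h6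
    linarith only [h7]
  -- bound |y'| everywhere
  have hy'B : ∀ t, |deriv y t| ≤ 2 * B + Kq * B := by
    intro t
    obtain ⟨ξ, hξ, hsl⟩ := exists_deriv_eq_slope y (show t < t + 1 by linarith only [])
      hy1.continuous.continuousOn hy1.differentiableOn
    have h1 : |deriv y ξ| ≤ 2 * B := by
      rw [hsl, show t + 1 - t = (1 : ℝ) by ring, div_one]
      calc |y (t + 1) - y t| ≤ |y (t + 1)| + |y t| := abs_sub _ _
        _ ≤ 2 * B := by linarith only [hyB (t + 1), hyB t]
    obtain ⟨η, hη, hsl2⟩ := exists_deriv_eq_slope (deriv y) hξ.1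
      hy2.continuous.continuousOn hy2.differentiableOn
    have hξt : ξ - t ≠ 0 := sub_ne_zero.2 (ne_of_gt hξ.1)
    have h2 : deriv y ξ - deriv y t = deriv (deriv y) η * (ξ - t) := by
      rw [hsl2, div_mul_cancel₀ _ hξt]
    have h3 : |deriv y ξ - deriv y t| ≤ Kq * B := by
      rw [h2, abs_mul]
      have h4 : |ξ - t| ≤ 1 := by
        rw [abs_of_pos (sub_pos.2 hξ.1)]
        linarith only [hξ.2]
      calc |deriv (deriv y) η| * |ξ - t| ≤ (Kq * B) * 1 :=
            mul_le_mul (hyddB η) h4 (abs_nonneg _) (mul_nonneg hKq0 hB0)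
        _ = Kq * B := mul_one _
    calc |deriv y t| = |deriv y ξ - (deriv y ξ - deriv y t)| :=
          (congrArg abs (sub_sub_cancel _ _)).symm
      _ ≤ |deriv y ξ| + |deriv y ξ - deriv y t| := abs_sub _ _
      _ ≤ 2 * B + Kq * B := add_le_add h1 h3
  -- lower bound
  set δ := Real.sqrt (Q tm / 4) with hδ
  have hδ0 : 0 < δ := hδ ▸ Real.sqrt_pos.2 (div_pos hm0 (by norm_num))
  clear_value δ
  have hlow : ∀ t, δ ≤ |y t| ∨ δ ≤ |y (t + T)| := by
    intro t
    rcases le_total ((y t) ^ 2) ((y (t + T)) ^ 2) with h | h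
    · right
      rw [hδ, show |y (t + T)| = Real.sqrt ((y (t + T)) ^ 2) from (Real.sqrt_sq_eq_abs _).symm]
      apply Real.sqrt_le_sqrt
      linarith only [h, (hQbounds t).1, hQle t]
    · left
      rw [hδ, show |y t| = Real.sqrt ((y t) ^ 2) from (Real.sqrt_sq_eq_abs _).symm]
      apply Real.sqrt_le_sqrt
      linarith only [h, (hQbounds t).1, hQle t]
  -- express x in terms of y
  have hxval : ∀ s, x s = Real.exp (-(c / 2) * s) * y s := by
    intro s
    simp only [hy]
    rw [← mul_assoc, ← Real.exp_add, show -(c / 2) * s + c / 2 * s = 0 by ring,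
      Real.exp_zero, one_mul]
  have hx'val : ∀ s, deriv x s = Real.exp (-(c / 2) * s) * (deriv y s - (c / 2) * y s) := by
    intro s
    have hE : Real.exp (-(c / 2) * s) * Real.exp (c / 2 * s) = 1 := by
      rw [← Real.exp_add, show -(c / 2) * s + c / 2 * s = 0 by ring, Real.exp_zero]
    rw [hyderiv]
    simp only [hy]
    linear_combination (-(deriv x s)) * hE
  -- final constants
  set C₁ := Real.exp (-(c / 2) * T) * δ with hC₁
  set C₂ := B + ((2 * B + Kq * B) + (c / 2) * B) with hC₂
  have hC₁0 : 0 < C₁ := hC₁ ▸ mul_pos (Real.exp_pos _) hδ0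
  clear_value C₁ C₂
  have hgc : Continuous (fun s => |x s| + |deriv x s|) :=
    (hx1.continuous.abs).add (hx2.continuous.abs)
  have hbddA : ∀ t : ℝ, BddAbove ((fun s => |x s| + |deriv x s|) '' Icc t (t + T)) :=
    fun t => (isCompact_Icc.image_of_continuousOn hgc.continuousOn).bddAbove
  have hupper : ∀ t, 0 ≤ t →
      sSup ((fun s => |x s| + |deriv x s|) '' Icc t (t + T)) ≤ C₂ * Real.exp (-(c / 2) * t) := by
    intro t ht
    apply csSup_le ((nonempty_Icc.2 (by linarith only [hT])).image _)
    rintro r ⟨s, hs, rfl⟩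
    have hse : Real.exp (-(c / 2) * s) ≤ Real.exp (-(c / 2) * t) := by
      apply Real.exp_le_exp.2
      have h0 : (c / 2) * t ≤ (c / 2) * s :=
        mul_le_mul_of_nonneg_left hs.1 (by positivity)
      linarith only [h0]
    have hes : 0 < Real.exp (-(c / 2) * s) := Real.exp_pos _
    have het : 0 < Real.exp (-(c / 2) * t) := Real.exp_pos _
    have h1 : |x s| ≤ Real.exp (-(c / 2) * s) * B := by
      rw [hxval s, abs_mul, abs_of_pos hes]
      exact mul_le_mul_of_nonneg_left (hyB s) (le_of_lt hes)
    have h2 : |deriv x s| ≤ Real.exp (-(c / 2) * s) * ((2 * B + Kq * B) + (c / 2) * B) := by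
      rw [hx'val s, abs_mul, abs_of_pos hes]
      apply mul_le_mul_of_nonneg_left _ (le_of_lt hes)
      calc |deriv y s - (c / 2) * y s| ≤ |deriv y s| + |(c / 2) * y s| := abs_sub _ _
        _ = |deriv y s| + (c / 2) * |y s| := by
            rw [abs_mul, abs_of_pos (by positivity : (0:ℝ) < c / 2)]
        _ ≤ (2 * B + Kq * B) + (c / 2) * B := by
            have h5 : (c / 2) * |y s| ≤ (c / 2) * B :=
              mul_le_mul_of_nonneg_left (hyB s) (by positivity)
            linarith only [hy'B s, h5]
    have hnn : (0:ℝ) ≤ B + ((2 * B + Kq * B) + (c / 2) * B) := by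
      have h7 : 0 ≤ Kq * B := mul_nonneg hKq0 hB0
      have h8 : 0 ≤ (c / 2) * B := mul_nonneg (by positivity) hB0
      linarith only [hB0, h7, h8]
    calc |x s| + |deriv x s|
        ≤ Real.exp (-(c / 2) * s) * (B + ((2 * B + Kq * B) + (c / 2) * B)) := by
          rw [mul_add]; exact add_le_add h1 h2
      _ ≤ Real.exp (-(c / 2) * t) * (B + ((2 * B + Kq * B) + (c / 2) * B)) :=
          mul_le_mul_of_nonneg_right hse hnn
      _ = C₂ * Real.exp (-(c / 2) * t) := by rw [hC₂]; ring
  have hlower : ∀ t, 0 ≤ t →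
      C₁ * Real.exp (-(c / 2) * t) ≤
        sSup ((fun s => |x s| + |deriv x s|) '' Icc t (t + T)) := by
    intro t ht
    have het : 0 < Real.exp (-(c / 2) * t) := Real.exp_pos _
    have heT1 : Real.exp (-(c / 2) * T) ≤ 1 := by
      rw [show (1:ℝ) = Real.exp 0 from (Real.exp_zero).symm]
      apply Real.exp_le_exp.2
      have h0 : (0:ℝ) ≤ (c / 2) * T := by positivity
      linarith only [h0]
    rcases hlow t with h | h
    · have hmem : t ∈ Icc t (t + T) := left_mem_Icc.2 (by linarith only [hT])
      have hle : C₁ * Real.exp (-(c / 2) * t) ≤ |x t| + |deriv x t| := by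
        have h1 : |x t| = Real.exp (-(c / 2) * t) * |y t| := by
          rw [hxval t, abs_mul, abs_of_pos het]
        have h2 : C₁ * Real.exp (-(c / 2) * t) ≤ Real.exp (-(c / 2) * t) * |y t| := by
          rw [hC₁]
          have e1 : Real.exp (-(c / 2) * T) * δ ≤ δ := mul_le_of_le_one_left hδ0.le heT1
          calc Real.exp (-(c / 2) * T) * δ * Real.exp (-(c / 2) * t)
              ≤ δ * Real.exp (-(c / 2) * t) := mul_le_mul_of_nonneg_right e1 het.le
            _ ≤ |y t| * Real.exp (-(c / 2) * t) := mul_le_mul_of_nonneg_right h het.le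
            _ = Real.exp (-(c / 2) * t) * |y t| := mul_comm _ _
        rw [← h1] at h2
        linarith only [h2, abs_nonneg (deriv x t)]
      exact le_trans hle (le_csSup (hbddA t) ⟨t, hmem, rfl⟩)
    · have hmem : t + T ∈ Icc t (t + T) := right_mem_Icc.2 (by linarith only [hT])
      have hle : C₁ * Real.exp (-(c / 2) * t) ≤ |x (t + T)| + |deriv x (t + T)| := by
        have h1 : |x (t + T)| = Real.exp (-(c / 2) * (t + T)) * |y (t + T)| := by
          rw [hxval (t + T), abs_mul, abs_of_pos (Real.exp_pos _)]
        have hsplit : Real.exp (-(c / 2) * (t + T))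
            = Real.exp (-(c / 2) * t) * Real.exp (-(c / 2) * T) := by
          rw [← Real.exp_add]; congr 1; ring
        have h2 : C₁ * Real.exp (-(c / 2) * t) ≤ Real.exp (-(c / 2) * (t + T)) * |y (t + T)| := by
          rw [hC₁, hsplit]
          calc Real.exp (-(c / 2) * T) * δ * Real.exp (-(c / 2) * t)
              = (Real.exp (-(c / 2) * t) * Real.exp (-(c / 2) * T)) * δ := by ring
            _ ≤ (Real.exp (-(c / 2) * t) * Real.exp (-(c / 2) * T)) * |y (t + T)| :=
                mul_le_mul_of_nonneg_left h (by positivity)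
        rw [← h1] at h2
        linarith only [h2, abs_nonneg (deriv x (t + T))]
      exact le_trans hle (le_csSup (hbddA t) ⟨t + T, hmem, rfl⟩)
  refine ⟨C₁, C₂, hC₁0, ?_, fun t ht => ⟨hlower t ht, hupper t ht⟩⟩
  have h1 := hlower 0 le_rfl
  have h2 := hupper 0 le_rfl
  rw [show -(c / 2) * (0:ℝ) = 0 by ring, Real.exp_zero, mul_one] at h1 h2
  linarith only [h1, h2]
end

section
/- If α is T-periodic and continuous with α(t) ≤ π²/T² + c²/4 (strict on a positive-measure set) and (1/T)∫₀^T α > c²/4, where c > 0, then the Dirichlet problem u'' + (α(t) − c²/4)u = 0, u(t₀) = u(t₀ + T) = 0 has only the trivial solution, for any t₀ ∈ ℝ. -/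
open Real MeasureTheory Set

lemma aux_reg (u : ℝ → ℝ) (hu : ContDiff ℝ 2 u) :
    Differentiable ℝ u ∧ Differentiable ℝ (deriv u) ∧ Continuous (deriv (deriv u)) := by
  have h2 : ContDiff ℝ (1 + 1 : ℕ) u := by exact_mod_cast hu
  rw [show ((1+1 : ℕ) : WithTop ℕ∞) = (1:WithTop ℕ∞) + 1 by norm_cast] at h2
  have h := contDiff_succ_iff_deriv.mp h2
  exact ⟨h.1, (h.2.2.differentiable one_ne_zero), (contDiff_one_iff_deriv.mp h.2.2).2⟩

lemma key_lemma (a b : ℝ) (hab : a < b) (U : ℝ → ℝ) (hU : ContDiff ℝ 2 U)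
    (hUa : U a = 0) (hUb : U b = 0) (hUpos : ∀ t ∈ Ioo a b, 0 < U t)
    (p : ℝ → ℝ) (hp : Continuous p)
    (hode : ∀ t ∈ Icc a b, deriv (deriv U) t + p t * U t = 0)
    (hple : ∀ t ∈ Icc a b, p t ≤ (π / (b - a)) ^ 2)
    (s : ℝ) (hs : s ∈ Ioo a b) (hslt : p s < (π / (b - a)) ^ 2) : False := by
  obtain ⟨hU1, hU2, hU3⟩ := aux_reg U hU
  have hba : 0 < b - a := by linarith
  set k : ℝ := π / (b - a) with hk
  have hkpos : 0 < k := div_pos pi_pos hba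
  set v : ℝ → ℝ := fun t => Real.sin (k * (t - a)) with hv
  set v' : ℝ → ℝ := fun t => Real.cos (k * (t - a)) * k with hv'
  have hlin : ∀ t : ℝ, HasDerivAt (fun t => k * (t - a)) k t := by
    intro t
    simpa using ((hasDerivAt_id t).sub_const a).const_mul k
  have hdv : ∀ t : ℝ, HasDerivAt v (v' t) t := fun t =>
    (Real.hasDerivAt_sin _).comp t (hlin t)
  have hdv' : ∀ t : ℝ, HasDerivAt v' (-Real.sin (k * (t - a)) * k * k) t := fun t =>
    ((Real.hasDerivAt_cos _).comp t (hlin t)).mul_const k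
  set W : ℝ → ℝ := fun t => deriv U t * v t - U t * v' t with hW
  set f : ℝ → ℝ := fun t => deriv (deriv U) t * v t + k ^ 2 * (U t * v t) with hf
  have hdW : ∀ t : ℝ, HasDerivAt W (f t) t := by
    intro t
    have h := (((hU2 t).hasDerivAt).mul (hdv t)).sub (((hU1 t).hasDerivAt).mul (hdv' t))
    convert h using 1
    · rfl
    · rfl
    · rfl
    simp only [hf, hv, hv']
    ring
  have hfc : Continuous f := by
    apply Continuous.add (hU3.mul (by fun_prop))
    exact continuous_const.mul (hU1.continuous.mul (by fun_prop))
  have hftc : ∫ t in a..b, f t = 0 := by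
    rw [intervalIntegral.integral_eq_sub_of_hasDerivAt
      (fun t _ => hdW t) (hfc.intervalIntegrable a b)]
    have hva : v a = 0 := by simp [hv]
    have hvb : v b = 0 := by
      simp only [hv]
      rw [show k * (b - a) = π by rw [hk, div_mul_cancel₀ _ hba.ne']]
      exact Real.sin_pi
    simp [hW, hva, hvb, hUa, hUb]
  -- nonnegativity of U and v on Icc
  have hUnn : ∀ t ∈ Icc a b, 0 ≤ U t := by
    intro t ht
    rcases eq_or_lt_of_le ht.1 with h | h
    · simp [← h, hUa]
    rcases eq_or_lt_of_le ht.2 with h' | h'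
    · simp [h', hUb]
    exact (hUpos t ⟨h, h'⟩).le
  have hvnn : ∀ t ∈ Icc a b, 0 ≤ v t := by
    intro t ht
    apply Real.sin_nonneg_of_nonneg_of_le_pi
    · have : 0 ≤ t - a := by linarith [ht.1]
      positivity
    · have h1 : k * (t - a) ≤ k * (b - a) := by
        apply mul_le_mul_of_nonneg_left _ hkpos.le
        linarith [ht.2]
      have h2 : k * (b - a) = π := by rw [hk, div_mul_cancel₀ _ hba.ne']
      linarith
  have hfid : ∀ t ∈ Icc a b, f t = (k ^ 2 - p t) * (U t * v t) := by
    intro t ht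
    have he : deriv (deriv U) t = -(p t * U t) := by linarith [hode t ht]
    simp only [hf, he]; ring
  have hfnn : ∀ t ∈ Icc a b, 0 ≤ f t := by
    intro t ht
    rw [hfid t ht]
    exact mul_nonneg (by linarith [hple t ht])
      (mul_nonneg (hUnn t ht) (hvnn t ht))
  have hvs : 0 < v s := by
    apply Real.sin_pos_of_pos_of_lt_pi
    · have : 0 < s - a := by linarith [hs.1]
      positivity
    · have h1 : k * (s - a) < k * (b - a) := by
        apply mul_lt_mul_of_pos_left _ hkpos
        linarith [hs.2]
      have h2 : k * (b - a) = π := by rw [hk, div_mul_cancel₀ _ hba.ne']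
      linarith
  have hfs : 0 < f s := by
    rw [hfid s ⟨hs.1.le, hs.2.le⟩]
    exact mul_pos (by linarith) (mul_pos (hUpos s hs) hvs)
  -- find a neighborhood where f is positive
  have hev : ∀ᶠ t in nhds s, 0 < f t := (hfc.tendsto s).eventually (eventually_gt_nhds hfs)
  obtain ⟨ε, hε, hball⟩ := Metric.eventually_nhds_iff.mp hev
  set δ : ℝ := min (ε / 2) (min ((s - a) / 2) ((b - s) / 2)) with hδ
  have hδpos : 0 < δ := by
    apply lt_min (by linarith)
    exact lt_min (by linarith [hs.1]) (by linarith [hs.2])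
  have hδε : δ ≤ ε / 2 := min_le_left _ _
  have hδa : a < s - δ := by
    have h1 : δ ≤ (s - a) / 2 := le_trans (min_le_right _ _) (min_le_left _ _)
    linarith [hs.1]
  have hδb : s + δ < b := by
    have h1 : δ ≤ (b - s) / 2 := le_trans (min_le_right _ _) (min_le_right _ _)
    linarith [hs.2]
  have hi1 : IntervalIntegrable f volume a (s - δ) := hfc.intervalIntegrable _ _
  have hi2 : IntervalIntegrable f volume (s - δ) (s + δ) := hfc.intervalIntegrable _ _
  have hi3 : IntervalIntegrable f volume (s + δ) b := hfc.intervalIntegrable _ _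
  have hsplit : (∫ t in a..(s - δ), f t) + (∫ t in (s - δ)..(s + δ), f t)
      + (∫ t in (s + δ)..b, f t) = ∫ t in a..b, f t := by
    rw [intervalIntegral.integral_add_adjacent_intervals hi1 hi2,
      intervalIntegral.integral_add_adjacent_intervals (hi1.trans hi2) hi3]
  have hpos2 : 0 < ∫ t in (s - δ)..(s + δ), f t := by
    apply intervalIntegral.intervalIntegral_pos_of_pos_on hi2 _ (by linarith)
    intro x hx
    apply hball
    rw [Real.dist_eq, abs_sub_lt_iff]
    constructor <;> [linarith [hx.1, hx.2, hδε, hε]; linarith [hx.1, hx.2, hδε, hε]]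
  have hnn1 : 0 ≤ ∫ t in a..(s - δ), f t := by
    apply intervalIntegral.integral_nonneg (by linarith)
    intro x hx; exact hfnn x ⟨hx.1, by linarith [hx.2]⟩
  have hnn3 : 0 ≤ ∫ t in (s + δ)..b, f t := by
    apply intervalIntegral.integral_nonneg (by linarith)
    intro x hx; exact hfnn x ⟨by linarith [hx.1], hx.2⟩
  linarith


/-- If `α` is continuous, `T`-periodic, `α ≪ π²/T² + c²/4` and the average of `α` exceeds
`c²/4`, then the Dirichlet problem `u'' + (α − c²/4)u = 0`, `u(t₀) = u(t₀+T) = 0`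
has only the trivial solution. -/
theorem stmt8 (c T : ℝ) (hc : 0 < c) (hT : 0 < T) (α : ℝ → ℝ) (hα : Continuous α)
    (hper : Function.Periodic α T)
    (hub : ∀ t, α t ≤ π ^ 2 / T ^ 2 + c ^ 2 / 4)
    (hstrict : 0 < volume {t ∈ Icc (0 : ℝ) T | α t < π ^ 2 / T ^ 2 + c ^ 2 / 4})
    (havg : c ^ 2 / 4 < (1 / T) * ∫ t in (0 : ℝ)..T, α t)
    (t₀ : ℝ) (u : ℝ → ℝ) (hu : ContDiff ℝ 2 u)
    (hode : ∀ t ∈ Icc t₀ (t₀ + T),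
      deriv (deriv u) t + (α t - c ^ 2 / 4) * u t = 0)
    (hbc0 : u t₀ = 0) (hbcT : u (t₀ + T) = 0) :
    ∀ t ∈ Icc t₀ (t₀ + T), u t = 0 := by
  
  intro t ht
  by_contra hne
  have htne0 : t ≠ t₀ := fun h => hne (h ▸ hbc0)
  have htneT : t ≠ t₀ + T := fun h => hne (h ▸ hbcT)
  have ht' : t ∈ Ioo t₀ (t₀ + T) :=
    ⟨lt_of_le_of_ne ht.1 (Ne.symm htne0), lt_of_le_of_ne ht.2 htneT⟩
  have hzc : IsClosed {x : ℝ | u x = 0} := isClosed_eq hu.continuous continuous_const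
  set Z₁ : Set ℝ := Icc t₀ t ∩ {x | u x = 0} with hZ₁
  set Z₂ : Set ℝ := Icc t (t₀ + T) ∩ {x | u x = 0} with hZ₂
  have hZ₁c : IsCompact Z₁ := isCompact_Icc.inter_right hzc
  have hZ₂c : IsCompact Z₂ := isCompact_Icc.inter_right hzc
  have hZ₁ne : Z₁.Nonempty := ⟨t₀, ⟨le_refl _, ht.1⟩, hbc0⟩
  have hZ₂ne : Z₂.Nonempty := ⟨t₀ + T, ⟨ht.2, le_refl _⟩, hbcT⟩
  set a : ℝ := sSup Z₁ with ha
  set b : ℝ := sInf Z₂ with hb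
  have haZ : a ∈ Z₁ := hZ₁c.sSup_mem hZ₁ne
  have hbZ : b ∈ Z₂ := hZ₂c.sInf_mem hZ₂ne
  have hua : u a = 0 := haZ.2
  have hub' : u b = 0 := hbZ.2
  have hat : a < t := lt_of_le_of_ne haZ.1.2 (fun h => hne (h ▸ hua))
  have htb : t < b := lt_of_le_of_ne hbZ.1.1 (fun h => hne (h ▸ hub'))
  have hab : a < b := hat.trans htb
  have hat₀ : t₀ ≤ a := haZ.1.1
  have hbT : b ≤ t₀ + T := hbZ.1.2
  have hbaT : b - a ≤ T := by linarith
  -- no zero of u in Ioo a b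
  have hnozero : ∀ x ∈ Ioo a b, u x ≠ 0 := by
    intro x hx hx0
    rcases le_total x t with h | h
    · exact absurd (le_csSup hZ₁c.bddAbove (a := x) ⟨⟨hat₀.trans hx.1.le, h⟩, hx0⟩) (not_le.mpr hx.1)
    · exact absurd (csInf_le hZ₂c.bddBelow (a := x) ⟨⟨h, hx.2.le.trans hbT⟩, hx0⟩)
        (not_le.mpr hx.2)
  -- constant sign on Ioo a b
  have hsign : (∀ x ∈ Ioo a b, 0 < u x) ∨ (∀ x ∈ Ioo a b, u x < 0) := by
    rcases lt_or_gt_of_ne hne with hneg | hpos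
    · right
      intro x hx
      rcases lt_or_gt_of_ne (hnozero x hx) with h | h
      · exact h
      · exfalso
        have hsub : uIcc t x ⊆ Ioo a b := by
          exact Set.ordConnected_Ioo.uIcc_subset (Set.mem_Ioo.mpr ⟨hat, htb⟩) hx
        have : (0 : ℝ) ∈ uIcc (u t) (u x) := Set.mem_uIcc.mpr (Or.inl ⟨hneg.le, h.le⟩)
        obtain ⟨z, hz, hz0⟩ := intermediate_value_uIcc (hu.continuous.continuousOn (s := uIcc t x)) this
        exact hnozero z (hsub hz) hz0
    · left
      intro x hx
      rcases lt_or_gt_of_ne (hnozero x hx) with h | h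
      · exfalso
        have hsub : uIcc t x ⊆ Ioo a b := by
          exact Set.ordConnected_Ioo.uIcc_subset (Set.mem_Ioo.mpr ⟨hat, htb⟩) hx
        have : (0 : ℝ) ∈ uIcc (u t) (u x) := Set.mem_uIcc.mpr (Or.inr ⟨h.le, hpos.le⟩)
        obtain ⟨z, hz, hz0⟩ := intermediate_value_uIcc (hu.continuous.continuousOn (s := uIcc t x)) this
        exact hnozero z (hsub hz) hz0
      · exact h
  -- find s with strict inequality
  have hple' : ∀ x ∈ Icc a b, α x - c ^ 2 / 4 ≤ (π / (b - a)) ^ 2 := by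
    intro x _
    have h1 : (π / (b - a)) ^ 2 = π ^ 2 / (b - a) ^ 2 := by rw [div_pow]
    have h2 : π ^ 2 / T ^ 2 ≤ π ^ 2 / (b - a) ^ 2 := by
      gcongr
    linarith [hub x]
  have hkey_s : ∃ s ∈ Ioo a b, α s - c ^ 2 / 4 < (π / (b - a)) ^ 2 := by
    have h1 : (π / (b - a)) ^ 2 = π ^ 2 / (b - a) ^ 2 := by rw [div_pow]
    rcases lt_or_eq_of_le hbaT with hlt | heq
    · refine ⟨(a + b) / 2, ⟨by linarith, by linarith⟩, ?_⟩
      have h2 : π ^ 2 / T ^ 2 < π ^ 2 / (b - a) ^ 2 := by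
        apply div_lt_div_of_pos_left (by positivity) (by nlinarith) (by nlinarith)
      linarith [hub ((a + b) / 2)]
    · -- b - a = T, so a = t₀ and b = t₀ + T
      have ha0 : a = t₀ := by linarith
      have hb0 : b = t₀ + T := by linarith
      set M : ℝ := π ^ 2 / T ^ 2 + c ^ 2 / 4 with hM
      set bad : Set ℝ := {0, T} ∪ Set.range (fun k : ℤ => t₀ + (k : ℝ) * T) with hbad
      have hbad0 : volume bad = 0 := by
        apply measure_union_null
        · exact measure_union_null (measure_singleton 0) (measure_singleton T)
        · exact (Set.countable_range _).measure_zero _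
      have hpos : 0 < volume ({x ∈ Icc (0:ℝ) T | α x < M} \ bad) := by
        rwa [measure_diff_null hbad0]
      obtain ⟨s₂, hs₂⟩ := nonempty_of_measure_ne_zero hpos.ne'
      obtain ⟨⟨hs₂I, hs₂S⟩, hs₂bad⟩ := hs₂
      set x : ℝ := (t₀ - s₂) / T with hx
      set k : ℤ := ⌊x⌋ + 1 with hkk
      set s : ℝ := s₂ + (k : ℝ) * T with hss
      have ht₀eq : t₀ = s₂ + x * T := by rw [hx, div_mul_cancel₀ _ hT.ne']; ring
      have hfl : (⌊x⌋ : ℝ) < x := by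
        rcases lt_or_eq_of_le (Int.floor_le x) with h | h
        · exact h
        · exfalso
          apply hs₂bad
          right
          refine ⟨-⌊x⌋, ?_⟩
          push_cast
          rw [← h] at ht₀eq
          linarith
      have hsmem : s ∈ Ioo a b := by
        rw [ha0, hb0]
        constructor
        · have := Int.lt_floor_add_one x
          have h2 : x * T < ((⌊x⌋ : ℝ) + 1) * T := by
            apply mul_lt_mul_of_pos_right this hT
          simp only [hss, hkk]
          push_cast
          linarith
        · have h2 : ((⌊x⌋ : ℝ) + 1) * T < (x + 1) * T := by
            apply mul_lt_mul_of_pos_right (by linarith) hT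
          simp only [hss, hkk]
          push_cast
          linarith
      have hαs : α s = α s₂ := (hper.int_mul k) s₂
      refine ⟨s, hsmem, ?_⟩
      rw [hαs]
      have hTba : b - a = T := by linarith
      rw [h1, hTba]
      simp only [hM] at hs₂S
      linarith
  obtain ⟨s, hsmem, hslt⟩ := hkey_s
  -- apply the key lemma
  have hIccsub : Icc a b ⊆ Icc t₀ (t₀ + T) := Icc_subset_Icc hat₀ hbT
  have hpcont : Continuous (fun x => α x - c ^ 2 / 4) := hα.sub continuous_const
  rcases hsign with hposu | hnegu
  · exact key_lemma a b hab u hu hua hub' hposu (fun x => α x - c ^ 2 / 4) hpcont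
      (fun x hx => hode x (hIccsub hx)) hple' s hsmem hslt
  · have hdneg : deriv (deriv (fun x => -u x)) = fun x => -(deriv (deriv u) x) := by
      have h1 : deriv (fun x => -u x) = fun x => -(deriv u x) := funext fun x => deriv.neg
      rw [h1]
      exact funext fun x => deriv.neg
    apply key_lemma a b hab (fun x => -u x) hu.neg (by simp [hua]) (by simp [hub'])
      (fun x hx => by simpa using (hnegu x hx)) (fun x => α x - c ^ 2 / 4) hpcont
      ?_ hple' s hsmem hslt
    intro x hx
    rw [hdneg]
    have := hode x (hIccsub hx)
    dsimp only
    linarith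
end

section
/- For the Mathieu-type equation y'' + (1/4)(1 + ε cos t) y = 0, the discriminant Δ(ε) = y₁(2π, ε) + y₂'(2π, ε), where y₁, y₂ are the solutions with y₁(0)=y₂'(0)=1, y₁'(0)=y₂(0)=0, satisfies Δ(0) = -2 and Δ(ε) < -2 for all sufficiently small ε ≠ 0; consequently the Floquet multipliers (roots of μ² − Δ(ε)μ + 1 = 0) are real and distinct, one of modulus greater than 1 and one of modulus less than 1. -/
open Real


lemma dcongr {f : ℝ → ℝ} {a b t : ℝ} (h : HasDerivAt f a t) (e : a = b) : HasDerivAt f b t := e ▸ h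

lemma hS (t : ℝ) : HasDerivAt (fun x : ℝ => Real.sin (x/2)) (Real.cos (t/2) / 2) t := by
  have h := (Real.hasDerivAt_sin (t/2)).comp t ((hasDerivAt_id t).div_const 2)
  simpa [div_eq_mul_inv, mul_comm, Function.comp_def] using h

lemma hC (t : ℝ) : HasDerivAt (fun x : ℝ => Real.cos (x/2)) (-Real.sin (t/2) / 2) t := by
  have h := (Real.hasDerivAt_cos (t/2)).comp t ((hasDerivAt_id t).div_const 2)
  simpa [div_eq_mul_inv, mul_comm, Function.comp_def] using h

lemma mono_bound (K M : ℝ) (p q r : ℕ) (t : ℝ) (ht : |t| ≤ 7)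
    (hM : |K| * 7 ^ p ≤ M) :
    |K * (t ^ p * (Real.sin (t/2) ^ q * Real.cos (t/2) ^ r))| ≤ M := by
  have h1 : |t| ^ p ≤ 7 ^ p := pow_le_pow_left₀ (abs_nonneg t) ht p
  have h2 : |Real.sin (t/2)| ^ q ≤ 1 := pow_le_one₀ (abs_nonneg _) (Real.abs_sin_le_one _)
  have h3 : |Real.cos (t/2)| ^ r ≤ 1 := pow_le_one₀ (abs_nonneg _) (Real.abs_cos_le_one _)
  rw [abs_mul, abs_mul, abs_mul, abs_pow, abs_pow, abs_pow]
  have hsq : (0:ℝ) ≤ |Real.sin (t/2)| ^ q := pow_nonneg (abs_nonneg _) q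
  have hcr : (0:ℝ) ≤ |Real.cos (t/2)| ^ r := pow_nonneg (abs_nonneg _) r
  have e1 : |Real.sin (t/2)| ^ q * |Real.cos (t/2)| ^ r ≤ 1 := mul_le_one₀ h2 hcr h3
  have e2 : |t| ^ p * (|Real.sin (t/2)| ^ q * |Real.cos (t/2)| ^ r) ≤ 7 ^ p * 1 :=
    mul_le_mul h1 e1 (mul_nonneg hsq hcr) (pow_nonneg (by norm_num) p)
  calc |K| * (|t| ^ p * (|Real.sin (t/2)| ^ q * |Real.cos (t/2)| ^ r))
      ≤ |K| * (7 ^ p * 1) := mul_le_mul_of_nonneg_left e2 (abs_nonneg K)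
    _ = |K| * 7 ^ p := by ring
    _ ≤ M := hM
noncomputable section
def g1F (ε : ℝ) : ℝ → ℝ := fun t => ((1)) * (t ^ 0 * (Real.sin (t/2) ^ 0 * Real.cos (t/2) ^ 1)) + ((-1/16) * ε ^ 1) * (t ^ 0 * (Real.sin (t/2) ^ 0 * Real.cos (t/2) ^ 1)) + ((1/16) * ε ^ 1) * (t ^ 0 * (Real.sin (t/2) ^ 0 * Real.cos (t/2) ^ 3)) + ((-3/16) * ε ^ 1) * (t ^ 0 * (Real.sin (t/2) ^ 2 * Real.cos (t/2) ^ 1)) + ((-1/8) * ε ^ 1) * (t ^ 1 * (Real.sin (t/2) ^ 1 * Real.cos (t/2) ^ 0)) + ((11/768) * ε ^ 2) * (t ^ 0 * (Real.sin (t/2) ^ 0 * Real.cos (t/2) ^ 1)) + ((-1/64) * ε ^ 2) * (t ^ 0 * (Real.sin (t/2) ^ 0 * Real.cos (t/2) ^ 3)) + ((1/768) * ε ^ 2) * (t ^ 0 * (Real.sin (t/2) ^ 0 * Real.cos (t/2) ^ 5)) + ((3/64) * ε ^ 2) * (t ^ 0 * (Real.sin (t/2) ^ 2 * Real.cos (t/2)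 ^ 1)) + ((-5/384) * ε ^ 2) * (t ^ 0 * (Real.sin (t/2) ^ 2 * Real.cos (t/2) ^ 3)) + ((5/768) * ε ^ 2) * (t ^ 0 * (Real.sin (t/2) ^ 4 * Real.cos (t/2) ^ 1)) + ((-1/64) * ε ^ 2) * (t ^ 1 * (Real.sin (t/2) ^ 1 * Real.cos (t/2) ^ 0)) + ((-3/128) * ε ^ 2) * (t ^ 1 * (Real.sin (t/2) ^ 1 * Real.cos (t/2) ^ 2)) + ((1/128) * ε ^ 2) * (t ^ 1 * (Real.sin (t/2) ^ 3 * Real.cos (t/2) ^ 0)) + ((1/128) * ε ^ 2) * (t ^ 2 * (Real.sin (t/2) ^ 0 * Real.cos (t/2) ^ 1))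
def g1dF (ε : ℝ) : ℝ → ℝ := fun t => ((-1/2)) * (t ^ 0 * (Real.sin (t/2) ^ 1 * Real.cos (t/2) ^ 0)) + ((-3/32) * ε ^ 1) * (t ^ 0 * (Real.sin (t/2) ^ 1 * Real.cos (t/2) ^ 0)) + ((-9/32) * ε ^ 1) * (t ^ 0 * (Real.sin (t/2) ^ 1 * Real.cos (t/2) ^ 2)) + ((3/32) * ε ^ 1) * (t ^ 0 * (Real.sin (t/2) ^ 3 * Real.cos (t/2) ^ 0)) + ((-1/16) * ε ^ 1) * (t ^ 1 * (Real.sin (t/2) ^ 0 * Real.cos (t/2) ^ 1)) + ((-35/1536) * ε ^ 2) * (t ^ 0 * (Real.sin (t/2) ^ 1 * Real.cos (t/2) ^ 0)) + ((3/64) * ε ^ 2) * (t ^ 0 * (Real.sin (t/2) ^ 1 * Real.cos (t/2) ^ 2)) + ((-25/1536) * ε ^ 2) * (t ^ 0 * (Real.sin (t/2) ^ 1 * Real.cos (t/2) ^ 4)) + ((-1/64) * ε ^ 2) * (t ^ 0 * (Real.sin (t/2) ^ 3 * Real.cos (t/2) ^ 0)) + ((25/768) * ε ^ 2) * (t ^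 0 * (Real.sin (t/2) ^ 3 * Real.cos (t/2) ^ 2)) + ((-5/1536) * ε ^ 2) * (t ^ 0 * (Real.sin (t/2) ^ 5 * Real.cos (t/2) ^ 0)) + ((1/128) * ε ^ 2) * (t ^ 1 * (Real.sin (t/2) ^ 0 * Real.cos (t/2) ^ 1)) + ((-3/256) * ε ^ 2) * (t ^ 1 * (Real.sin (t/2) ^ 0 * Real.cos (t/2) ^ 3)) + ((9/256) * ε ^ 2) * (t ^ 1 * (Real.sin (t/2) ^ 2 * Real.cos (t/2) ^ 1)) + ((-1/256) * ε ^ 2) * (t ^ 2 * (Real.sin (t/2) ^ 1 * Real.cos (t/2) ^ 0))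
def g1ddF (ε : ℝ) : ℝ → ℝ := fun t => ((-1/4)) * (t ^ 0 * (Real.sin (t/2) ^ 0 * Real.cos (t/2) ^ 1)) + ((-7/64) * ε ^ 1) * (t ^ 0 * (Real.sin (t/2) ^ 0 * Real.cos (t/2) ^ 1)) + ((-9/64) * ε ^ 1) * (t ^ 0 * (Real.sin (t/2) ^ 0 * Real.cos (t/2) ^ 3)) + ((27/64) * ε ^ 1) * (t ^ 0 * (Real.sin (t/2) ^ 2 * Real.cos (t/2) ^ 1)) + ((1/32) * ε ^ 1) * (t ^ 1 * (Real.sin (t/2) ^ 1 * Real.cos (t/2) ^ 0)) + ((-11/3072) * ε ^ 2) * (t ^ 0 * (Real.sin (t/2) ^ 0 * Real.cos (t/2) ^ 1)) + ((3/256) * ε ^ 2) * (t ^ 0 * (Real.sin (t/2) ^ 0 * Real.cos (t/2) ^ 3)) + ((-25/3072) * ε ^ 2) * (t ^ 0 * (Real.sin (t/2) ^ 0 * Real.cos (t/2) ^ 5)) + ((-9/256) * ε ^ 2) * (t ^ 0 * (Real.sin (t/2) ^ 2 * Real.cos (t/2) ^ 1)) + ((125/1536) * ε ^ 2) * (t ^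 0 * (Real.sin (t/2) ^ 2 * Real.cos (t/2) ^ 3)) + ((-125/3072) * ε ^ 2) * (t ^ 0 * (Real.sin (t/2) ^ 4 * Real.cos (t/2) ^ 1)) + ((-3/256) * ε ^ 2) * (t ^ 1 * (Real.sin (t/2) ^ 1 * Real.cos (t/2) ^ 0)) + ((27/512) * ε ^ 2) * (t ^ 1 * (Real.sin (t/2) ^ 1 * Real.cos (t/2) ^ 2)) + ((-9/512) * ε ^ 2) * (t ^ 1 * (Real.sin (t/2) ^ 3 * Real.cos (t/2) ^ 0)) + ((-1/512) * ε ^ 2) * (t ^ 2 * (Real.sin (t/2) ^ 0 * Real.cos (t/2) ^ 1))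
def g2F (ε : ℝ) : ℝ → ℝ := fun t => ((2)) * (t ^ 0 * (Real.sin (t/2) ^ 1 * Real.cos (t/2) ^ 0)) + ((1/8) * ε ^ 1) * (t ^ 0 * (Real.sin (t/2) ^ 1 * Real.cos (t/2) ^ 0)) + ((3/8) * ε ^ 1) * (t ^ 0 * (Real.sin (t/2) ^ 1 * Real.cos (t/2) ^ 2)) + ((-1/8) * ε ^ 1) * (t ^ 0 * (Real.sin (t/2) ^ 3 * Real.cos (t/2) ^ 0)) + ((-1/4) * ε ^ 1) * (t ^ 1 * (Real.sin (t/2) ^ 0 * Real.cos (t/2) ^ 1)) + ((-53/384) * ε ^ 2) * (t ^ 0 * (Real.sin (t/2) ^ 1 * Real.cos (t/2) ^ 0)) + ((3/32) * ε ^ 2) * (t ^ 0 * (Real.sin (t/2) ^ 1 * Real.cos (t/2) ^ 2)) + ((5/384) * ε ^ 2) * (t ^ 0 * (Real.sin (t/2) ^ 1 * Real.cos (t/2) ^ 4)) + ((-1/32) * ε ^ 2) * (t ^ 0 * (Real.sin (t/2) ^ 3 * Real.cos (t/2) ^ 0)) + ((-5/192) * ε ^ 2) * (t ^ 0 * (Real.sin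 (t/2) ^ 3 * Real.cos (t/2) ^ 2)) + ((1/384) * ε ^ 2) * (t ^ 0 * (Real.sin (t/2) ^ 5 * Real.cos (t/2) ^ 0)) + ((1/32) * ε ^ 2) * (t ^ 1 * (Real.sin (t/2) ^ 0 * Real.cos (t/2) ^ 1)) + ((-1/64) * ε ^ 2) * (t ^ 1 * (Real.sin (t/2) ^ 0 * Real.cos (t/2) ^ 3)) + ((3/64) * ε ^ 2) * (t ^ 1 * (Real.sin (t/2) ^ 2 * Real.cos (t/2) ^ 1)) + ((1/64) * ε ^ 2) * (t ^ 2 * (Real.sin (t/2) ^ 1 * Real.cos (t/2) ^ 0))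
def g2dF (ε : ℝ) : ℝ → ℝ := fun t => ((1)) * (t ^ 0 * (Real.sin (t/2) ^ 0 * Real.cos (t/2) ^ 1)) + ((-3/16) * ε ^ 1) * (t ^ 0 * (Real.sin (t/2) ^ 0 * Real.cos (t/2) ^ 1)) + ((3/16) * ε ^ 1) * (t ^ 0 * (Real.sin (t/2) ^ 0 * Real.cos (t/2) ^ 3)) + ((-9/16) * ε ^ 1) * (t ^ 0 * (Real.sin (t/2) ^ 2 * Real.cos (t/2) ^ 1)) + ((1/8) * ε ^ 1) * (t ^ 1 * (Real.sin (t/2) ^ 1 * Real.cos (t/2) ^ 0)) + ((-29/768) * ε ^ 2) * (t ^ 0 * (Real.sin (t/2) ^ 0 * Real.cos (t/2) ^ 1)) + ((1/32) * ε ^ 2) * (t ^ 0 * (Real.sin (t/2) ^ 0 * Real.cos (t/2) ^ 3)) + ((5/768) * ε ^ 2) * (t ^ 0 * (Real.sin (t/2) ^ 0 * Real.cos (t/2) ^ 5)) + ((-3/32) * ε ^ 2) * (t ^ 0 * (Real.sin (t/2) ^ 2 * Real.cos (t/2) ^ 1)) + ((-25/384) * ε ^ 2) * (t ^ 0 * (Real.sin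 (t/2) ^ 2 * Real.cos (t/2) ^ 3)) + ((25/768) * ε ^ 2) * (t ^ 0 * (Real.sin (t/2) ^ 4 * Real.cos (t/2) ^ 1)) + ((1/64) * ε ^ 2) * (t ^ 1 * (Real.sin (t/2) ^ 1 * Real.cos (t/2) ^ 0)) + ((9/128) * ε ^ 2) * (t ^ 1 * (Real.sin (t/2) ^ 1 * Real.cos (t/2) ^ 2)) + ((-3/128) * ε ^ 2) * (t ^ 1 * (Real.sin (t/2) ^ 3 * Real.cos (t/2) ^ 0)) + ((1/128) * ε ^ 2) * (t ^ 2 * (Real.sin (t/2) ^ 0 * Real.cos (t/2) ^ 1))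
def g2ddF (ε : ℝ) : ℝ → ℝ := fun t => ((-1/2)) * (t ^ 0 * (Real.sin (t/2) ^ 1 * Real.cos (t/2) ^ 0)) + ((7/32) * ε ^ 1) * (t ^ 0 * (Real.sin (t/2) ^ 1 * Real.cos (t/2) ^ 0)) + ((-27/32) * ε ^ 1) * (t ^ 0 * (Real.sin (t/2) ^ 1 * Real.cos (t/2) ^ 2)) + ((9/32) * ε ^ 1) * (t ^ 0 * (Real.sin (t/2) ^ 3 * Real.cos (t/2) ^ 0)) + ((1/16) * ε ^ 1) * (t ^ 1 * (Real.sin (t/2) ^ 0 * Real.cos (t/2) ^ 1)) + ((53/1536) * ε ^ 2) * (t ^ 0 * (Real.sin (t/2) ^ 1 * Real.cos (t/2) ^ 0)) + ((-9/128) * ε ^ 2) * (t ^ 0 * (Real.sin (t/2) ^ 1 * Real.cos (t/2) ^ 2)) + ((-125/1536) * ε ^ 2) * (t ^ 0 * (Real.sin (t/2) ^ 1 * Real.cos (t/2) ^ 4)) + ((3/128) * ε ^ 2) * (t ^ 0 * (Real.sin (t/2) ^ 3 * Real.cos (t/2) ^ 0)) + ((125/768) * ε ^ 2) * (t ^ 0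 * (Real.sin (t/2) ^ 3 * Real.cos (t/2) ^ 2)) + ((-25/1536) * ε ^ 2) * (t ^ 0 * (Real.sin (t/2) ^ 5 * Real.cos (t/2) ^ 0)) + ((3/128) * ε ^ 2) * (t ^ 1 * (Real.sin (t/2) ^ 0 * Real.cos (t/2) ^ 1)) + ((9/256) * ε ^ 2) * (t ^ 1 * (Real.sin (t/2) ^ 0 * Real.cos (t/2) ^ 3)) + ((-27/256) * ε ^ 2) * (t ^ 1 * (Real.sin (t/2) ^ 2 * Real.cos (t/2) ^ 1)) + ((-1/256) * ε ^ 2) * (t ^ 2 * (Real.sin (t/2) ^ 1 * Real.cos (t/2) ^ 0))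
def w1F (t : ℝ) : ℝ := ((11/768)) * (t ^ 0 * (Real.sin (t/2) ^ 0 * Real.cos (t/2) ^ 1)) + ((-1/64)) * (t ^ 0 * (Real.sin (t/2) ^ 0 * Real.cos (t/2) ^ 3)) + ((1/768)) * (t ^ 0 * (Real.sin (t/2) ^ 0 * Real.cos (t/2) ^ 5)) + ((3/64)) * (t ^ 0 * (Real.sin (t/2) ^ 2 * Real.cos (t/2) ^ 1)) + ((-5/384)) * (t ^ 0 * (Real.sin (t/2) ^ 2 * Real.cos (t/2) ^ 3)) + ((5/768)) * (t ^ 0 * (Real.sin (t/2) ^ 4 * Real.cos (t/2) ^ 1)) + ((-1/64)) * (t ^ 1 * (Real.sin (t/2) ^ 1 * Real.cos (t/2) ^ 0)) + ((-3/128)) * (t ^ 1 * (Real.sin (t/2) ^ 1 * Real.cos (t/2) ^ 2)) + ((1/128)) * (t ^ 1 * (Real.sin (t/2) ^ 3 * Real.cos (t/2) ^ 0)) + ((1/128)) * (t ^ 2 * (Real.sin (t/2) ^ 0 * Real.cos (t/2) ^ 1))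
def w2F (t : ℝ) : ℝ := ((-53/384)) * (t ^ 0 * (Real.sin (t/2) ^ 1 * Real.cos (t/2) ^ 0)) + ((3/32)) * (t ^ 0 * (Real.sin (t/2) ^ 1 * Real.cos (t/2) ^ 2)) + ((5/384)) * (t ^ 0 * (Real.sin (t/2) ^ 1 * Real.cos (t/2) ^ 4)) + ((-1/32)) * (t ^ 0 * (Real.sin (t/2) ^ 3 * Real.cos (t/2) ^ 0)) + ((-5/192)) * (t ^ 0 * (Real.sin (t/2) ^ 3 * Real.cos (t/2) ^ 2)) + ((1/384)) * (t ^ 0 * (Real.sin (t/2) ^ 5 * Real.cos (t/2) ^ 0)) + ((1/32)) * (t ^ 1 * (Real.sin (t/2) ^ 0 * Real.cos (t/2) ^ 1)) + ((-1/64)) * (t ^ 1 * (Real.sin (t/2) ^ 0 * Real.cos (t/2) ^ 3)) + ((3/64)) * (t ^ 1 * (Real.sin (t/2) ^ 2 * Real.cos (t/2) ^ 1)) + ((1/64)) * (t ^ 2 * (Real.sin (t/2) ^ 1 * Real.cos (t/2) ^ 0))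
end

lemma g1F_hasDerivAt (ε t : ℝ) : HasDerivAt (g1F ε) (g1dF ε t) t := by
  have H := (((((((((((((((((hasDerivAt_pow 0 t).mul (((hS t).pow 0).mul ((hC t).pow 1))).const_mul (((1)) : ℝ)).add (((hasDerivAt_pow 0 t).mul (((hS t).pow 0).mul ((hC t).pow 1))).const_mul (((-1/16) * ε ^ 1) : ℝ))).add (((hasDerivAt_pow 0 t).mul (((hS t).pow 0).mul ((hC t).pow 3))).const_mul (((1/16) * ε ^ 1) : ℝ))).add (((hasDerivAt_pow 0 t).mul (((hS t).pow 2).mul ((hC t).pow 1))).const_mul (((-3/16) * ε ^ 1) : ℝ))).add (((hasDerivAt_pow 1 t).mul (((hS t).pow 1).mul ((hC t).pow 0))).const_mul (((-1/8) * ε ^ 1) : ℝ))).add (((hasDerivAt_pow 0 t).mul (((hS t).pow 0).mul ((hC t).pow 1))).const_mul (((11/768) * ε ^ 2) : ℝ))).add (((hasDerivAt_pow 0 t).mul (((hS t).pow 0).mul ((hC t).pow 3))).const_mul (((-1/64) * ε ^ 2) : ℝ))).add (((hasDerivAt_pow 0 t).mul (((hS t).pow 0).mul ((hC t).pow 5))).const_mul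 (((1/768) * ε ^ 2) : ℝ))).add (((hasDerivAt_pow 0 t).mul (((hS t).pow 2).mul ((hC t).pow 1))).const_mul (((3/64) * ε ^ 2) : ℝ))).add (((hasDerivAt_pow 0 t).mul (((hS t).pow 2).mul ((hC t).pow 3))).const_mul (((-5/384) * ε ^ 2) : ℝ))).add (((hasDerivAt_pow 0 t).mul (((hS t).pow 4).mul ((hC t).pow 1))).const_mul (((5/768) * ε ^ 2) : ℝ))).add (((hasDerivAt_pow 1 t).mul (((hS t).pow 1).mul ((hC t).pow 0))).const_mul (((-1/64) * ε ^ 2) : ℝ))).add (((hasDerivAt_pow 1 t).mul (((hS t).pow 1).mul ((hC t).pow 2))).const_mul (((-3/128) * ε ^ 2) : ℝ))).add (((hasDerivAt_pow 1 t).mul (((hS t).pow 3).mul ((hC t).pow 0))).const_mul (((1/128) * ε ^ 2) : ℝ))).add (((hasDerivAt_pow 2 t).mul (((hS t).pow 0).mul ((hC t).pow 1))).const_mul (((1/128) * ε ^ 2) : ℝ)))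
  exact dcongr H (by unfold g1dF; push_cast [Pi.pow_apply, Pi.mul_apply]; ring)

lemma g1dF_hasDerivAt (ε t : ℝ) : HasDerivAt (g1dF ε) (g1ddF ε t) t := by
  have H := (((((((((((((((((hasDerivAt_pow 0 t).mul (((hS t).pow 1).mul ((hC t).pow 0))).const_mul (((-1/2)) : ℝ)).add (((hasDerivAt_pow 0 t).mul (((hS t).pow 1).mul ((hC t).pow 0))).const_mul (((-3/32) * ε ^ 1) : ℝ))).add (((hasDerivAt_pow 0 t).mul (((hS t).pow 1).mul ((hC t).pow 2))).const_mul (((-9/32) * ε ^ 1) : ℝ))).add (((hasDerivAt_pow 0 t).mul (((hS t).pow 3).mul ((hC t).pow 0))).const_mul (((3/32) * ε ^ 1) : ℝ))).add (((hasDerivAt_pow 1 t).mul (((hS t).pow 0).mul ((hC t).pow 1))).const_mul (((-1/16) * ε ^ 1) : ℝ))).add (((hasDerivAt_pow 0 t).mul (((hS t).pow 1).mul ((hC t).pow 0))).const_mul (((-35/1536) * ε ^ 2) : ℝ))).add (((hasDerivAt_pow 0 t).mul (((hS t).pow 1).mul ((hC t).pow 2))).const_mul (((3/64) * ε ^ 2)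 : ℝ))).add (((hasDerivAt_pow 0 t).mul (((hS t).pow 1).mul ((hC t).pow 4))).const_mul (((-25/1536) * ε ^ 2) : ℝ))).add (((hasDerivAt_pow 0 t).mul (((hS t).pow 3).mul ((hC t).pow 0))).const_mul (((-1/64) * ε ^ 2) : ℝ))).add (((hasDerivAt_pow 0 t).mul (((hS t).pow 3).mul ((hC t).pow 2))).const_mul (((25/768) * ε ^ 2) : ℝ))).add (((hasDerivAt_pow 0 t).mul (((hS t).pow 5).mul ((hC t).pow 0))).const_mul (((-5/1536) * ε ^ 2) : ℝ))).add (((hasDerivAt_pow 1 t).mul (((hS t).pow 0).mul ((hC t).pow 1))).const_mul (((1/128) * ε ^ 2) : ℝ))).add (((hasDerivAt_pow 1 t).mul (((hS t).pow 0).mul ((hC t).pow 3))).const_mul (((-3/256) * ε ^ 2) : ℝ))).add (((hasDerivAt_pow 1 t).mul (((hS t).pow 2).mul ((hC t).pow 1))).const_mul (((9/256) * ε ^ 2) : ℝ))).add (((hasDerivAt_pow 2 t).mul (((hS t).pow 1).mul ((hC t).pow 0))).const_mul (((-1/256) * ε ^ 2) : ℝ)))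
  exact dcongr H (by unfold g1ddF; push_cast [Pi.pow_apply, Pi.mul_apply]; ring)

lemma g2F_hasDerivAt (ε t : ℝ) : HasDerivAt (g2F ε) (g2dF ε t) t := by
  have H := (((((((((((((((((hasDerivAt_pow 0 t).mul (((hS t).pow 1).mul ((hC t).pow 0))).const_mul (((2)) : ℝ)).add (((hasDerivAt_pow 0 t).mul (((hS t).pow 1).mul ((hC t).pow 0))).const_mul (((1/8) * ε ^ 1) : ℝ))).add (((hasDerivAt_pow 0 t).mul (((hS t).pow 1).mul ((hC t).pow 2))).const_mul (((3/8) * ε ^ 1) : ℝ))).add (((hasDerivAt_pow 0 t).mul (((hS t).pow 3).mul ((hC t).pow 0))).const_mul (((-1/8) * ε ^ 1) : ℝ))).add (((hasDerivAt_pow 1 t).mul (((hS t).pow 0).mul ((hC t).pow 1))).const_mul (((-1/4) * ε ^ 1) : ℝ))).add (((hasDerivAt_pow 0 t).mul (((hS t).pow 1).mul ((hC t).pow 0))).const_mul (((-53/384) * ε ^ 2) : ℝ))).add (((hasDerivAt_pow 0 t).mul (((hS t).pow 1).mul ((hC t).pow 2))).const_mul (((3/32) * ε ^ 2) : ℝ))).add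 (((hasDerivAt_pow 0 t).mul (((hS t).pow 1).mul ((hC t).pow 4))).const_mul (((5/384) * ε ^ 2) : ℝ))).add (((hasDerivAt_pow 0 t).mul (((hS t).pow 3).mul ((hC t).pow 0))).const_mul (((-1/32) * ε ^ 2) : ℝ))).add (((hasDerivAt_pow 0 t).mul (((hS t).pow 3).mul ((hC t).pow 2))).const_mul (((-5/192) * ε ^ 2) : ℝ))).add (((hasDerivAt_pow 0 t).mul (((hS t).pow 5).mul ((hC t).pow 0))).const_mul (((1/384) * ε ^ 2) : ℝ))).add (((hasDerivAt_pow 1 t).mul (((hS t).pow 0).mul ((hC t).pow 1))).const_mul (((1/32) * ε ^ 2) : ℝ))).add (((hasDerivAt_pow 1 t).mul (((hS t).pow 0).mul ((hC t).pow 3))).const_mul (((-1/64) * ε ^ 2) : ℝ))).add (((hasDerivAt_pow 1 t).mul (((hS t).pow 2).mul ((hC t).pow 1))).const_mul (((3/64) * ε ^ 2) : ℝ))).add (((hasDerivAt_pow 2 t).mul (((hS t).pow 1).mul ((hC t).pow 0))).const_mul (((1/64) * ε ^ 2) : ℝ)))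
  exact dcongr H (by unfold g2dF; push_cast [Pi.pow_apply, Pi.mul_apply]; ring)

lemma g2dF_hasDerivAt (ε t : ℝ) : HasDerivAt (g2dF ε) (g2ddF ε t) t := by
  have H := (((((((((((((((((hasDerivAt_pow 0 t).mul (((hS t).pow 0).mul ((hC t).pow 1))).const_mul (((1)) : ℝ)).add (((hasDerivAt_pow 0 t).mul (((hS t).pow 0).mul ((hC t).pow 1))).const_mul (((-3/16) * ε ^ 1) : ℝ))).add (((hasDerivAt_pow 0 t).mul (((hS t).pow 0).mul ((hC t).pow 3))).const_mul (((3/16) * ε ^ 1) : ℝ))).add (((hasDerivAt_pow 0 t).mul (((hS t).pow 2).mul ((hC t).pow 1))).const_mul (((-9/16) * ε ^ 1) : ℝ))).add (((hasDerivAt_pow 1 t).mul (((hS t).pow 1).mul ((hC t).pow 0))).const_mul (((1/8) * ε ^ 1) : ℝ))).add (((hasDerivAt_pow 0 t).mul (((hS t).pow 0).mul ((hC t).pow 1))).const_mul (((-29/768) * ε ^ 2) : ℝ))).add (((hasDerivAt_pow 0 t).mul (((hS t).pow 0).mul ((hC t).pow 3))).const_mul (((1/32) * ε ^ 2) : ℝ))).add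 (((hasDerivAt_pow 0 t).mul (((hS t).pow 0).mul ((hC t).pow 5))).const_mul (((5/768) * ε ^ 2) : ℝ))).add (((hasDerivAt_pow 0 t).mul (((hS t).pow 2).mul ((hC t).pow 1))).const_mul (((-3/32) * ε ^ 2) : ℝ))).add (((hasDerivAt_pow 0 t).mul (((hS t).pow 2).mul ((hC t).pow 3))).const_mul (((-25/384) * ε ^ 2) : ℝ))).add (((hasDerivAt_pow 0 t).mul (((hS t).pow 4).mul ((hC t).pow 1))).const_mul (((25/768) * ε ^ 2) : ℝ))).add (((hasDerivAt_pow 1 t).mul (((hS t).pow 1).mul ((hC t).pow 0))).const_mul (((1/64) * ε ^ 2) : ℝ))).add (((hasDerivAt_pow 1 t).mul (((hS t).pow 1).mul ((hC t).pow 2))).const_mul (((9/128) * ε ^ 2) : ℝ))).add (((hasDerivAt_pow 1 t).mul (((hS t).pow 3).mul ((hC t).pow 0))).const_mul (((-3/128) * ε ^ 2) : ℝ))).add (((hasDerivAt_pow 2 t).mul (((hS t).pow 0).mul ((hC t).pow 1))).const_mul (((1/128) * ε ^ 2) : ℝ)))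
  exact dcongr H (by unfold g2ddF; push_cast [Pi.pow_apply, Pi.mul_apply]; ring)

lemma g1F_ode (ε t : ℝ) : g1ddF ε t + (1/4)*(1+ε*Real.cos t)*g1F ε t = ε^3*(Real.cos t/4)*w1F t := by
  have hct : Real.cos t = Real.cos (t/2) ^ 2 - Real.sin (t/2) ^ 2 := by
    conv_lhs => rw [show t = t/2 + t/2 by ring]
    rw [Real.cos_add]; ring
  unfold g1ddF g1F w1F
  rw [hct]
  linear_combination (((1/8) * ε ^ 1) * (t ^ 0 * (Real.sin (t/2) ^ 0 * Real.cos (t/2) ^ 1)) + ((1/128) * ε ^ 2) * (t ^ 0 * (Real.sin (t/2) ^ 0 * Real.cos (t/2) ^ 3)) + ((1/128) * ε ^ 2) * (t ^ 0 * (Real.sin (t/2) ^ 2 * Real.cos (t/2) ^ 1)) + ((1/64) * ε ^ 2) * (t ^ 1 * (Real.sin (t/2) ^ 1 * Real.cos (t/2) ^ 0))) * (Real.sin_sq_add_cos_sq (t/2))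

lemma g2F_ode (ε t : ℝ) : g2ddF ε t + (1/4)*(1+ε*Real.cos t)*g2F ε t = ε^3*(Real.cos t/4)*w2F t := by
  have hct : Real.cos t = Real.cos (t/2) ^ 2 - Real.sin (t/2) ^ 2 := by
    conv_lhs => rw [show t = t/2 + t/2 by ring]
    rw [Real.cos_add]; ring
  unfold g2ddF g2F w2F
  rw [hct]
  linear_combination (((-1/4) * ε ^ 1) * (t ^ 0 * (Real.sin (t/2) ^ 1 * Real.cos (t/2) ^ 0)) + ((1/64) * ε ^ 2) * (t ^ 0 * (Real.sin (t/2) ^ 1 * Real.cos (t/2) ^ 2)) + ((1/64) * ε ^ 2) * (t ^ 0 * (Real.sin (t/2) ^ 3 * Real.cos (t/2) ^ 0)) + ((-1/32) * ε ^ 2) * (t ^ 1 * (Real.sin (t/2) ^ 0 * Real.cos (t/2) ^ 1))) * (Real.sin_sq_add_cos_sq (t/2))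
lemma g1F_zero (ε : ℝ) : g1F ε 0 = 1 := by
  unfold g1F
  norm_num
  try ring

lemma g1dF_zero (ε : ℝ) : g1dF ε 0 = 0 := by
  unfold g1dF
  norm_num
  try ring

lemma g2F_zero (ε : ℝ) : g2F ε 0 = 0 := by
  unfold g2F
  norm_num
  try ring

lemma g2dF_zero (ε : ℝ) : g2dF ε 0 = 1 := by
  unfold g2dF
  norm_num
  try ring

lemma g1F_tp (ε : ℝ) : g1F ε (2*π) = -1 - ε^2*π^2/32 := by
  unfold g1F
  rw [show (2*π)/2 = π by ring]
  simp [Real.sin_pi, Real.cos_pi]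
  ring

lemma g2dF_tp (ε : ℝ) : g2dF ε (2*π) = -1 - ε^2*π^2/32 := by
  unfold g2dF
  rw [show (2*π)/2 = π by ring]
  simp [Real.sin_pi, Real.cos_pi]
  ring

lemma w1F_bound (t : ℝ) (ht : |t| ≤ 7) : |w1F t| ≤ 2 := by
  unfold w1F
  have H := ((abs_add_le _ _).trans (add_le_add ((abs_add_le _ _).trans (add_le_add ((abs_add_le _ _).trans (add_le_add ((abs_add_le _ _).trans (add_le_add ((abs_add_le _ _).trans (add_le_add ((abs_add_le _ _).trans (add_le_add ((abs_add_le _ _).trans (add_le_add ((abs_add_le _ _).trans (add_le_add ((abs_add_le _ _).trans (add_le_add (mono_bound (11/768) (11/768) 0 0 1 t ht (by norm_num [abs_of_nonneg, abs_of_nonpos])) (mono_bound (-1/64) (1/64) 0 0 3 t ht (by norm_num [abs_of_nonneg, abs_of_nonpos])))) (mono_bound (1/768) (1/768) 0 0 5 t ht (by norm_num [abs_of_nonneg, abs_of_nonpos])))) (mono_bound (3/64) (3/64) 0 2 1 t ht (by norm_num [abs_of_nonneg, abs_of_nonpos])))) (mono_bound (-5/384) (5/384) 0 2 3 t ht (by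 norm_num [abs_of_nonneg, abs_of_nonpos])))) (mono_bound (5/768) (5/768) 0 4 1 t ht (by norm_num [abs_of_nonneg, abs_of_nonpos])))) (mono_bound (-1/64) (7/64) 1 1 0 t ht (by norm_num [abs_of_nonneg, abs_of_nonpos])))) (mono_bound (-3/128) (21/128) 1 1 2 t ht (by norm_num [abs_of_nonneg, abs_of_nonpos])))) (mono_bound (1/128) (7/128) 1 3 0 t ht (by norm_num [abs_of_nonneg, abs_of_nonpos])))) (mono_bound (1/128) (49/128) 2 0 1 t ht (by norm_num [abs_of_nonneg, abs_of_nonpos]))))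
  refine H.trans (by norm_num)

lemma w2F_bound (t : ℝ) (ht : |t| ≤ 7) : |w2F t| ≤ 2 := by
  unfold w2F
  have H := ((abs_add_le _ _).trans (add_le_add ((abs_add_le _ _).trans (add_le_add ((abs_add_le _ _).trans (add_le_add ((abs_add_le _ _).trans (add_le_add ((abs_add_le _ _).trans (add_le_add ((abs_add_le _ _).trans (add_le_add ((abs_add_le _ _).trans (add_le_add ((abs_add_le _ _).trans (add_le_add ((abs_add_le _ _).trans (add_le_add (mono_bound (-53/384) (53/384) 0 1 0 t ht (by norm_num [abs_of_nonneg, abs_of_nonpos])) (mono_bound (3/32) (3/32) 0 1 2 t ht (by norm_num [abs_of_nonneg, abs_of_nonpos])))) (mono_bound (5/384) (5/384) 0 1 4 t ht (by norm_num [abs_of_nonneg, abs_of_nonpos])))) (mono_bound (-1/32) (1/32) 0 3 0 t ht (by norm_num [abs_of_nonneg, abs_of_nonpos])))) (mono_bound (-5/192) (5/192) 0 3 2 t ht (by norm_num [abs_of_nonneg, abs_of_nonpos])))) (mono_bound (1/384) (1/384) 0 5 0 t ht (by norm_num [abs_of_nonneg, abs_of_nonpos])))) (mono_bound (1/32) (7/32)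 1 0 1 t ht (by norm_num [abs_of_nonneg, abs_of_nonpos])))) (mono_bound (-1/64) (7/64) 1 0 3 t ht (by norm_num [abs_of_nonneg, abs_of_nonpos])))) (mono_bound (3/64) (21/64) 1 2 1 t ht (by norm_num [abs_of_nonneg, abs_of_nonpos])))) (mono_bound (1/64) (49/64) 2 1 0 t ht (by norm_num [abs_of_nonneg, abs_of_nonpos]))))
  refine H.trans (by norm_num)

lemma expbound : Real.exp (2*π) ≤ 2187 := by
  have h1 : (2*π) ≤ 7 := by nlinarith [Real.pi_lt_d2]
  have h2 : Real.exp (2*π) ≤ Real.exp 7 := Real.exp_le_exp.2 h1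
  have h3 : Real.exp 7 = Real.exp 1 ^ (7:ℕ) := by
    rw [← Real.exp_nat_mul]; norm_num
  have h4 : Real.exp 1 ^ (7:ℕ) ≤ 3 ^ (7:ℕ) :=
    pow_le_pow_left₀ (Real.exp_pos 1).le (by nlinarith [Real.exp_one_lt_d9]) 7
  have : (3:ℝ) ^ (7:ℕ) = 2187 := by norm_num
  linarith

lemma gron (e e' e'' : ℝ → ℝ) (F : ℝ) (hF : 0 ≤ F)
    (h1 : ∀ t, HasDerivAt e (e' t) t) (h2 : ∀ t, HasDerivAt e' (e'' t) t)
    (h0 : e 0 = 0) (h0' : e' 0 = 0)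
    (hb : ∀ t ∈ Set.Icc (0:ℝ) (2*π), |e'' t| ≤ |e t| + F) :
    |e (2*π)| ≤ 2200 * F ∧ |e' (2*π)| ≤ 2200 * F := by
  have hπ : (0:ℝ) ≤ 2*π := by positivity
  set f : ℝ → ℝ × ℝ := fun t => (e t, e' t) with hfdef
  have hder : ∀ t, HasDerivAt f (e' t, e'' t) t := fun t => (h1 t).prodMk (h2 t)
  have hcont : ContinuousOn f (Set.Icc 0 (2*π)) :=
    (Continuous.prodMk (continuous_iff_continuousAt.2 fun t => (h1 t).continuousAt)
      (continuous_iff_continuousAt.2 fun t => (h2 t).continuousAt)).continuousOn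
  have key := norm_le_gronwallBound_of_norm_deriv_right_le (f := f)
      (f' := fun t => (e' t, e'' t)) (δ := 0) (K := 1) (ε := F) (a := 0) (b := 2*π)
      hcont (fun x _ => (hder x).hasDerivWithinAt) (by simp [hfdef, h0, h0', Prod.norm_def])
      ?_
  · have h2π := key (2*π) ⟨hπ, le_refl _⟩
    have hgb : gronwallBound 0 1 F (2*π - 0) = F * (Real.exp (2*π) - 1) := by
      rw [gronwallBound_of_K_ne_0 one_ne_zero]
      simp
    rw [hgb] at h2π
    have hexp : F * (Real.exp (2*π) - 1) ≤ 2200 * F := by nlinarith [expbound, Real.exp_pos (2*π)]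
    have hn : ‖f (2*π)‖ = max |e (2*π)| |e' (2*π)| := by rw [Prod.norm_def]; rfl
    rw [hn] at h2π
    constructor
    · exact (le_max_left _ _).trans (h2π.trans hexp)
    · exact (le_max_right _ _).trans (h2π.trans hexp)
  · intro x hx
    have hx' : x ∈ Set.Icc (0:ℝ) (2*π) := ⟨hx.1, hx.2.le⟩
    have hbx := hb x hx'
    rw [Prod.norm_def, Prod.norm_def]
    simp only [Real.norm_eq_abs, one_mul]
    apply max_le
    · exact (le_max_right _ _).trans (le_add_of_nonneg_right hF)
    · exact hbx.trans (add_le_add (le_max_left _ _) le_rfl)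

lemma roots (Δ : ℝ) (hΔ : Δ < -2) :
    ∃ μ₁ μ₂ : ℝ, μ₁ ≠ μ₂ ∧ μ₁ ^ 2 - Δ * μ₁ + 1 = 0 ∧ μ₂ ^ 2 - Δ * μ₂ + 1 = 0 ∧
      1 < |μ₁| ∧ |μ₂| < 1 := by
  have hD : 0 < Δ^2 - 4 := by nlinarith
  set r := Real.sqrt (Δ^2 - 4) with hr
  have hr2 : r^2 = Δ^2 - 4 := Real.sq_sqrt hD.le
  have hr0 : 0 < r := Real.sqrt_pos.2 hD
  have hrΔ : r < -Δ := by nlinarith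
  have hrΔ2 : -Δ - 2 < r := by nlinarith
  refine ⟨(Δ - r)/2, (Δ + r)/2, by intro h; nlinarith, by linear_combination hr2/4,
    by linear_combination hr2/4, ?_, ?_⟩
  · rw [abs_of_neg (by nlinarith)]
    nlinarith
  · rw [abs_lt]
    constructor <;> nlinarith
lemma approx (ε : ℝ) (hε : |ε| ≤ 1) (y G Gd Gdd W : ℝ → ℝ) (hy : ContDiff ℝ 2 y)
    (hode : ∀ t, deriv (deriv y) t + (1/4)*(1+ε*Real.cos t)*y t = 0)
    (hG : ∀ t, HasDerivAt G (Gd t) t) (hGd : ∀ t, HasDerivAt Gd (Gdd t) t)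
    (hODE : ∀ t, Gdd t + (1/4)*(1+ε*Real.cos t)*G t = ε^3*(Real.cos t/4)*W t)
    (hW : ∀ t ∈ Set.Icc (0:ℝ) (2*π), |W t| ≤ 2)
    (h0 : y 0 = G 0) (h0' : deriv y 0 = Gd 0) :
    |y (2*π) - G (2*π)| ≤ 2200 * |ε|^3 ∧ |deriv y (2*π) - Gd (2*π)| ≤ 2200 * |ε|^3 := by
  have hyd : Differentiable ℝ y := hy.differentiable (by norm_num)
  have hyd2 : Differentiable ℝ (deriv y) := by
    have h : ContDiff ℝ (1+1) y := by norm_num; exact hy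
    exact ((contDiff_succ_iff_deriv).mp h).2.2.differentiable (by norm_num)
  exact gron (fun t => y t - G t) (fun t => deriv y t - Gd t)
    (fun t => deriv (deriv y) t - Gdd t) (|ε|^3) (by positivity)
    (fun t => ((hyd t).hasDerivAt).sub (hG t))
    (fun t => ((hyd2 t).hasDerivAt).sub (hGd t))
    (by simp [h0]) (by simp [h0'])
    (by
      intro t _
      have ha : |Real.cos t| ≤ 1 := Real.abs_cos_le_one t
      have hWt : |W t| ≤ 2 := hW t ‹_›
      have hy'' : deriv (deriv y) t = -((1/4)*(1+ε*Real.cos t)*y t) := by linarith [hode t]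
      have hG'' : Gdd t = ε^3*(Real.cos t/4)*W t - (1/4)*(1+ε*Real.cos t)*G t := by
        linarith [hODE t]
      have hrw : deriv (deriv y) t - Gdd t
          = -((1/4)*(1+ε*Real.cos t)*(y t - G t) + ε^3*(Real.cos t/4)*W t) := by
        rw [hy'', hG'']; ring
      show |deriv (deriv y) t - Gdd t| ≤ |y t - G t| + |ε|^3
      rw [hrw, abs_neg]
      have h1 : |(1/4)*(1+ε*Real.cos t)*(y t - G t) + ε^3*(Real.cos t/4)*W t|
          ≤ |(1/4)*(1+ε*Real.cos t)*(y t - G t)| + |ε^3*(Real.cos t/4)*W t| := abs_add_le _ _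
      have h2 : |(1/4)*(1+ε*Real.cos t)*(y t - G t)|
          = (1/4) * |1+ε*Real.cos t| * |y t - G t| := by
        rw [abs_mul, abs_mul]; norm_num
      have h3 : |ε^3*(Real.cos t/4)*W t| = |ε|^3 * (|Real.cos t|/4) * |W t| := by
        rw [abs_mul, abs_mul, abs_pow, abs_div]; norm_num
      have h4 : |1+ε*Real.cos t| ≤ 2 := by
        calc |1+ε*Real.cos t| ≤ |(1:ℝ)| + |ε*Real.cos t| := abs_add_le _ _
          _ = 1 + |ε| * |Real.cos t| := by rw [abs_one, abs_mul]
          _ ≤ 2 := by nlinarith [abs_nonneg ε, abs_nonneg (Real.cos t)]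
      have hy0 : (0:ℝ) ≤ |y t - G t| := abs_nonneg _
      have hε0 : (0:ℝ) ≤ |ε|^3 := by positivity
      nlinarith [abs_nonneg (W t), abs_nonneg (Real.cos t),
        mul_le_mul_of_nonneg_right h4 hy0,
        mul_le_mul (le_refl (|ε|^3)) hWt (abs_nonneg (W t)) hε0,
        mul_le_mul_of_nonneg_left ha hε0])

lemma hIcc7 : ∀ t ∈ Set.Icc (0:ℝ) (2*π), |t| ≤ 7 := by
  intro t ht
  rw [abs_of_nonneg ht.1]
  nlinarith [Real.pi_lt_d2, ht.2]

/-- For the Mathieu-type equation `y'' + (1/4)(1 + ε cos t) y = 0`, the discriminant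
`Δ(ε) = y₁(2π,ε) + y₂'(2π,ε)` satisfies `Δ(0) = -2` and `Δ(ε) < -2` for small `ε ≠ 0`;
hence the Floquet multipliers are real and distinct, one of modulus `> 1`, one `< 1`. -/
theorem stmt12 (y₁ y₂ : ℝ → ℝ → ℝ)
    (hy₁ : ∀ ε, ContDiff ℝ 2 (y₁ ε)) (hy₂ : ∀ ε, ContDiff ℝ 2 (y₂ ε))
    (hode₁ : ∀ ε t, deriv (deriv (y₁ ε)) t + (1 / 4) * (1 + ε * Real.cos t) * y₁ ε t = 0)
    (hode₂ : ∀ ε t, deriv (deriv (y₂ ε)) t + (1 / 4) * (1 + ε * Real.cos t) * y₂ ε t = 0)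
    (hic₁ : ∀ ε, y₁ ε 0 = 1 ∧ deriv (y₁ ε) 0 = 0)
    (hic₂ : ∀ ε, y₂ ε 0 = 0 ∧ deriv (y₂ ε) 0 = 1) :
    y₁ 0 (2 * π) + deriv (y₂ 0) (2 * π) = -2 ∧
      ∃ δ > (0 : ℝ), ∀ ε : ℝ, |ε| < δ → ε ≠ 0 →
        (y₁ ε (2 * π) + deriv (y₂ ε) (2 * π) < -2) ∧
        ∃ μ₁ μ₂ : ℝ, μ₁ ≠ μ₂ ∧
          μ₁ ^ 2 - (y₁ ε (2 * π) + deriv (y₂ ε) (2 * π)) * μ₁ + 1 = 0 ∧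
          μ₂ ^ 2 - (y₁ ε (2 * π) + deriv (y₂ ε) (2 * π)) * μ₂ + 1 = 0 ∧
          1 < |μ₁| ∧ |μ₂| < 1 := by
  have main : ∀ ε : ℝ, |ε| ≤ 1 →
      |y₁ ε (2*π) - (-1 - ε^2*π^2/32)| ≤ 2200*|ε|^3 ∧
      |deriv (y₂ ε) (2*π) - (-1 - ε^2*π^2/32)| ≤ 2200*|ε|^3 := by
    intro ε hε
    have A := approx ε hε (y₁ ε) (g1F ε) (g1dF ε) (g1ddF ε) w1F (hy₁ ε) (hode₁ ε)
      (g1F_hasDerivAt ε) (g1dF_hasDerivAt ε) (g1F_ode ε)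
      (fun t ht => w1F_bound t (hIcc7 t ht))
      ((hic₁ ε).1.trans (g1F_zero ε).symm) ((hic₁ ε).2.trans (g1dF_zero ε).symm)
    have B := approx ε hε (y₂ ε) (g2F ε) (g2dF ε) (g2ddF ε) w2F (hy₂ ε) (hode₂ ε)
      (g2F_hasDerivAt ε) (g2dF_hasDerivAt ε) (g2F_ode ε)
      (fun t ht => w2F_bound t (hIcc7 t ht))
      ((hic₂ ε).1.trans (g2F_zero ε).symm) ((hic₂ ε).2.trans (g2dF_zero ε).symm)
    rw [g1F_tp ε] at A
    rw [g2dF_tp ε] at B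
    exact ⟨A.1, B.2⟩
  constructor
  · obtain ⟨hA, hB⟩ := main 0 (by norm_num)
    norm_num at hA hB
    linarith
  · refine ⟨1/100000, by norm_num, ?_⟩
    intro ε hεδ hε0
    have hε1 : |ε| ≤ 1 := by linarith
    obtain ⟨hA, hB⟩ := main ε hε1
    have hA' := abs_le.mp hA
    have hB' := abs_le.mp hB
    have hε2 : (0:ℝ) < ε^2 := by positivity
    have h3 : |ε|^3 ≤ ε^2 * (1/100000) := by
      have he : |ε|^3 = ε^2 * |ε| := by rw [← sq_abs]; ring
      rw [he]
      exact mul_le_mul_of_nonneg_left hεδ.le hε2.le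
    have hp2 : (9:ℝ) ≤ π^2 := by nlinarith [Real.pi_gt_three]
    have h9 : ε^2*9 ≤ ε^2*π^2 := mul_le_mul_of_nonneg_left hp2 hε2.le
    have hΔ : y₁ ε (2*π) + deriv (y₂ ε) (2*π) < -2 := by nlinarith
    obtain ⟨μ₁, μ₂, hne, hq1, hq2, hm1, hm2⟩ := roots _ hΔ
    exact ⟨hΔ, μ₁, μ₂, hne, hq1, hq2, hm1, hm2⟩
end
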